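/- arXiv:2501.04842 — 7 statements merged into one kernel-verified Lean document; each statement's English description precedes it below -/
import Mathlib

section
/- Let s ≥ 1 and f(x) = λᵀx for λ ∈ ℝˢ with exactly s₀ ≥ 1 nonzero entries. For every k ≥ 1, set N = 2ᵏ and let Î_oracle be the oracle stratified estimator of depth k for f. Then Var[Î_oracle] ≤ (1 − 3/(4s₀))ᵏ · Var[Î_MC], where Î_MC = (1/N)∑ f(Xₙ) with Xₙ i.i.d. uniform on [0,1]ˢ; consequently RMSE(Î_oracle) = O(N^(−1/2 − r(s₀))) as k → ∞, where r(s₀) = −log(1 − 3/(4s₀))/(2 log 2), and moreover r(s₀) ≥ 3/(8 s₀ log 2). -/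
open MeasureTheory ProbabilityTheory

noncomputable section

/-- The unit hypercube `[0,1]^s`. -/
def unitCube (s : ℕ) : Set (Fin s → ℝ) := Set.Icc 0 1

/-- The uniform distribution on a subset `R` of `ℝ^s` (Lebesgue measure conditioned on `R`). -/
def unif {s : ℕ} (R : Set (Fin s → ℝ)) : Measure (Fin s → ℝ) :=
  (volume : Measure (Fin s → ℝ))[|R]

/-- `Δ(R)`: variance of `f` under the uniform distribution on `R`. -/
def strataVar {s : ℕ} (f : (Fin s → ℝ) → ℝ) (R : Set (Fin s → ℝ)) : ℝ :=
  variance f (unif R)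

/-- `R[j]⁻`: lower half of the rectangle `Icc a b` split at the midpoint of its `j`-th side. -/
def lowerHalf {s : ℕ} (a b : Fin s → ℝ) (j : Fin s) : Set (Fin s → ℝ) :=
  Set.Icc a (Function.update b j ((a j + b j) / 2))

/-- `R[j]⁺`: upper half of the rectangle `Icc a b` split at the midpoint of its `j`-th side. -/
def upperHalf {s : ℕ} (a b : Fin s → ℝ) (j : Fin s) : Set (Fin s → ℝ) :=
  Set.Icc (Function.update a j ((a j + b j) / 2)) b

/-- Law of `N` i.i.d. points uniform on `[0,1]^s`. -/
def mcMeasure (s N : ℕ) : Measure (Fin N → (Fin s → ℝ)) :=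
  Measure.pi fun _ => unif (unitCube s)

/-- The standard Monte Carlo estimator of `∫_{[0,1]^s} f` based on `N` points. -/
def mcEst {s : ℕ} (N : ℕ) (f : (Fin s → ℝ) → ℝ) : (Fin N → (Fin s → ℝ)) → ℝ :=
  fun ω => (∑ n, f (ω n)) / N


/-- An oracle tree of depth `k` for the integrand `f`: a full binary tree of rectangles,
with nodes indexed by words over `Bool`, rooted at `[0,1]^s`, in which every node of
depth `< k` is split in the middle along a direction minimising the oracle CART
criterion `j ↦ ½ Δ(R[j]⁺) + ½ Δ(R[j]⁻)`. -/
structure OracleTree (s k : ℕ) (f : (Fin s → ℝ) → ℝ) where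
  lo : List Bool → Fin s → ℝ
  hi : List Bool → Fin s → ℝ
  root_lo : lo [] = 0
  root_hi : hi [] = 1
  split : ∀ w : List Bool, w.length < k → ∃ j : Fin s,
    (∀ j' : Fin s,
      strataVar f (lowerHalf (lo w) (hi w) j) + strataVar f (upperHalf (lo w) (hi w) j) ≤
        strataVar f (lowerHalf (lo w) (hi w) j') + strataVar f (upperHalf (lo w) (hi w) j')) ∧
    lo (w ++ [false]) = lo w ∧
    hi (w ++ [false]) = Function.update (hi w) j ((lo w j + hi w j) / 2) ∧
    lo (w ++ [true]) = Function.update (lo w) j ((lo w j + hi w j) / 2) ∧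
    hi (w ++ [true]) = hi w

/-- The leaf rectangle of an oracle tree indexed by a word `w` of length `k`. -/
def OracleTree.leaf {s k : ℕ} {f : (Fin s → ℝ) → ℝ} (T : OracleTree s k f)
    (w : Fin k → Bool) : Set (Fin s → ℝ) :=
  Set.Icc (T.lo (List.ofFn w)) (T.hi (List.ofFn w))

/-- Joint law of one independent uniform point in each of the `2^k` leaf rectangles. -/
def oracleMeasure {s k : ℕ} {f : (Fin s → ℝ) → ℝ} (T : OracleTree s k f) :
    Measure ((Fin k → Bool) → (Fin s → ℝ)) :=
  Measure.pi fun w => unif (T.leaf w)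

/-- The oracle stratified estimator `Î_oracle = (1/N) ∑ f(X̃ₙ)`, `N = 2^k`. -/
def oracleEst {s : ℕ} (k : ℕ) (f : (Fin s → ℝ) → ℝ) :
    ((Fin k → Bool) → (Fin s → ℝ)) → ℝ :=
  fun ω => (∑ w : Fin k → Bool, f (ω w)) / 2 ^ k

namespace OracleAux

variable {ι : Type*} [Fintype ι] {α : ι → Type*} [∀ i, MeasurableSpace (α i)]

lemma pi_map_eval (μ : ∀ i, Measure (α i)) [∀ i, IsProbabilityMeasure (μ i)] (i : ι) :
    (Measure.pi μ).map (Function.eval i) = μ i := by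
  classical
  ext t ht
  rw [Measure.map_apply (measurable_pi_apply i) ht, Set.eval_preimage, Measure.pi_pi,
    Fintype.prod_eq_single i (fun j hj => by simp [Function.update_of_ne hj])]
  simp

lemma iIndepFun_eval (μ : ∀ i, Measure (α i)) [∀ i, IsProbabilityMeasure (μ i)] :
    iIndepFun (fun i (ω : ∀ j, α j) => ω i) (Measure.pi μ) := by
  classical
  rw [iIndepFun_iff_measure_inter_preimage_eq_mul]
  intro S sets hsets
  have hpre : ∀ i ∈ S, Measure.pi μ ((fun ω : ∀ j, α j => ω i) ⁻¹' sets i) = μ i (sets i) := by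
    intro i hi
    rw [← Measure.map_apply (measurable_pi_apply i) (hsets i hi), pi_map_eval]
  have hIcap : (⋂ i ∈ S, (fun ω : ∀ j, α j => ω i) ⁻¹' sets i)
      = Set.pi Set.univ (fun i => if i ∈ S then sets i else Set.univ) := by
    ext ω
    simp only [Set.mem_iInter, Set.mem_preimage, Set.mem_pi, Set.mem_univ, true_implies]
    constructor
    · intro h i
      split_ifs with hi
      · exact h i hi
      · trivial
    · intro h i hi
      have := h i
      rwa [if_pos hi] at this
  rw [hIcap, Measure.pi_pi]
  calc ∏ i, μ i (if i ∈ S then sets i else Set.univ)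
      = ∏ i, if i ∈ S then μ i (sets i) else 1 := by
        refine Finset.prod_congr rfl fun i _ => ?_
        split_ifs <;> simp
    _ = ∏ i ∈ S, μ i (sets i) := by rw [Finset.prod_ite_mem, Finset.univ_inter]
    _ = ∏ i ∈ S, Measure.pi μ ((fun ω : ∀ j, α j => ω i) ⁻¹' sets i) :=
        (Finset.prod_congr rfl fun i hi => (hpre i hi).symm)

lemma variance_map' {Ω β : Type*} [MeasurableSpace Ω] [MeasurableSpace β]
    (μ : Measure Ω) (T : Ω → β) (hT : Measurable T) (g : β → ℝ) (hg : Measurable g) :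
    variance g (μ.map T) = variance (g ∘ T) μ := by
  have hmean : (μ.map T)[g] = μ[g ∘ T] := integral_map hT.aemeasurable hg.aestronglyMeasurable
  rw [variance, variance, evariance, evariance, hmean,
    lintegral_map (by measurability) hT]
  rfl

lemma variance_pi (μ : ∀ i, Measure (α i)) [∀ i, IsProbabilityMeasure (μ i)]
    (g : ∀ i, α i → ℝ) (hg : ∀ i, Measurable (g i)) (hℒ : ∀ i, MemLp (g i) 2 (μ i)) :
    variance (fun ω : ∀ j, α j => ∑ i, g i (ω i)) (Measure.pi μ) = ∑ i, variance (g i) (μ i) := by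
  have hmemb : ∀ i : ι, MemLp (fun ω : ∀ j, α j => g i (ω i)) 2 (Measure.pi μ) := by
    intro i
    have h1 : MemLp (g i) 2 ((Measure.pi μ).map (Function.eval i)) := by
      rw [pi_map_eval]; exact hℒ i
    exact (memLp_map_measure_iff (by rw [pi_map_eval]; exact (hg i).aestronglyMeasurable)
      (measurable_pi_apply i).aemeasurable).1 h1
  have hsum : (fun ω : ∀ j, α j => ∑ i, g i (ω i)) = ∑ i : ι, (fun ω : ∀ j, α j => g i (ω i)) := by
    funext ω; simp
  rw [hsum, IndepFun.variance_sum (fun i _ => hmemb i)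
    (fun i _ j _ hij => ((iIndepFun_eval μ).indepFun hij).comp (hg i) (hg j))]
  refine Finset.sum_congr rfl fun i _ => ?_
  rw [← pi_map_eval μ i,
    variance_map' (Measure.pi μ) (Function.eval i) (measurable_pi_apply i) (g i) (hg i)]
  rfl


/-- 1-d uniform measure on `[a,b]`. -/
def u1 (a b : ℝ) : Measure ℝ := (volume : Measure ℝ)[|Set.Icc a b]

lemma ae_cond_mem {Ω : Type*} [MeasurableSpace Ω] (μ : Measure Ω) {R : Set Ω}
    (hR : MeasurableSet R) : ∀ᵐ x ∂μ[|R], x ∈ R := by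
  rw [Filter.eventually_iff, mem_ae_iff]
  have : {x | x ∈ R}ᶜ = Rᶜ := rfl
  rw [this, cond_apply hR]
  simp

lemma u1_prob {a b : ℝ} (h : a < b) : IsProbabilityMeasure (u1 a b) := by
  refine cond_isProbabilityMeasure_of_finite ?_ ?_
  · rw [Real.volume_Icc]
    simp only [ne_eq, ENNReal.ofReal_eq_zero, not_le]
    linarith
  · rw [Real.volume_Icc]; exact ENNReal.ofReal_ne_top

lemma memℒp_id_u1 {a b : ℝ} (h : a < b) : MemLp (id : ℝ → ℝ) 2 (u1 a b) := by
  haveI := u1_prob h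
  exact memLp_of_bounded (ae_cond_mem _ measurableSet_Icc) aestronglyMeasurable_id 2

lemma u1_integral {a b : ℝ} (h : a < b) (g : ℝ → ℝ) :
    ∫ x, g x ∂(u1 a b) = (b - a)⁻¹ * ∫ x in Set.Icc a b, g x := by
  rw [u1, ProbabilityTheory.cond, integral_smul_measure]
  congr 1
  rw [Real.volume_Icc, ← ENNReal.ofReal_inv_of_pos (by linarith),
    ENNReal.toReal_ofReal (inv_nonneg.mpr (by linarith))]

lemma variance_id_u1 {a b : ℝ} (h : a < b) : variance id (u1 a b) = (b - a) ^ 2 / 12 := by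
  haveI := u1_prob h
  have hba : b - a ≠ 0 := by linarith
  rw [variance_eq_sub (memℒp_id_u1 h)]
  have h1 : ∫ x, id x ∂(u1 a b) = (b - a)⁻¹ * ((b ^ 2 - a ^ 2) / 2) := by
    rw [u1_integral h]
    congr 1
    rw [MeasureTheory.integral_Icc_eq_integral_Ioc, ← intervalIntegral.integral_of_le h.le]
    exact integral_id
  have h2 : ∫ x, (id ^ 2 : ℝ → ℝ) x ∂(u1 a b) = (b - a)⁻¹ * ((b ^ 3 - a ^ 3) / 3) := by
    rw [u1_integral h]
    congr 1
    rw [MeasureTheory.integral_Icc_eq_integral_Ioc, ← intervalIntegral.integral_of_le h.le]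
    rw [show (id ^ 2 : ℝ → ℝ) = fun x : ℝ => x ^ 2 from rfl, integral_pow]
    norm_num
  rw [h1, h2]
  field_simp
  ring

lemma variance_mul_u1 (c : ℝ) {a b : ℝ} (h : a < b) :
    variance (fun t => c * t) (u1 a b) = c ^ 2 * ((b - a) ^ 2 / 12) := by
  have : (fun t : ℝ => c * t) = c • (id : ℝ → ℝ) := by funext t; simp
  rw [this, variance_smul, variance_id_u1 h]


lemma unif_Icc_eq_pi {s : ℕ} (a b : Fin s → ℝ) (h : ∀ i, a i < b i) :
    unif (Set.Icc a b) = Measure.pi (fun i => u1 (a i) (b i)) := by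
  haveI : ∀ i, IsProbabilityMeasure (u1 (a i) (b i)) := fun i => u1_prob (h i)
  refine (Measure.pi_eq fun t ht => ?_).symm
  rw [unif, cond_apply measurableSet_Icc, ← Set.pi_univ_Icc, ← Set.pi_inter_distrib]
  have hvol : (volume : Measure (Fin s → ℝ)) = Measure.pi fun _ => volume := rfl
  rw [hvol, Measure.pi_pi, Measure.pi_pi]
  have hne : ∀ i : Fin s, volume (Set.Icc (a i) (b i)) ≠ 0 := by
    intro i
    rw [Real.volume_Icc]
    simp only [ne_eq, ENNReal.ofReal_eq_zero, not_le]
    linarith [h i]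
  rw [ENNReal.prod_inv_distrib (fun i _ j _ _ => Or.inl (hne i)), ← Finset.prod_mul_distrib]
  exact Finset.prod_congr rfl fun i _ => (cond_apply measurableSet_Icc _ _).symm

lemma unif_Icc_prob {s : ℕ} (a b : Fin s → ℝ) (h : ∀ i, a i < b i) :
    IsProbabilityMeasure (unif (Set.Icc a b)) := by
  rw [unif_Icc_eq_pi a b h]
  haveI : ∀ i, IsProbabilityMeasure (u1 (a i) (b i)) := fun i => u1_prob (h i)
  infer_instance

lemma strataVar_Icc {s : ℕ} (lam : Fin s → ℝ) (f : (Fin s → ℝ) → ℝ)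
    (hf : ∀ x, f x = ∑ i, lam i * x i) (a b : Fin s → ℝ) (h : ∀ i, a i < b i) :
    strataVar f (Set.Icc a b) = ∑ i, lam i ^ 2 * ((b i - a i) ^ 2 / 12) := by
  have hfe : f = fun x => ∑ i, lam i * x i := funext hf
  haveI : ∀ i, IsProbabilityMeasure (u1 (a i) (b i)) := fun i => u1_prob (h i)
  rw [strataVar, unif_Icc_eq_pi a b h, hfe,
    variance_pi (fun i => u1 (a i) (b i)) (fun i t => lam i * t)
      (fun i => measurable_id.const_mul _)
      (fun i => by
        have := (memℒp_id_u1 (h i)).const_mul (lam i)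
        exact this)]
  exact Finset.sum_congr rfl fun i _ => variance_mul_u1 (lam i) (h i)

lemma memℒp_f {s : ℕ} (lam : Fin s → ℝ) (f : (Fin s → ℝ) → ℝ)
    (hf : ∀ x, f x = ∑ i, lam i * x i) (a b : Fin s → ℝ) (h : ∀ i, a i < b i) :
    MemLp f 2 (unif (Set.Icc a b)) := by
  haveI := unif_Icc_prob a b h
  have hfe : f = fun x => ∑ i, lam i * x i := funext hf
  have hcont : Continuous f := by
    rw [hfe]; exact continuous_finset_sum _ fun i _ => (continuous_const.mul (continuous_apply i))
  obtain ⟨M, hM⟩ := (isCompact_Icc (a := a) (b := b)).exists_bound_of_continuousOn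
    hcont.continuousOn
  exact MemLp.of_bound hcont.measurable.aestronglyMeasurable M
    ((ae_cond_mem _ measurableSet_Icc).mono fun x hx => hM x hx)

/-- Variance of an averaged estimator over independent strata. -/
lemma variance_est {s : ℕ} {ι : Type*} [Fintype ι] (lam : Fin s → ℝ) (f : (Fin s → ℝ) → ℝ)
    (hf : ∀ x, f x = ∑ i, lam i * x i) (A B : ι → Fin s → ℝ)
    (h : ∀ w i, A w i < B w i) (c : ℝ) :
    variance (fun ω : ι → Fin s → ℝ => (∑ w, f (ω w)) / c)
        (Measure.pi fun w => unif (Set.Icc (A w) (B w)))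
      = (c⁻¹) ^ 2 * ∑ w, strataVar f (Set.Icc (A w) (B w)) := by
  haveI : ∀ w, IsProbabilityMeasure (unif (Set.Icc (A w) (B w))) :=
    fun w => unif_Icc_prob _ _ (h w)
  have hfe : f = fun x => ∑ i, lam i * x i := funext hf
  have hmeas : Measurable f := by
    rw [hfe]; exact Finset.measurable_sum _ fun i _ => (measurable_pi_apply i).const_mul _
  have hdiv : (fun ω : ι → Fin s → ℝ => (∑ w, f (ω w)) / c)
      = c⁻¹ • (fun ω : ι → Fin s → ℝ => ∑ w, f (ω w)) := by
    funext ω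
    simp [div_eq_inv_mul, Pi.smul_apply, smul_eq_mul]
  rw [hdiv, variance_smul,
    variance_pi (fun w => unif (Set.Icc (A w) (B w))) (fun _ => f) (fun _ => hmeas)
      (fun w => memℒp_f lam f hf _ _ (h w))]
  rfl


section Step

variable {s : ℕ} {lam : Fin s → ℝ} {f : (Fin s → ℝ) → ℝ}

lemma lowerHalf_lt {s : ℕ} {a b : Fin s → ℝ} (h : ∀ i, a i < b i) (j : Fin s) :
    ∀ i, a i < Function.update b j ((a j + b j) / 2) i := by
  intro i
  rcases eq_or_ne i j with rfl | hij
  · rw [Function.update_self]; linarith [h i]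
  · rw [Function.update_of_ne hij]; exact h i

lemma upperHalf_lt {s : ℕ} {a b : Fin s → ℝ} (h : ∀ i, a i < b i) (j : Fin s) :
    ∀ i, Function.update a j ((a j + b j) / 2) i < b i := by
  intro i
  rcases eq_or_ne i j with rfl | hij
  · rw [Function.update_self]; linarith [h i]
  · rw [Function.update_of_ne hij]; exact h i

lemma strataVar_lowerHalf (hf : ∀ x, f x = ∑ i, lam i * x i)
    {a b : Fin s → ℝ} (h : ∀ i, a i < b i) (j : Fin s) :
    strataVar f (lowerHalf a b j)
      = (∑ i, lam i ^ 2 * ((b i - a i) ^ 2 / 12))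
        - (3 / 4) * (lam j ^ 2 * ((b j - a j) ^ 2 / 12)) := by
  rw [lowerHalf, strataVar_Icc lam f hf _ _ (lowerHalf_lt h j)]
  have hfun : (fun i => lam i ^ 2 * ((Function.update b j ((a j + b j) / 2) i - a i) ^ 2 / 12))
      = Function.update (fun i => lam i ^ 2 * ((b i - a i) ^ 2 / 12)) j
          (lam j ^ 2 * ((b j - a j) ^ 2 / 12) / 4) := by
    funext i
    rcases eq_or_ne i j with rfl | hij
    · rw [Function.update_self, Function.update_self]; ring
    · rw [Function.update_of_ne hij, Function.update_of_ne hij]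
  rw [show (∑ i, lam i ^ 2 * ((Function.update b j ((a j + b j) / 2) i - a i) ^ 2 / 12))
      = ∑ i, Function.update (fun i => lam i ^ 2 * ((b i - a i) ^ 2 / 12)) j
          (lam j ^ 2 * ((b j - a j) ^ 2 / 12) / 4) i from by rw [← hfun],
    Finset.sum_update_of_mem (Finset.mem_univ j)]
  rw [← Finset.sum_erase_add Finset.univ _ (Finset.mem_univ j), Finset.sdiff_singleton_eq_erase]
  ring

lemma strataVar_upperHalf (hf : ∀ x, f x = ∑ i, lam i * x i)
    {a b : Fin s → ℝ} (h : ∀ i, a i < b i) (j : Fin s) :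
    strataVar f (upperHalf a b j)
      = (∑ i, lam i ^ 2 * ((b i - a i) ^ 2 / 12))
        - (3 / 4) * (lam j ^ 2 * ((b j - a j) ^ 2 / 12)) := by
  rw [upperHalf, strataVar_Icc lam f hf _ _ (upperHalf_lt h j)]
  have hfun : (fun i => lam i ^ 2 * ((b i - Function.update a j ((a j + b j) / 2) i) ^ 2 / 12))
      = Function.update (fun i => lam i ^ 2 * ((b i - a i) ^ 2 / 12)) j
          (lam j ^ 2 * ((b j - a j) ^ 2 / 12) / 4) := by
    funext i
    rcases eq_or_ne i j with rfl | hij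
    · rw [Function.update_self, Function.update_self]; ring
    · rw [Function.update_of_ne hij, Function.update_of_ne hij]
  rw [show (∑ i, lam i ^ 2 * ((b i - Function.update a j ((a j + b j) / 2) i) ^ 2 / 12))
      = ∑ i, Function.update (fun i => lam i ^ 2 * ((b i - a i) ^ 2 / 12)) j
          (lam j ^ 2 * ((b j - a j) ^ 2 / 12) / 4) i from by rw [← hfun],
    Finset.sum_update_of_mem (Finset.mem_univ j)]
  rw [← Finset.sum_erase_add Finset.univ _ (Finset.mem_univ j), Finset.sdiff_singleton_eq_erase]
  ring

lemma step_ineq (hf : ∀ x, f x = ∑ i, lam i * x i) (s0 : ℕ) (hs0 : 1 ≤ s0)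
    (hcard : Fintype.card {i : Fin s // lam i ≠ 0} = s0)
    {a b : Fin s → ℝ} (h : ∀ i, a i < b i) (j : Fin s)
    (hmin : ∀ j' : Fin s,
      strataVar f (lowerHalf a b j) + strataVar f (upperHalf a b j) ≤
        strataVar f (lowerHalf a b j') + strataVar f (upperHalf a b j')) :
    strataVar f (lowerHalf a b j) + strataVar f (upperHalf a b j)
      ≤ 2 * (1 - 3 / (4 * (s0 : ℝ))) * strataVar f (Set.Icc a b) := by
  classical
  set c : Fin s → ℝ := fun i => lam i ^ 2 * ((b i - a i) ^ 2 / 12) with hc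
  set D : ℝ := ∑ i, c i with hD
  have hcnn : ∀ i, 0 ≤ c i := fun i => by positivity
  have hcmax : ∀ j' : Fin s, c j' ≤ c j := by
    intro j'
    have := hmin j'
    rw [strataVar_lowerHalf hf h j, strataVar_upperHalf hf h j,
      strataVar_lowerHalf hf h j', strataVar_upperHalf hf h j'] at this
    simp only [hc]
    linarith
  have hDle : D ≤ (s0 : ℝ) * c j := by
    have hfilt : D = ∑ i ∈ Finset.univ.filter (fun i => lam i ≠ 0), c i := by
      rw [hD]
      refine (Finset.sum_filter_of_ne fun i _ hci => ?_).symm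
      intro hlam
      exact hci (by simp [hc, hlam])
    have hcard' : (Finset.univ.filter (fun i => lam i ≠ 0)).card = s0 := by
      rw [← hcard, Fintype.card_subtype]
    have hle : ∑ i ∈ Finset.univ.filter (fun i => lam i ≠ 0), c i
        ≤ (Finset.univ.filter (fun i => lam i ≠ 0)).card • c j :=
      Finset.sum_le_card_nsmul _ _ _ fun i _ => hcmax i
    rw [hcard', nsmul_eq_mul] at hle
    rw [hfilt]
    exact hle
  have hs0R : (1 : ℝ) ≤ (s0 : ℝ) := by exact_mod_cast hs0
  have hs0pos : (0 : ℝ) < (s0 : ℝ) := by linarith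
  have hDnn : 0 ≤ D := Finset.sum_nonneg fun i _ => hcnn i
  rw [strataVar_lowerHalf hf h j, strataVar_upperHalf hf h j,
    strataVar_Icc lam f hf a b h]
  have hkey : 3 / (4 * (s0 : ℝ)) * D ≤ 3 / 4 * c j := by
    have h1 : 3 / (4 * (s0 : ℝ)) * D ≤ 3 / (4 * (s0 : ℝ)) * ((s0 : ℝ) * c j) := by
      apply mul_le_mul_of_nonneg_left hDle
      positivity
    have h2 : 3 / (4 * (s0 : ℝ)) * ((s0 : ℝ) * c j) = 3 / 4 * c j := by
      field_simp
    linarith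
  have hexp : (∑ i, lam i ^ 2 * ((b i - a i) ^ 2 / 12)) = D := rfl
  rw [hexp]
  simp only [hc] at hkey
  nlinarith [hkey, hDnn]

end Step

section Tree

variable {s k : ℕ} {lam : Fin s → ℝ} {f : (Fin s → ℝ) → ℝ}

lemma tree_sum_le (hf : ∀ x, f x = ∑ i, lam i * x i) (s0 : ℕ) (hs0 : 1 ≤ s0)
    (hcard : Fintype.card {i : Fin s // lam i ≠ 0} = s0) (T : OracleTree s k f) :
    ∀ (m : ℕ) (w : List Bool), w.length + m ≤ k → (∀ i, T.lo w i < T.hi w i) →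
      (∑ v : Fin m → Bool,
          strataVar f (Set.Icc (T.lo (w ++ List.ofFn v)) (T.hi (w ++ List.ofFn v))))
        ≤ (2 * (1 - 3 / (4 * (s0 : ℝ)))) ^ m
            * strataVar f (Set.Icc (T.lo w) (T.hi w)) := by
  intro m
  induction m with
  | zero =>
    intro w _ _
    simp
  | succ m ih =>
    intro w hlen hok
    have hsplit := T.split w (by omega)
    obtain ⟨j, hmin, hl0, hh0, hl1, hh1⟩ := hsplit
    have hρ : (0 : ℝ) < 2 * (1 - 3 / (4 * (s0 : ℝ))) := by
      have hs0R : (1 : ℝ) ≤ (s0 : ℝ) := by exact_mod_cast hs0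
      have : 3 / (4 * (s0 : ℝ)) ≤ 3 / 4 := by
        apply div_le_div_of_nonneg_left (by norm_num) (by norm_num)
        linarith
      linarith
    -- children are nondegenerate
    have hok0 : ∀ i, T.lo (w ++ [false]) i < T.hi (w ++ [false]) i := by
      rw [hl0, hh0]; exact lowerHalf_lt hok j
    have hok1 : ∀ i, T.lo (w ++ [true]) i < T.hi (w ++ [true]) i := by
      rw [hl1, hh1]; exact upperHalf_lt hok j
    -- split sum over first coordinate
    have hsum : (∑ v : Fin (m + 1) → Bool,
        strataVar f (Set.Icc (T.lo (w ++ List.ofFn v)) (T.hi (w ++ List.ofFn v))))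
        = (∑ v : Fin m → Bool, strataVar f
            (Set.Icc (T.lo ((w ++ [false]) ++ List.ofFn v)) (T.hi ((w ++ [false]) ++ List.ofFn v))))
          + (∑ v : Fin m → Bool, strataVar f
            (Set.Icc (T.lo ((w ++ [true]) ++ List.ofFn v)) (T.hi ((w ++ [true]) ++ List.ofFn v)))) := by
      rw [← Fintype.sum_equiv (Fin.consEquiv (fun _ : Fin (m + 1) => Bool))
        (fun p : Bool × (Fin m → Bool) => strataVar f
          (Set.Icc (T.lo ((w ++ [p.1]) ++ List.ofFn p.2)) (T.hi ((w ++ [p.1]) ++ List.ofFn p.2))))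
        (fun v : Fin (m + 1) → Bool => strataVar f
          (Set.Icc (T.lo (w ++ List.ofFn v)) (T.hi (w ++ List.ofFn v))))
        (fun p => by
          obtain ⟨x, v⟩ := p
          have h1 : List.ofFn (Fin.cons x v : Fin (m + 1) → Bool) = x :: List.ofFn v := by
            simp [List.ofFn_succ]
          have h2 : w ++ x :: List.ofFn v = (w ++ [x]) ++ List.ofFn v :=
            List.append_cons w x (List.ofFn v)
          simp only [Fin.consEquiv, Equiv.coe_fn_mk, h1, h2]),
        Fintype.sum_prod_type, Fintype.sum_bool]
      exact add_comm _ _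
    rw [hsum]
    have h0 := ih (w ++ [false])
      (by simp only [List.length_append, List.length_singleton]; omega) hok0
    have h1 := ih (w ++ [true])
      (by simp only [List.length_append, List.length_singleton]; omega) hok1
    have hchild : strataVar f (Set.Icc (T.lo (w ++ [false])) (T.hi (w ++ [false])))
        + strataVar f (Set.Icc (T.lo (w ++ [true])) (T.hi (w ++ [true])))
        ≤ 2 * (1 - 3 / (4 * (s0 : ℝ))) * strataVar f (Set.Icc (T.lo w) (T.hi w)) := by
      rw [hl0, hh0, hl1, hh1]
      exact step_ineq hf s0 hs0 hcard hok j hmin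
    calc _ ≤ (2 * (1 - 3 / (4 * (s0 : ℝ)))) ^ m
          * (strataVar f (Set.Icc (T.lo (w ++ [false])) (T.hi (w ++ [false])))
            + strataVar f (Set.Icc (T.lo (w ++ [true])) (T.hi (w ++ [true])))) := by
          rw [mul_add]; exact add_le_add h0 h1
      _ ≤ (2 * (1 - 3 / (4 * (s0 : ℝ)))) ^ m
          * (2 * (1 - 3 / (4 * (s0 : ℝ))) * strataVar f (Set.Icc (T.lo w) (T.hi w))) := by
          exact mul_le_mul_of_nonneg_left hchild (by positivity)
      _ = (2 * (1 - 3 / (4 * (s0 : ℝ)))) ^ (m + 1) * strataVar f (Set.Icc (T.lo w) (T.hi w)) := by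
          ring

lemma tree_ok (T : OracleTree s k f) :
    ∀ (w : List Bool), w.length ≤ k → ∀ i, T.lo w i < T.hi w i := by
  intro w
  induction w using List.reverseRecOn with
  | nil =>
    intro _ i
    rw [T.root_lo, T.root_hi]
    norm_num
  | append_singleton w x ihw =>
    intro hlen i
    have hwlen : w.length < k := by
      rw [List.length_append, List.length_singleton] at hlen; omega
    have hok := ihw (le_of_lt hwlen)
    obtain ⟨j, _, hl0, hh0, hl1, hh1⟩ := T.split w hwlen
    cases x
    · rw [hl0, hh0]; exact lowerHalf_lt hok j i
    · rw [hl1, hh1]; exact upperHalf_lt hok j i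

end Tree

end OracleAux

open OracleAux

/-- Theorem 1 of the paper: for `f(x) = λᵀx` with exactly `s₀ ≥ 1` nonzero
entries, for every `k ≥ 1` and `N = 2^k`, the oracle stratified estimator of depth `k`
satisfies `Var[Î_oracle] ≤ (1 − 3/(4s₀))^k Var[Î_MC]`; consequently
`RMSE(Î_oracle) = O(N^(−1/2−r(s₀)))` with `r(s₀) = −log(1 − 3/(4s₀))/(2 log 2)`, and
moreover `r(s₀) ≥ 3/(8 s₀ log 2)`. -/
theorem oracle_tree_linear_rate {s : ℕ} (hs : 1 ≤ s) (lam : Fin s → ℝ) (s0 : ℕ)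
    (hs0 : 1 ≤ s0) (hcard : Fintype.card {i : Fin s // lam i ≠ 0} = s0)
    (f : (Fin s → ℝ) → ℝ) (hf : ∀ x, f x = ∑ i, lam i * x i) :
    (∀ k : ℕ, 1 ≤ k → ∀ T : OracleTree s k f,
      variance (oracleEst k f) (oracleMeasure T) ≤
        (1 - 3 / (4 * (s0 : ℝ))) ^ k * variance (mcEst (2 ^ k) f) (mcMeasure s (2 ^ k))) ∧
      3 / (8 * (s0 : ℝ) * Real.log 2) ≤
        -Real.log (1 - 3 / (4 * (s0 : ℝ))) / (2 * Real.log 2) ∧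
      ∃ C : ℝ, ∀ k : ℕ, 1 ≤ k → ∀ T : OracleTree s k f,
        Real.sqrt (variance (oracleEst k f) (oracleMeasure T)) ≤
          C * ((2 : ℝ) ^ k) ^
            (-(1 / 2 : ℝ) - (-Real.log (1 - 3 / (4 * (s0 : ℝ))) / (2 * Real.log 2))) := by
  have hs0R : (1 : ℝ) ≤ (s0 : ℝ) := by exact_mod_cast hs0
  set ρ : ℝ := 1 - 3 / (4 * (s0 : ℝ)) with hρ
  have h34 : 3 / (4 * (s0 : ℝ)) ≤ 3 / 4 := by
    apply div_le_div_of_nonneg_left (by norm_num) (by norm_num)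
    linarith
  have h34pos : 0 < 3 / (4 * (s0 : ℝ)) := by positivity
  have hρpos : 0 < ρ := by rw [hρ]; linarith
  have hρlt : ρ < 1 := by rw [hρ]; linarith
  have hcube : ∀ i : Fin s, (0 : Fin s → ℝ) i < (1 : Fin s → ℝ) i := by
    intro i; simp
  set D0 : ℝ := strataVar f (Set.Icc (0 : Fin s → ℝ) 1) with hD0
  have hD0nn : 0 ≤ D0 := by
    rw [hD0, strataVar_Icc lam f hf _ _ hcube]
    positivity
  clear_value ρ D0
  -- variance of the oracle estimator, and the leaf-sum bound
  have key : ∀ k : ℕ, ∀ T : OracleTree s k f,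
      variance (oracleEst k f) (oracleMeasure T)
        ≤ (((2 : ℝ) ^ k)⁻¹) ^ 2 * ((2 * ρ) ^ k * D0) := by
    intro k T
    have hA : ∀ (w : Fin k → Bool) i,
        T.lo (List.ofFn w) i < T.hi (List.ofFn w) i := by
      intro w i
      exact tree_ok T (List.ofFn w) (by rw [List.length_ofFn]) i
    have hVo : variance (oracleEst k f) (oracleMeasure T)
        = (((2 : ℝ) ^ k)⁻¹) ^ 2 * ∑ w : Fin k → Bool,
            strataVar f (Set.Icc (T.lo (List.ofFn w)) (T.hi (List.ofFn w))) :=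
      variance_est lam f hf (fun w => T.lo (List.ofFn w)) (fun w => T.hi (List.ofFn w))
        hA ((2 : ℝ) ^ k)
    have hroot : ∀ i, T.lo [] i < T.hi [] i := by
      rw [T.root_lo, T.root_hi]; exact hcube
    have hS := tree_sum_le hf s0 hs0 hcard T k ([] : List Bool) (by simp) hroot
    simp only [List.nil_append, T.root_lo, T.root_hi] at hS
    rw [← hρ] at hS
    rw [hVo]
    have := mul_le_mul_of_nonneg_left hS
      (by positivity : (0:ℝ) ≤ (((2 : ℝ) ^ k)⁻¹) ^ 2)
    calc (((2 : ℝ) ^ k)⁻¹) ^ 2 * ∑ w : Fin k → Bool,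
            strataVar f (Set.Icc (T.lo (List.ofFn w)) (T.hi (List.ofFn w)))
        ≤ (((2 : ℝ) ^ k)⁻¹) ^ 2 * ((2 * ρ) ^ k * strataVar f (Set.Icc (0 : Fin s → ℝ) 1)) :=
          this
      _ = (((2 : ℝ) ^ k)⁻¹) ^ 2 * ((2 * ρ) ^ k * D0) := by rw [← hD0]
  -- variance of the MC estimator
  have hMC : ∀ k : ℕ, variance (mcEst (2 ^ k) f) (mcMeasure s (2 ^ k))
      = ((((2 : ℕ) ^ k : ℕ) : ℝ)⁻¹) ^ 2 * (((2 : ℕ) ^ k : ℕ) : ℝ) * D0 := by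
    intro k
    have hVmc : variance (mcEst (2 ^ k) f) (mcMeasure s (2 ^ k))
        = ((((2 : ℕ) ^ k : ℕ) : ℝ)⁻¹) ^ 2 * ∑ _n : Fin (2 ^ k),
            strataVar f (Set.Icc (0 : Fin s → ℝ) 1) :=
      variance_est lam f hf (fun _ => (0 : Fin s → ℝ)) (fun _ => (1 : Fin s → ℝ))
        (fun _ => hcube) (((2 : ℕ) ^ k : ℕ) : ℝ)
    rw [hVmc, Finset.sum_const, Finset.card_univ, Fintype.card_fin, nsmul_eq_mul, ← hD0]
    ring
  have hcast : ∀ k : ℕ, (((2 : ℕ) ^ k : ℕ) : ℝ) = (2 : ℝ) ^ k := by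
    intro k; push_cast; ring
  refine ⟨?_, ?_, ?_⟩
  · -- part 1
    intro k _ T
    have h1 := key k T
    have h2 := hMC k
    rw [h2, hcast k]
    have hgoal : ρ ^ k * ((((2:ℝ) ^ k)⁻¹) ^ 2 * ((2:ℝ) ^ k) * D0)
        = (((2 : ℝ) ^ k)⁻¹) ^ 2 * ((2 * ρ) ^ k * D0) := by
      have h2k : ((2:ℝ) ^ k) ≠ 0 := by positivity
      rw [mul_pow]
      field_simp
    rw [hgoal]
    exact h1
  · -- part 2
    have hlog2 : 0 < Real.log 2 := Real.log_pos (by norm_num)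
    have hlog : Real.log ρ ≤ -(3 / (4 * (s0 : ℝ))) := by
      have := Real.log_le_sub_one_of_pos hρpos
      rw [hρ] at this ⊢
      linarith
    have heq : 3 / (8 * (s0 : ℝ) * Real.log 2) = (3 / (4 * (s0 : ℝ))) / (2 * Real.log 2) := by
      field_simp
      ring
    rw [heq]
    apply div_le_div_of_nonneg_right ?_ (by positivity)
    linarith
  · -- part 3
    refine ⟨Real.sqrt D0, ?_⟩
    intro k _ T
    have hlog2 : 0 < Real.log 2 := Real.log_pos (by norm_num)
    have hy : (0:ℝ) < (2:ℝ) ^ k := by positivity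
    have hb : variance (oracleEst k f) (oracleMeasure T)
        ≤ D0 * (ρ ^ k * ((2:ℝ) ^ k)⁻¹) := by
      have h1 := key k T
      have : (((2 : ℝ) ^ k)⁻¹) ^ 2 * ((2 * ρ) ^ k * D0) = D0 * (ρ ^ k * ((2:ℝ) ^ k)⁻¹) := by
        have h2k : ((2:ℝ) ^ k) ≠ 0 := by positivity
        rw [mul_pow]
        field_simp
      linarith [h1, this.ge]
    have hstep := Real.sqrt_le_sqrt hb
    refine le_trans hstep ?_
    rw [Real.sqrt_mul hD0nn]
    apply mul_le_mul_of_nonneg_left ?_ (Real.sqrt_nonneg D0)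
    apply le_of_eq
    have hz : (0:ℝ) < ρ ^ k * ((2:ℝ) ^ k)⁻¹ := by positivity
    rw [Real.sqrt_eq_rpow, Real.rpow_def_of_pos hz, Real.rpow_def_of_pos hy]
    congr 1
    rw [Real.log_mul (by positivity) (by positivity), Real.log_inv, Real.log_pow, Real.log_pow]
    field_simp
    ring
end
end

section
/- Let Z₁,…,Z_N (N ≥ 2) be i.i.d. random variables taking values in a compact interval [a,b] with a < b, let Δ = Var(Z₁) > 0 and Δ̂ = (1/(N−1))∑ₙ(Zₙ − Z̄)² the empirical variance. Fix ε > 0 and set γ = (1+ε)^{1/2} − 1. Then P(Δ̂/Δ > 1 + ε) ≤ exp(−(N−1)Δγ²/(2(b−a)²)) and P(Δ̂/Δ < 1 − ε) ≤ exp(−(N−1)Δγ²/(2(b−a)²)). -/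
open MeasureTheory ProbabilityTheory Real Finset


/-- Chord bound for exp on `[0, M]`. -/
lemma chord_exp {c x M : ℝ} (hx : 0 ≤ x) (hxM : x ≤ M) (hM : 0 < M) :
    Real.exp (c * x) ≤ 1 + (x / M) * (Real.exp (c * M) - 1) := by
  have h01 : x / M ∈ Set.Icc (0:ℝ) 1 := ⟨by positivity, by
    rw [div_le_one hM]; exact hxM⟩
  have h := convexOn_exp.2 (Set.mem_univ (0:ℝ)) (Set.mem_univ (c * M))
    (show (0:ℝ) ≤ 1 - x / M by linarith [h01.2]) h01.1 (by ring)
  have hcx : (1 - x / M) • (0:ℝ) + (x / M) • (c * M) = c * x := by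
    simp only [smul_eq_mul]
    field_simp
    ring
  rw [hcx] at h
  calc Real.exp (c * x) ≤ (1 - x / M) • Real.exp 0 + (x / M) • Real.exp (c * M) := h
    _ = 1 + (x / M) * (Real.exp (c * M) - 1) := by
        simp [smul_eq_mul, Real.exp_zero]; ring

lemma exp_neg_le {u : ℝ} (hu : 0 ≤ u) : Real.exp (-u) ≤ 1 - u + u ^ 2 / 2 := by
  set f : ℝ → ℝ := fun v => 1 - v + v ^ 2 / 2 - Real.exp (-v) with hf
  have hd : ∀ v : ℝ, HasDerivAt f (-1 + v + Real.exp (-v)) v := by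
    intro v
    have h1 : HasDerivAt (fun z : ℝ => Real.exp (-z)) (-Real.exp (-v)) v := by
      simpa [Function.comp_def] using (Real.hasDerivAt_exp (-v)).comp v (hasDerivAt_neg v)
    have h2 : HasDerivAt (fun z : ℝ => 1 - z + z ^ 2 / 2)
        (0 - 1 + (↑2 * v ^ 1) / 2) v :=
      (((hasDerivAt_const v (1:ℝ)).sub (hasDerivAt_id v)).add
        ((hasDerivAt_pow 2 v).div_const 2))
    have := h2.sub h1
    refine HasDerivAt.congr_deriv this ?_
    push_cast
    ring
  have hmono : MonotoneOn f (Set.Ici (0:ℝ)) := by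
    apply monotoneOn_of_deriv_nonneg (convex_Ici 0)
    · exact (Continuous.continuousOn (by continuity))
    · intro v hv
      exact (hd v).differentiableAt.differentiableWithinAt
    · intro v hv
      rw [(hd v).deriv]
      have : -v + 1 ≤ Real.exp (-v) := Real.add_one_le_exp (-v)
      linarith
  have h0 : f 0 = 0 := by simp [hf]
  have := hmono (Set.self_mem_Ici) (Set.mem_Ici.2 hu) hu
  rw [h0] at this
  simpa [hf] using this

lemma log_ineq {γ : ℝ} (hγ : 0 ≤ γ) :
    γ ^ 2 / 2 ≤ (1 + γ) ^ 2 * Real.log (1 + γ) - γ := by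
  set f : ℝ → ℝ := fun v => (1 + v) ^ 2 * Real.log (1 + v) - v - v ^ 2 / 2 with hf
  have hd : ∀ v : ℝ, 0 ≤ v →
      HasDerivAt f (2 * (1 + v) * Real.log (1 + v)) v := by
    intro v hv
    have hv1 : (1 : ℝ) + v ≠ 0 := by positivity
    have hlog : HasDerivAt (fun z : ℝ => Real.log (1 + z)) (1 / (1 + v)) v := by
      have := (Real.hasDerivAt_log hv1).comp v ((hasDerivAt_id v).const_add 1)
      simpa [one_div, Function.comp_def] using this
    have hsq : HasDerivAt (fun z : ℝ => (1 + z) ^ 2) (2 * (1 + v)) v := by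
      have := (hasDerivAt_pow 2 ((1:ℝ) + v)).comp v ((hasDerivAt_id v).const_add 1)
      simpa [Function.comp_def] using this
    have hmul := hsq.mul hlog
    have := (hmul.sub (hasDerivAt_id v)).sub ((hasDerivAt_pow 2 v).div_const 2)
    refine HasDerivAt.congr_deriv this ?_
    field_simp
    ring
  have hmono : MonotoneOn f (Set.Ici (0:ℝ)) := by
    apply monotoneOn_of_deriv_nonneg (convex_Ici 0)
    · apply ContinuousOn.sub
      apply ContinuousOn.sub
      · exact ContinuousOn.mul (by fun_prop) (ContinuousOn.log (by fun_prop)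
          (fun v hv => by simp only [Set.mem_Ici] at hv; positivity))
      · fun_prop
      · fun_prop
    · intro v hv
      simp only [interior_Ici, Set.mem_Ioi] at hv
      exact (hd v hv.le).differentiableAt.differentiableWithinAt
    · intro v hv
      simp only [interior_Ici, Set.mem_Ioi] at hv
      rw [(hd v hv.le).deriv]
      have h1 : 0 ≤ Real.log (1 + v) := Real.log_nonneg (by linarith)
      positivity
  have h0 : f 0 = 0 := by simp [hf]
  have := hmono (Set.self_mem_Ici) (Set.mem_Ici.2 hγ) hγ
  rw [h0] at this
  simp only [hf, sub_nonneg] at this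
  linarith

lemma offDiag_identity {N : ℕ} (hN : 2 ≤ N) (x : Fin N → ℝ) :
    ∑ p ∈ Finset.univ.offDiag, (x p.1 - x p.2) ^ 2 / 2
      = (N : ℝ) * ∑ n, (x n - (N : ℝ)⁻¹ * ∑ m, x m) ^ 2 := by
  have hNpos : (0:ℝ) < N := by positivity
  have hNne : (N:ℝ) ≠ 0 := by positivity
  set S1 := ∑ i, x i with hS1
  set S2 := ∑ i, x i ^ 2 with hS2
  have hfull : ∑ p ∈ (Finset.univ ×ˢ Finset.univ : Finset (Fin N × Fin N)),
      (x p.1 - x p.2) ^ 2 / 2 = (N:ℝ) * S2 - S1 ^ 2 := by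
    rw [Finset.sum_product]
    have : ∀ m : Fin N, ∑ n, (x m - x n) ^ 2 / 2
        = (N:ℝ) * x m ^ 2 / 2 - x m * S1 + S2 / 2 := by
      intro m
      have : ∀ n, (x m - x n) ^ 2 / 2 = x m ^ 2 / 2 - x m * x n + x n ^ 2 / 2 := by
        intro n; ring
      rw [Finset.sum_congr rfl fun n _ => this n]
      rw [Finset.sum_add_distrib, Finset.sum_sub_distrib, Finset.sum_const,
        ← Finset.mul_sum, ← Finset.sum_div, Finset.card_univ, Fintype.card_fin]
      push_cast
      ring
    rw [Finset.sum_congr rfl fun m _ => this m]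
    rw [Finset.sum_add_distrib, Finset.sum_sub_distrib, Finset.sum_const,
      ← Finset.sum_div, ← Finset.sum_mul, ← Finset.mul_sum, Finset.card_univ,
      Fintype.card_fin]
    push_cast
    ring
  have hdiag : ∑ p ∈ (Finset.univ : Finset (Fin N)).diag,
      (x p.1 - x p.2) ^ 2 / 2 = 0 := by
    apply Finset.sum_eq_zero
    intro p hp
    rw [Finset.mem_diag] at hp
    rw [hp.2]
    ring
  have hsplit : ∑ p ∈ Finset.univ.offDiag, (x p.1 - x p.2) ^ 2 / 2
      = (N:ℝ) * S2 - S1 ^ 2 := by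
    rw [← hfull, ← Finset.diag_union_offDiag (Finset.univ : Finset (Fin N)),
      Finset.sum_union (Finset.disjoint_diag_offDiag _), hdiag, zero_add]
  rw [hsplit]
  have hrhs : ∑ n, (x n - (N : ℝ)⁻¹ * S1) ^ 2 = S2 - (N:ℝ)⁻¹ * S1 ^ 2 := by
    have : ∀ n, (x n - (N : ℝ)⁻¹ * S1) ^ 2
        = x n ^ 2 - 2 * (N:ℝ)⁻¹ * S1 * x n + ((N:ℝ)⁻¹ * S1) ^ 2 := by
      intro n; ring
    rw [Finset.sum_congr rfl fun n _ => this n, Finset.sum_add_distrib,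
      Finset.sum_sub_distrib, Finset.sum_const, ← Finset.mul_sum,
      Finset.card_univ, Fintype.card_fin]
    rw [← hS1, ← hS2]
    push_cast
    field_simp
    have : (N:ℝ)^2 * S1^2 * (N:ℝ)⁻¹^2 = S1^2 := by
      rw [inv_pow, mul_comm ((N:ℝ)^2), mul_assoc, mul_inv_cancel₀ (pow_ne_zero 2 hNne), mul_one]
    linear_combination this
  rw [hrhs]
  field_simp

lemma exists_perm_pair {α : Type*} [DecidableEq α] {m n m' n' : α} (h : m ≠ n)
    (h' : m' ≠ n') : ∃ σ : Equiv.Perm α, σ m = m' ∧ σ n = n' := by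
  refine ⟨(Equiv.swap ((Equiv.swap m m') n) n') * (Equiv.swap m m'), ?_, ?_⟩
  · rw [Equiv.Perm.mul_apply, Equiv.swap_apply_left]
    apply Equiv.swap_apply_of_ne_of_ne
    · intro hc
      exact h ((Equiv.swap m m').injective ((Equiv.swap_apply_left m m').trans hc))
    · exact h'
  · rw [Equiv.Perm.mul_apply, Equiv.swap_apply_left]

lemma perm_pair_count {N : ℕ} (hN : 2 ≤ N) {j l : Fin N} (hjl : j ≠ l)
    (G : Fin N → Fin N → ℝ) :
    ∃ C : ℕ, 0 < C ∧ C * (N * N - N) = Nat.factorial N ∧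
      ∑ e : Equiv.Perm (Fin N), G (e j) (e l)
        = (C : ℝ) * ∑ p ∈ (Finset.univ : Finset (Fin N)).offDiag, G p.1 p.2 := by
  classical
  set fib : Fin N × Fin N → Finset (Equiv.Perm (Fin N)) :=
    fun p => Finset.univ.filter (fun e => (e j, e l) = p) with hfib
  have hmaps : ∀ e : Equiv.Perm (Fin N), e ∈ (Finset.univ : Finset (Equiv.Perm (Fin N))) →
      (e j, e l) ∈ (Finset.univ : Finset (Fin N)).offDiag := by
    intro e _
    rw [Finset.mem_offDiag]
    exact ⟨Finset.mem_univ _, Finset.mem_univ _, fun hc => hjl (e.injective hc)⟩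
  -- all fibers over offDiag have the same cardinality
  have hcard : ∀ p ∈ (Finset.univ : Finset (Fin N)).offDiag,
      ∀ q ∈ (Finset.univ : Finset (Fin N)).offDiag, (fib p).card = (fib q).card := by
    intro p hp q hq
    rw [Finset.mem_offDiag] at hp hq
    obtain ⟨σ, hσ1, hσ2⟩ := exists_perm_pair hp.2.2 hq.2.2
    apply Finset.card_nbij' (fun e => σ * e) (fun τ => σ⁻¹ * τ)
    · intro e he
      simp only [hfib, Finset.mem_coe, Finset.mem_filter, Finset.mem_univ, true_and] at he ⊢
      have h1 : e j = p.1 := by rw [← he]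
      have h2 : e l = p.2 := by rw [← he]
      simp [Equiv.Perm.mul_apply, h1, h2, hσ1, hσ2]
    · intro τ hτ
      simp only [hfib, Finset.mem_coe, Finset.mem_filter, Finset.mem_univ, true_and] at hτ ⊢
      have h1 : τ j = q.1 := by rw [← hτ]
      have h2 : τ l = q.2 := by rw [← hτ]
      simp only [Equiv.Perm.mul_apply, h1, h2]
      rw [← hσ1, ← hσ2]
      simp
    · intro e _; simp [← mul_assoc]
    · intro τ _; simp [← mul_assoc]
  have hjlmem : (j, l) ∈ (Finset.univ : Finset (Fin N)).offDiag :=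
    Finset.mem_offDiag.2 ⟨Finset.mem_univ _, Finset.mem_univ _, hjl⟩
  set C := (fib (j, l)).card with hC
  have htot : Nat.factorial N = C * (N * N - N) := by
    have h1 : (Finset.univ : Finset (Equiv.Perm (Fin N))).card
        = ∑ p ∈ (Finset.univ : Finset (Fin N)).offDiag, (fib p).card :=
      Finset.card_eq_sum_card_fiberwise hmaps
    have h2 : ∑ p ∈ (Finset.univ : Finset (Fin N)).offDiag, (fib p).card
        = ∑ p ∈ (Finset.univ : Finset (Fin N)).offDiag, C :=
      Finset.sum_congr rfl fun p hp => hcard p hp (j, l) hjlmem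
    rw [Finset.sum_const, Finset.offDiag_card, Finset.card_univ, Fintype.card_fin] at h2
    rw [h2, smul_eq_mul, mul_comm] at h1
    rw [← h1, Finset.card_univ, Fintype.card_perm, Fintype.card_fin]
  have hCpos : 0 < C := by
    rcases Nat.eq_zero_or_pos C with h0 | hpos
    · exfalso
      rw [h0, zero_mul] at htot
      exact Nat.factorial_ne_zero N htot
    · exact hpos
  refine ⟨C, hCpos, htot.symm, ?_⟩
  rw [← Finset.sum_fiberwise_of_maps_to hmaps (fun e => G (e j) (e l))]
  rw [Finset.mul_sum]
  apply Finset.sum_congr rfl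
  intro p hp
  have : ∀ e ∈ Finset.univ.filter (fun e : Equiv.Perm (Fin N) => (e j, e l) = p),
      G (e j) (e l) = G p.1 p.2 := by
    intro e he
    rw [Finset.mem_filter] at he
    rw [show e j = p.1 by rw [← he.2], show e l = p.2 by rw [← he.2]]
  rw [Finset.sum_congr rfl this, Finset.sum_const, nsmul_eq_mul]
  congr 1
  exact_mod_cast congrArg Nat.cast (hcard p hp (j, l) hjlmem)

lemma integral_prod_pairs {Ω : Type*} [MeasurableSpace Ω] (μ : Measure Ω)
    [IsProbabilityMeasure μ] {N : ℕ}
    (Z : Fin N → Ω → ℝ) (hmeas : ∀ n, Measurable (Z n))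
    (hindep : iIndepFun Z μ)
    {k : ℕ} (u v : Fin k → Fin N)
    (hdisj : ∀ i j : Fin k, i ≠ j → ∀ x ∈ ({u i, v i} : Finset (Fin N)),
      x ∉ ({u j, v j} : Finset (Fin N)))
    (g : Fin k → ℝ → ℝ → ℝ) (hg : ∀ i, Measurable (Function.uncurry (g i)))
    (s : Finset (Fin k)) :
    ∫ ω, ∏ i ∈ s, g i (Z (u i) ω) (Z (v i) ω) ∂μ
      = ∏ i ∈ s, ∫ ω, g i (Z (u i) ω) (Z (v i) ω) ∂μ := by
  classical
  induction s using Finset.induction_on with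
  | empty => simp
  | insert j s hjs ih =>
    have hsplit : (fun ω => ∏ i ∈ insert j s, g i (Z (u i) ω) (Z (v i) ω))
        = fun ω => g j (Z (u j) ω) (Z (v j) ω) * ∏ i ∈ s, g i (Z (u i) ω) (Z (v i) ω) := by
      funext ω
      exact Finset.prod_insert hjs
    rw [show (∫ ω, ∏ i ∈ insert j s, g i (Z (u i) ω) (Z (v i) ω) ∂μ)
        = ∫ ω, (g j (Z (u j) ω) (Z (v j) ω) * ∏ i ∈ s, g i (Z (u i) ω) (Z (v i) ω)) ∂μ
      from congrArg _ hsplit, Finset.prod_insert hjs]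
    set T : Finset (Fin N) := s.biUnion (fun i => {u i, v i}) with hT
    have hST : Disjoint ({u j, v j} : Finset (Fin N)) T := by
      rw [Finset.disjoint_left]
      intro x hx hxT
      rw [hT, Finset.mem_biUnion] at hxT
      obtain ⟨i, his, hxi⟩ := hxT
      exact hdisj j i (fun hc => hjs (hc ▸ his)) x hx hxi
    have hIF := hindep.indepFun_finset ({u j, v j} : Finset (Fin N)) T hST hmeas
    -- compose
    set φ : (∀ x : ({u j, v j} : Finset (Fin N)), ℝ) → ℝ :=
      fun w => Function.uncurry (g j)
        (w ⟨u j, by simp⟩, w ⟨v j, by simp [Finset.mem_insert]⟩) with hφ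
    set ψ : (∀ x : (T : Finset (Fin N)), ℝ) → ℝ :=
      fun w => ∏ i ∈ s.attach, Function.uncurry (g i)
        (w ⟨u i, by rw [hT]; exact Finset.mem_biUnion.2 ⟨i, i.2, by simp⟩⟩,
         w ⟨v i, by rw [hT]; exact Finset.mem_biUnion.2 ⟨i, i.2, by simp⟩⟩) with hψ
    have hφm : Measurable φ :=
      (hg j).comp ((measurable_pi_apply _).prodMk (measurable_pi_apply _))
    have hψm : Measurable ψ :=
      Finset.measurable_prod _ (fun i _ =>
        (hg i).comp ((measurable_pi_apply _).prodMk (measurable_pi_apply _)))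
    have hIF2 := hIF.comp hφm hψm
    have heq1 : (φ ∘ fun a (i : ({u j, v j} : Finset (Fin N))) => Z i a)
        = fun ω => g j (Z (u j) ω) (Z (v j) ω) := rfl
    have heq2 : (ψ ∘ fun a (i : (T : Finset (Fin N))) => Z i a)
        = fun ω => ∏ i ∈ s, g i (Z (u i) ω) (Z (v i) ω) := by
      funext ω
      simp only [Function.comp_apply, hψ, Function.uncurry]
      rw [← Finset.prod_attach s (fun i => g i (Z (u i) ω) (Z (v i) ω))]
    rw [heq1, heq2] at hIF2
    have hint1 : AEStronglyMeasurable (fun ω => g j (Z (u j) ω) (Z (v j) ω)) μ :=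
      (((hg j).comp ((hmeas (u j)).prodMk (hmeas (v j))))).aestronglyMeasurable
    have hint2 : AEStronglyMeasurable
        (fun ω => ∏ i ∈ s, g i (Z (u i) ω) (Z (v i) ω)) μ :=
      (Finset.measurable_prod _ (fun i _ =>
        (hg i).comp ((hmeas (u i)).prodMk (hmeas (v i))))).aestronglyMeasurable
    have := hIF2.integral_mul_eq_mul_integral hint1 hint2
    rw [show ((fun ω => g j (Z (u j) ω) (Z (v j) ω))
        * (fun ω => ∏ i ∈ s, g i (Z (u i) ω) (Z (v i) ω)))
      = fun ω => g j (Z (u j) ω) (Z (v j) ω) * ∏ i ∈ s, g i (Z (u i) ω) (Z (v i) ω)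
      from rfl] at this
    rw [this, ih]

lemma bdd_integrable {Ω : Type*} [MeasurableSpace Ω] {μ : Measure Ω} [IsFiniteMeasure μ]
    {f : Ω → ℝ} (hf : Measurable f) (C : ℝ) (h : ∀ ω, |f ω| ≤ C) : Integrable f μ :=
  ⟨hf.aestronglyMeasurable, HasFiniteIntegral.of_bounded (C := C) (ae_of_all _ h)⟩

lemma pair_mean {Ω : Type*} [MeasurableSpace Ω] (μ : Measure Ω) [IsProbabilityMeasure μ]
    {N : ℕ} (hN : 2 ≤ N) {a b : ℝ} (Z : Fin N → Ω → ℝ)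
    (hmeas : ∀ n, Measurable (Z n))
    (hval : ∀ n ω, Z n ω ∈ Set.Icc a b)
    (hindep : iIndepFun Z μ)
    (hident : ∀ m n, IdentDistrib (Z m) (Z n) μ μ)
    {Δ : ℝ} (hΔ : Δ = variance (Z ⟨0, Nat.zero_lt_of_lt hN⟩) μ)
    {m n : Fin N} (hmn : m ≠ n) :
    ∫ ω, (Z m ω - Z n ω) ^ 2 / 2 ∂μ = Δ := by
  set z0 : Fin N := ⟨0, Nat.zero_lt_of_lt hN⟩ with hz0
  set K := max |a| |b| with hKdef
  have hK : ∀ (p : Fin N) ω, |Z p ω| ≤ K := by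
    intro p ω
    obtain ⟨h1, h2⟩ := hval p ω
    rw [abs_le]
    refine ⟨?_, ?_⟩
    · calc -K ≤ -|a| := by simp [hKdef]
        _ ≤ a := neg_abs_le a
        _ ≤ Z p ω := h1
    · calc Z p ω ≤ b := h2
        _ ≤ |b| := le_abs_self b
        _ ≤ K := le_max_right _ _
  have hint : ∀ p : Fin N, Integrable (Z p) μ := fun p =>
    bdd_integrable (hmeas p) K (hK p)
  have hintsq : ∀ p : Fin N, Integrable (fun ω => Z p ω ^ 2) μ := fun p =>
    bdd_integrable ((hmeas p).pow_const 2) (K ^ 2) (fun ω => by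
      rw [abs_pow]
      exact pow_le_pow_left₀ (abs_nonneg _) (hK p ω) 2)
  have hintmul : Integrable (fun ω => Z m ω * Z n ω) μ :=
    bdd_integrable ((hmeas m).mul (hmeas n)) (K * K) (fun ω => by
      rw [abs_mul]
      exact mul_le_mul (hK m ω) (hK n ω) (abs_nonneg _) ((abs_nonneg _).trans (hK m ω)))
  have hmul : ∫ ω, Z m ω * Z n ω ∂μ = (∫ ω, Z m ω ∂μ) * ∫ ω, Z n ω ∂μ :=
    (hindep.indepFun hmn).integral_mul_eq_mul_integral (hint m).1 (hint n).1
  have hsq_eq : ∀ p : Fin N, ∫ ω, Z p ω ^ 2 ∂μ = ∫ ω, Z z0 ω ^ 2 ∂μ := fun p =>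
    ((hident p z0).comp (measurable_id.pow_const 2)).integral_eq
  have hmean_eq : ∀ p : Fin N, ∫ ω, Z p ω ∂μ = ∫ ω, Z z0 ω ∂μ := fun p =>
    (hident p z0).integral_eq
  have hmem : MemLp (Z z0) 2 μ :=
    (memLp_top_of_bound (hmeas z0).aestronglyMeasurable K
      (ae_of_all _ (hK z0))).mono_exponent le_top
  have hvar : Δ = (∫ ω, Z z0 ω ^ 2 ∂μ) - (∫ ω, Z z0 ω ∂μ) ^ 2 := by
    rw [hΔ, variance_eq_sub hmem]
    rfl
  have hptw : (fun ω => (Z m ω - Z n ω) ^ 2 / 2)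
      = fun ω => (Z m ω ^ 2 / 2 + Z n ω ^ 2 / 2) - Z m ω * Z n ω := by
    funext ω; ring
  have i2 : Integrable (fun ω => Z m ω ^ 2 / 2) μ := (hintsq m).div_const 2
  have i3 : Integrable (fun ω => Z n ω ^ 2 / 2) μ := (hintsq n).div_const 2
  have i1 : Integrable (fun ω => Z m ω ^ 2 / 2 + Z n ω ^ 2 / 2) μ := i2.add i3
  rw [hptw, integral_sub i1 hintmul, integral_add i2 i3,
    integral_div, integral_div, hmul, hsq_eq m, hsq_eq n, hmean_eq m, hmean_eq n, hvar]
  ring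

lemma pair_mgf_le {Ω : Type*} [MeasurableSpace Ω] {μ : Measure Ω} [IsProbabilityMeasure μ]
    {N : ℕ} {a b : ℝ} (hab : a < b) {Z : Fin N → Ω → ℝ}
    (hmeas : ∀ n, Measurable (Z n))
    (hval : ∀ n ω, Z n ω ∈ Set.Icc a b)
    {Δ : ℝ} {m n : Fin N}
    (hmean : ∫ ω, (Z m ω - Z n ω) ^ 2 / 2 ∂μ = Δ)
    (s : ℝ) :
    ∫ ω, Real.exp (s * ((Z m ω - Z n ω) ^ 2 / 2)) ∂μ
      ≤ Real.exp ((Δ / ((b - a) ^ 2 / 2)) * (Real.exp (s * ((b - a) ^ 2 / 2)) - 1)) := by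
  set M : ℝ := (b - a) ^ 2 / 2 with hMdef
  have hM : 0 < M := by
    rw [hMdef]
    have : 0 < b - a := by linarith
    positivity
  set h : Ω → ℝ := fun ω => (Z m ω - Z n ω) ^ 2 / 2 with hhdef
  have hh0 : ∀ ω, 0 ≤ h ω := fun ω => by rw [hhdef]; positivity
  have hhM : ∀ ω, h ω ≤ M := by
    intro ω
    rw [hhdef, hMdef]
    have h1 : |Z m ω - Z n ω| ≤ b - a := by
      obtain ⟨hm1, hm2⟩ := hval m ω
      obtain ⟨hn1, hn2⟩ := hval n ω
      rw [abs_le]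
      constructor <;> linarith
    have h2 : (Z m ω - Z n ω) ^ 2 ≤ (b - a) ^ 2 := by
      rw [← sq_abs]
      apply pow_le_pow_left₀ (abs_nonneg _) h1
    linarith
  have hhmeas : Measurable h := by
    rw [hhdef]
    exact (((hmeas m).sub (hmeas n)).pow_const 2).div_const 2
  have hint1 : Integrable (fun ω => Real.exp (s * h ω)) μ := by
    apply bdd_integrable ((hhmeas.const_mul s).exp) (Real.exp (|s| * M))
    intro ω
    rw [abs_of_pos (Real.exp_pos _), Real.exp_le_exp]
    calc s * h ω ≤ |s * h ω| := le_abs_self _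
      _ = |s| * |h ω| := abs_mul _ _
      _ ≤ |s| * M := by
          apply mul_le_mul_of_nonneg_left _ (abs_nonneg s)
          rw [abs_of_nonneg (hh0 ω)]
          exact hhM ω
  have hinth : Integrable h μ :=
    bdd_integrable hhmeas M (fun ω => by rw [abs_of_nonneg (hh0 ω)]; exact hhM ω)
  have hint2 : Integrable (fun ω => 1 + (h ω / M) * (Real.exp (s * M) - 1)) μ :=
    (integrable_const 1).add ((hinth.div_const M).mul_const _)
  have hptw : ∀ ω, Real.exp (s * h ω) ≤ 1 + (h ω / M) * (Real.exp (s * M) - 1) :=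
    fun ω => chord_exp (hh0 ω) (hhM ω) hM
  calc ∫ ω, Real.exp (s * h ω) ∂μ
      ≤ ∫ ω, 1 + (h ω / M) * (Real.exp (s * M) - 1) ∂μ :=
        integral_mono hint1 hint2 hptw
    _ = 1 + (Δ / M) * (Real.exp (s * M) - 1) := by
        rw [integral_add (integrable_const 1) ((hinth.div_const M).mul_const _),
          integral_const, integral_mul_const, integral_div]
        have : ∫ ω, h ω ∂μ = Δ := hmean
        rw [this]
        simp
    _ ≤ Real.exp ((Δ / M) * (Real.exp (s * M) - 1)) := by
        have := Real.add_one_le_exp ((Δ / M) * (Real.exp (s * M) - 1))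
        linarith

lemma perm_pair_count' {N : ℕ} (hN : 2 ≤ N) :
    ∃ C : ℕ, 0 < C ∧ C * (N * N - N) = Nat.factorial N ∧
      ∀ (j l : Fin N), j ≠ l → ∀ G : Fin N → Fin N → ℝ,
        ∑ e : Equiv.Perm (Fin N), G (e j) (e l)
          = (C : ℝ) * ∑ p ∈ (Finset.univ : Finset (Fin N)).offDiag, G p.1 p.2 := by
  have hNN : 0 < N * N - N := by
    have : 2 * N ≤ N * N := Nat.mul_le_mul_right N hN
    omega
  have hjl0 : (⟨0, Nat.zero_lt_of_lt hN⟩ : Fin N) ≠ ⟨1, by omega⟩ := by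
    intro hc
    simpa using congrArg Fin.val hc
  obtain ⟨C0, hC0pos, hC0eq, _⟩ := perm_pair_count hN hjl0 (fun _ _ => (0:ℝ))
  refine ⟨C0, hC0pos, hC0eq, ?_⟩
  intro j l hjl G
  obtain ⟨C, _, hCeq, hCsum⟩ := perm_pair_count hN hjl G
  have : C = C0 := Nat.eq_of_mul_eq_mul_right hNN (hCeq.trans hC0eq.symm)
  rw [hCsum, this]

lemma mgf_master {Ω : Type*} [MeasurableSpace Ω] (μ : Measure Ω) [IsProbabilityMeasure μ]
    {N : ℕ} (hN : 2 ≤ N) {a b : ℝ} (hab : a < b) (Z : Fin N → Ω → ℝ)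
    (hmeas : ∀ n, Measurable (Z n))
    (hval : ∀ n ω, Z n ω ∈ Set.Icc a b)
    (hindep : iIndepFun Z μ)
    (hident : ∀ m n, IdentDistrib (Z m) (Z n) μ μ)
    {Δ : ℝ} (hΔ : Δ = variance (Z ⟨0, Nat.zero_lt_of_lt hN⟩) μ)
    (Δhat : Ω → ℝ)
    (hΔhat : ∀ ω, Δhat ω =
      ((N : ℝ) - 1)⁻¹ * ∑ n, (Z n ω - (N : ℝ)⁻¹ * ∑ m, Z m ω) ^ 2)
    (θ : ℝ) :
    mgf Δhat μ θ ≤ Real.exp (((N / 2 : ℕ) : ℝ) *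
      ((Δ / ((b - a) ^ 2 / 2)) *
        (Real.exp (θ * ((N / 2 : ℕ) : ℝ)⁻¹ * ((b - a) ^ 2 / 2)) - 1))) := by
  classical
  set M : ℝ := (b - a) ^ 2 / 2 with hMdef
  have hM : 0 < M := by
    have : 0 < b - a := by linarith
    rw [hMdef]; positivity
  set k : ℕ := N / 2 with hkdef
  have hk1 : 1 ≤ k := by omega
  have h2k : 2 * k ≤ N := by omega
  have hkR : (0:ℝ) < (k:ℝ) := by exact_mod_cast hk1
  have hA : ∀ i : Fin k, 2 * i.1 < N := fun i => by have := i.2; omega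
  have hB : ∀ i : Fin k, 2 * i.1 + 1 < N := fun i => by have := i.2; omega
  set A : Fin k → Fin N := fun i => ⟨2 * i.1, hA i⟩ with hAdef
  set B : Fin k → Fin N := fun i => ⟨2 * i.1 + 1, hB i⟩ with hBdef
  have hAB : ∀ i : Fin k, A i ≠ B i := by
    intro i hc
    simpa [hAdef, hBdef] using congrArg Fin.val hc
  set S' : Ω → ℝ := fun ω => ∑ p ∈ (Finset.univ : Finset (Fin N)).offDiag,
    (Z p.1 ω - Z p.2 ω) ^ 2 / 2 with hS'def
  have hNR1 : (1:ℝ) ≤ (N:ℝ) - 1 := by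
    have : (2:ℝ) ≤ (N:ℝ) := by exact_mod_cast hN
    linarith
  have hNcast : ((N * N - N : ℕ) : ℝ) = ((N:ℝ) - 1) * (N:ℝ) := by
    have hle : N ≤ N * N := Nat.le_mul_of_pos_left N (by omega)
    push_cast [Nat.cast_sub hle]
    ring
  have hrepr : ∀ ω, Δhat ω = (((N * N - N : ℕ)) : ℝ)⁻¹ * S' ω := by
    intro ω
    rw [hΔhat ω]
    have hid : S' ω = (N : ℝ) * ∑ n, (Z n ω - (N : ℝ)⁻¹ * ∑ m, Z m ω) ^ 2 :=
      offDiag_identity hN (fun n => Z n ω)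
    rw [hid, hNcast]
    have hNne : (N:ℝ) ≠ 0 := by positivity
    field_simp
  -- counting
  obtain ⟨C, hCpos, hCeq, hCsum⟩ := perm_pair_count' hN
  have hCcast : (C : ℝ) * (((N * N - N : ℕ)) : ℝ) = (Nat.factorial N : ℝ) := by
    exact_mod_cast congrArg (Nat.cast (R := ℝ)) hCeq
  set f : Equiv.Perm (Fin N) → Ω → ℝ :=
    fun e ω => (k:ℝ)⁻¹ * ∑ i : Fin k, (Z (e (A i)) ω - Z (e (B i)) ω) ^ 2 / 2 with hfdef
  have hfsum : ∀ ω, ∑ e : Equiv.Perm (Fin N), f e ω = (C:ℝ) * S' ω := by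
    intro ω
    rw [hfdef]
    simp only
    rw [← Finset.mul_sum, Finset.sum_comm]
    have : ∀ i : Fin k, ∑ e : Equiv.Perm (Fin N),
        (Z (e (A i)) ω - Z (e (B i)) ω) ^ 2 / 2 = (C:ℝ) * S' ω := by
      intro i
      exact hCsum (A i) (B i) (hAB i) (fun m n => (Z m ω - Z n ω) ^ 2 / 2)
    rw [Finset.sum_congr rfl (fun i _ => this i), Finset.sum_const, Finset.card_univ,
      Fintype.card_fin, nsmul_eq_mul]
    rw [← mul_assoc]
    rw [inv_mul_cancel₀ (ne_of_gt hkR), one_mul]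
  -- pointwise Jensen
  have hNfacR : (0:ℝ) < (Nat.factorial N : ℝ) := by
    exact_mod_cast Nat.factorial_pos N
  have hconv : ∀ ω, Real.exp (θ * Δhat ω)
      ≤ (Nat.factorial N : ℝ)⁻¹ * ∑ e : Equiv.Perm (Fin N), Real.exp (θ * f e ω) := by
    intro ω
    have hjensen := convexOn_exp.map_sum_le
      (t := (Finset.univ : Finset (Equiv.Perm (Fin N))))
      (w := fun _ => (Nat.factorial N : ℝ)⁻¹)
      (p := fun e => θ * f e ω)
      (fun _ _ => by positivity)
      (by
        rw [Finset.sum_const, Finset.card_univ, Fintype.card_perm, Fintype.card_fin,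
          nsmul_eq_mul, mul_inv_cancel₀ (ne_of_gt hNfacR)])
      (fun _ _ => Set.mem_univ _)
    have harg : ∑ e : Equiv.Perm (Fin N), (Nat.factorial N : ℝ)⁻¹ • (θ * f e ω)
        = θ * Δhat ω := by
      simp only [smul_eq_mul]
      rw [← Finset.mul_sum, ← Finset.mul_sum, hfsum ω, hrepr ω]
      have hne : (((N * N - N : ℕ)) : ℝ) ≠ 0 := by
        rw [hNcast]; positivity
      field_simp
      linear_combination (θ * S' ω) * hCcast
    rw [harg] at hjensen
    refine hjensen.trans_eq ?_
    rw [Finset.mul_sum]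
    simp [smul_eq_mul]
  -- pointwise bounds on pair terms
  have hhM' : ∀ (p q : Fin N) ω, 0 ≤ (Z p ω - Z q ω) ^ 2 / 2 ∧ (Z p ω - Z q ω) ^ 2 / 2 ≤ M := by
    intro p q ω
    refine ⟨by positivity, ?_⟩
    rw [hMdef]
    have h1 : |Z p ω - Z q ω| ≤ b - a := by
      obtain ⟨hm1, hm2⟩ := hval p ω
      obtain ⟨hn1, hn2⟩ := hval q ω
      rw [abs_le]
      constructor <;> linarith
    have h2 : (Z p ω - Z q ω) ^ 2 ≤ (b - a) ^ 2 := by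
      rw [← sq_abs]
      exact pow_le_pow_left₀ (abs_nonneg _) h1 2
    linarith
  have hfbdd : ∀ (e : Equiv.Perm (Fin N)) ω, 0 ≤ f e ω ∧ f e ω ≤ M := by
    intro e ω
    constructor
    · rw [hfdef]
      exact mul_nonneg (by positivity)
        (Finset.sum_nonneg fun i _ => (hhM' _ _ ω).1)
    · rw [hfdef]
      simp only
      have hsum : ∑ i : Fin k, (Z (e (A i)) ω - Z (e (B i)) ω) ^ 2 / 2 ≤ (k:ℝ) * M := by
        calc ∑ i : Fin k, (Z (e (A i)) ω - Z (e (B i)) ω) ^ 2 / 2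
            ≤ ∑ _i : Fin k, M := Finset.sum_le_sum fun i _ => (hhM' _ _ ω).2
          _ = (k:ℝ) * M := by
              rw [Finset.sum_const, Finset.card_univ, Fintype.card_fin, nsmul_eq_mul]
      calc (k:ℝ)⁻¹ * ∑ i : Fin k, (Z (e (A i)) ω - Z (e (B i)) ω) ^ 2 / 2
          ≤ (k:ℝ)⁻¹ * ((k:ℝ) * M) := by
            apply mul_le_mul_of_nonneg_left hsum (by positivity)
        _ = M := by field_simp
  have hfmeas : ∀ e : Equiv.Perm (Fin N), Measurable (f e) := by
    intro e
    rw [hfdef]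
    apply Measurable.const_mul
    apply Finset.measurable_sum
    intro i _
    exact (((hmeas _).sub (hmeas _)).pow_const 2).div_const 2
  have hint_f : ∀ e : Equiv.Perm (Fin N),
      Integrable (fun ω => Real.exp (θ * f e ω)) μ := by
    intro e
    apply bdd_integrable (((hfmeas e).const_mul θ).exp) (Real.exp (|θ| * M))
    intro ω
    rw [abs_of_pos (Real.exp_pos _), Real.exp_le_exp]
    calc θ * f e ω ≤ |θ * f e ω| := le_abs_self _
      _ = |θ| * |f e ω| := abs_mul _ _
      _ ≤ |θ| * M := by
          apply mul_le_mul_of_nonneg_left _ (abs_nonneg θ)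
          rw [abs_of_nonneg (hfbdd e ω).1]
          exact (hfbdd e ω).2
  have hΔmeas : Measurable Δhat := by
    have : Δhat = fun ω => ((N : ℝ) - 1)⁻¹ * ∑ n, (Z n ω - (N : ℝ)⁻¹ * ∑ m, Z m ω) ^ 2 :=
      funext hΔhat
    rw [this]
    apply Measurable.const_mul
    apply Finset.measurable_sum
    intro n _
    exact ((hmeas n).sub ((Finset.measurable_sum _ fun m _ => hmeas m).const_mul _)).pow_const 2
  have hΔbdd : ∀ ω, 0 ≤ Δhat ω ∧ Δhat ω ≤ M := by
    intro ω
    have hS'bdd : 0 ≤ S' ω ∧ S' ω ≤ ((N * N - N : ℕ) : ℝ) * M := by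
      constructor
      · exact Finset.sum_nonneg fun p _ => (hhM' _ _ ω).1
      · calc S' ω ≤ ∑ _p ∈ (Finset.univ : Finset (Fin N)).offDiag, M :=
              Finset.sum_le_sum fun p _ => (hhM' _ _ ω).2
          _ = ((N * N - N : ℕ) : ℝ) * M := by
              rw [Finset.sum_const, nsmul_eq_mul, Finset.offDiag_card,
                Finset.card_univ, Fintype.card_fin]
    have hposNN : (0:ℝ) < ((N * N - N : ℕ) : ℝ) := by
      rw [hNcast]
      have : (0:ℝ) < (N:ℝ) := by positivity
      nlinarith
    constructor
    · rw [hrepr ω]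
      exact mul_nonneg (by positivity) hS'bdd.1
    · rw [hrepr ω]
      calc ((N * N - N : ℕ) : ℝ)⁻¹ * S' ω
          ≤ ((N * N - N : ℕ) : ℝ)⁻¹ * (((N * N - N : ℕ) : ℝ) * M) :=
            mul_le_mul_of_nonneg_left hS'bdd.2 (by positivity)
        _ = M := by field_simp
  have hint_Δ : Integrable (fun ω => Real.exp (θ * Δhat ω)) μ := by
    apply bdd_integrable ((hΔmeas.const_mul θ).exp) (Real.exp (|θ| * M))
    intro ω
    rw [abs_of_pos (Real.exp_pos _), Real.exp_le_exp]
    calc θ * Δhat ω ≤ |θ * Δhat ω| := le_abs_self _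
      _ = |θ| * |Δhat ω| := abs_mul _ _
      _ ≤ |θ| * M := by
          apply mul_le_mul_of_nonneg_left _ (abs_nonneg θ)
          rw [abs_of_nonneg (hΔbdd ω).1]
          exact (hΔbdd ω).2
  -- per-permutation factorized bound
  have hperm : ∀ e : Equiv.Perm (Fin N),
      ∫ ω, Real.exp (θ * f e ω) ∂μ
        ≤ Real.exp ((k:ℝ) * ((Δ / M) * (Real.exp (θ * (k:ℝ)⁻¹ * M) - 1))) := by
    intro e
    have hptw : (fun ω => Real.exp (θ * f e ω))
        = fun ω => ∏ i : Fin k,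
            Real.exp (θ * (k:ℝ)⁻¹ * ((Z (e (A i)) ω - Z (e (B i)) ω) ^ 2 / 2)) := by
      funext ω
      rw [← Real.exp_sum]
      congr 1
      rw [hfdef]
      simp only
      rw [← mul_assoc, Finset.mul_sum]
    have hdisj : ∀ i j : Fin k, i ≠ j →
        ∀ x ∈ ({e (A i), e (B i)} : Finset (Fin N)),
          x ∉ ({e (A j), e (B j)} : Finset (Fin N)) := by
      intro i j hij x hx hx'
      simp only [Finset.mem_insert, Finset.mem_singleton] at hx hx'
      have hij' : i.1 ≠ j.1 := fun hc => hij (Fin.ext hc)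
      rcases hx with h1 | h1 <;> rcases hx' with h2 | h2 <;>
      · rw [h1] at h2
        have h3 := congrArg Fin.val (e.injective h2)
        simp only [hAdef, hBdef, Fin.val_mk] at h3
        omega
    have hg : ∀ i : Fin k, Measurable (Function.uncurry
        (fun (x y : ℝ) => Real.exp (θ * (k:ℝ)⁻¹ * ((x - y) ^ 2 / 2)))) := by
      intro i
      apply Measurable.exp
      apply Measurable.const_mul
      exact ((measurable_fst.sub measurable_snd).pow_const 2).div_const 2
    have hfac := integral_prod_pairs μ Z hmeas hindep
      (fun i => e (A i)) (fun i => e (B i)) hdisj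
      (fun _ x y => Real.exp (θ * (k:ℝ)⁻¹ * ((x - y) ^ 2 / 2))) hg Finset.univ
    rw [hptw, hfac]
    have hfactor : ∀ i : Fin k,
        ∫ ω, Real.exp (θ * (k:ℝ)⁻¹ * ((Z (e (A i)) ω - Z (e (B i)) ω) ^ 2 / 2)) ∂μ
          ≤ Real.exp ((Δ / M) * (Real.exp (θ * (k:ℝ)⁻¹ * M) - 1)) := by
      intro i
      have hne : e (A i) ≠ e (B i) := fun hc => hAB i (e.injective hc)
      have hmean := pair_mean μ hN Z hmeas hval hindep hident hΔ hne
      have := pair_mgf_le hab hmeas hval hmean (θ * (k:ℝ)⁻¹)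
      rw [← hMdef] at this
      exact this
    calc ∏ i : Fin k, ∫ ω, Real.exp (θ * (k:ℝ)⁻¹ *
            ((Z (e (A i)) ω - Z (e (B i)) ω) ^ 2 / 2)) ∂μ
        ≤ ∏ _i : Fin k, Real.exp ((Δ / M) * (Real.exp (θ * (k:ℝ)⁻¹ * M) - 1)) := by
          apply Finset.prod_le_prod
          · intro i _
            exact integral_nonneg fun ω => (Real.exp_pos _).le
          · intro i _
            exact hfactor i
      _ = Real.exp ((k:ℝ) * ((Δ / M) * (Real.exp (θ * (k:ℝ)⁻¹ * M) - 1))) := by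
          rw [Finset.prod_const, Finset.card_univ, Fintype.card_fin,
            ← Real.exp_nat_mul]
  -- assemble
  have hmgf : mgf Δhat μ θ = ∫ ω, Real.exp (θ * Δhat ω) ∂μ := rfl
  rw [hmgf]
  have hintsum : Integrable (fun ω => (Nat.factorial N : ℝ)⁻¹ *
      ∑ e : Equiv.Perm (Fin N), Real.exp (θ * f e ω)) μ :=
    (integrable_finset_sum _ fun e _ => hint_f e).const_mul _
  calc ∫ ω, Real.exp (θ * Δhat ω) ∂μ
      ≤ ∫ ω, (Nat.factorial N : ℝ)⁻¹ *
          ∑ e : Equiv.Perm (Fin N), Real.exp (θ * f e ω) ∂μ :=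
        integral_mono hint_Δ hintsum hconv
    _ = (Nat.factorial N : ℝ)⁻¹ *
          ∑ e : Equiv.Perm (Fin N), ∫ ω, Real.exp (θ * f e ω) ∂μ := by
        rw [integral_const_mul, integral_finset_sum _ fun e _ => hint_f e]
    _ ≤ (Nat.factorial N : ℝ)⁻¹ * ∑ _e : Equiv.Perm (Fin N),
          Real.exp ((k:ℝ) * ((Δ / M) * (Real.exp (θ * (k:ℝ)⁻¹ * M) - 1))) := by
        apply mul_le_mul_of_nonneg_left _ (by positivity)
        exact Finset.sum_le_sum fun e _ => hperm e
    _ = Real.exp ((k:ℝ) * ((Δ / M) * (Real.exp (θ * (k:ℝ)⁻¹ * M) - 1))) := by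
        rw [Finset.sum_const, Finset.card_univ, Fintype.card_perm, Fintype.card_fin,
          nsmul_eq_mul, ← mul_assoc, inv_mul_cancel₀ (ne_of_gt hNfacR), one_mul]

/-- for `Z₁,…,Z_N` (`N ≥ 2`) i.i.d. random variables with values in a compact
interval `[a,b]`, `a < b`, `Δ = Var(Z₁) > 0`, `Δ̂` the empirical variance, `ε > 0` and
`γ = (1+ε)^{1/2} − 1`, one has
`P(Δ̂/Δ > 1 + ε) ≤ exp(−(N−1)Δγ²/(2(b−a)²))` and the same bound for
`P(Δ̂/Δ < 1 − ε)`. -/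
theorem ratio_empirical_variance_bound {Ω : Type*} [MeasurableSpace Ω] (μ : Measure Ω)
    [IsProbabilityMeasure μ]
    (N : ℕ) (hN : 2 ≤ N) (a b : ℝ) (hab : a < b) (Z : Fin N → Ω → ℝ)
    (hmeas : ∀ n, Measurable (Z n))
    (hval : ∀ n ω, Z n ω ∈ Set.Icc a b)
    (hindep : iIndepFun Z μ)
    (hident : ∀ m n, IdentDistrib (Z m) (Z n) μ μ)
    (Δ : ℝ) (hΔ : Δ = variance (Z ⟨0, by omega⟩) μ) (hΔpos : 0 < Δ)
    (Δhat : Ω → ℝ)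
    (hΔhat : ∀ ω, Δhat ω =
      ((N : ℝ) - 1)⁻¹ * ∑ n, (Z n ω - (N : ℝ)⁻¹ * ∑ m, Z m ω) ^ 2)
    (ε γ : ℝ) (hε : 0 < ε) (hγ : γ = Real.sqrt (1 + ε) - 1) :
    μ {ω | 1 + ε < Δhat ω / Δ}
        ≤ ENNReal.ofReal (Real.exp (-(((N : ℝ) - 1) * Δ * γ ^ 2 / (2 * (b - a) ^ 2)))) ∧
      μ {ω | Δhat ω / Δ < 1 - ε}
        ≤ ENNReal.ofReal (Real.exp (-(((N : ℝ) - 1) * Δ * γ ^ 2 / (2 * (b - a) ^ 2)))) := by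
  classical
  set M : ℝ := (b - a) ^ 2 / 2 with hMdef
  have hM : 0 < M := by
    have : 0 < b - a := by linarith
    rw [hMdef]; positivity
  set k : ℕ := N / 2 with hkdef
  have hk1 : 1 ≤ k := by omega
  have hk2 : N ≤ 2 * k + 1 := by omega
  have hkR : (0:ℝ) < (k:ℝ) := by exact_mod_cast hk1
  have hNk : ((N:ℝ) - 1) ≤ 2 * (k:ℝ) := by
    have h2 : (N:ℝ) ≤ 2 * (k:ℝ) + 1 := by exact_mod_cast hk2
    linarith
  have hN1R : (1:ℝ) ≤ (N:ℝ) - 1 := by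
    have : (2:ℝ) ≤ (N:ℝ) := by exact_mod_cast hN
    linarith
  clear_value M k
  -- facts on γ
  have h1ε : (0:ℝ) < 1 + ε := by linarith
  have hsq : Real.sqrt (1 + ε) ^ 2 = 1 + ε := Real.sq_sqrt h1ε.le
  have hγ1 : 1 + γ = Real.sqrt (1 + ε) := by rw [hγ]; ring
  have hγsq : (1 + γ) ^ 2 = 1 + ε := by rw [hγ1]; exact hsq
  have hγpos : 0 < γ := by
    have h2 : Real.sqrt 1 < Real.sqrt (1 + ε) := Real.sqrt_lt_sqrt (by norm_num) (by linarith)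
    rw [Real.sqrt_one] at h2
    rw [hγ]; linarith
  have hγle : γ ≤ ε := by nlinarith [hγsq, hγpos]
  have hγ2ε2 : γ ^ 2 ≤ ε ^ 2 := pow_le_pow_left₀ hγpos.le hγle 2
  -- measurability / integrability of Δhat
  set K := max |a| |b| with hKdef
  have hK : ∀ (p : Fin N) ω, |Z p ω| ≤ K := by
    intro p ω
    obtain ⟨h1, h2⟩ := hval p ω
    rw [abs_le]
    refine ⟨?_, ?_⟩
    · calc -K ≤ -|a| := by simp [hKdef]
        _ ≤ a := neg_abs_le a
        _ ≤ Z p ω := h1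
    · calc Z p ω ≤ b := h2
        _ ≤ |b| := le_abs_self b
        _ ≤ K := le_max_right _ _
  have hK0 : 0 ≤ K := (abs_nonneg a).trans (le_max_left _ _)
  have hΔmeas : Measurable Δhat := by
    have : Δhat = fun ω => ((N : ℝ) - 1)⁻¹ * ∑ n, (Z n ω - (N : ℝ)⁻¹ * ∑ m, Z m ω) ^ 2 :=
      funext hΔhat
    rw [this]
    apply Measurable.const_mul
    apply Finset.measurable_sum
    intro n _
    exact ((hmeas n).sub ((Finset.measurable_sum _ fun m _ => hmeas m).const_mul _)).pow_const 2
  have hΔbdd : ∀ ω, |Δhat ω| ≤ ((N:ℝ) - 1)⁻¹ * ((N:ℝ) * (2 * K) ^ 2) := by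
    intro ω
    have hN1 : (0:ℝ) < (N:ℝ) - 1 := by
      have : (2:ℝ) ≤ (N:ℝ) := by exact_mod_cast hN
      linarith
    have hNpos : (0:ℝ) < (N:ℝ) := by positivity
    have hterm : ∀ n : Fin N, (Z n ω - (N : ℝ)⁻¹ * ∑ m, Z m ω) ^ 2 ≤ (2 * K) ^ 2 := by
      intro n
      have hsum : |(N : ℝ)⁻¹ * ∑ m, Z m ω| ≤ K := by
        rw [abs_mul, abs_of_nonneg (by positivity : (0:ℝ) ≤ (N:ℝ)⁻¹)]
        calc (N:ℝ)⁻¹ * |∑ m, Z m ω| ≤ (N:ℝ)⁻¹ * ((N:ℝ) * K) := by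
              apply mul_le_mul_of_nonneg_left _ (by positivity)
              calc |∑ m, Z m ω| ≤ ∑ m, |Z m ω| := Finset.abs_sum_le_sum_abs _ _
                _ ≤ ∑ _m : Fin N, K := Finset.sum_le_sum fun m _ => hK m ω
                _ = (N:ℝ) * K := by
                    rw [Finset.sum_const, Finset.card_univ, Fintype.card_fin, nsmul_eq_mul]
          _ = K := by field_simp
      have habs : |Z n ω - (N : ℝ)⁻¹ * ∑ m, Z m ω| ≤ 2 * K := by
        calc |Z n ω - (N : ℝ)⁻¹ * ∑ m, Z m ω| ≤ |Z n ω| + |(N : ℝ)⁻¹ * ∑ m, Z m ω| :=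
            abs_sub _ _
          _ ≤ K + K := add_le_add (hK n ω) hsum
          _ = 2 * K := by ring
      calc (Z n ω - (N : ℝ)⁻¹ * ∑ m, Z m ω) ^ 2
          = |Z n ω - (N : ℝ)⁻¹ * ∑ m, Z m ω| ^ 2 := (sq_abs _).symm
        _ ≤ (2 * K) ^ 2 := pow_le_pow_left₀ (abs_nonneg _) habs 2
    rw [hΔhat ω, abs_mul, abs_of_nonneg (by positivity : (0:ℝ) ≤ ((N:ℝ) - 1)⁻¹)]
    apply mul_le_mul_of_nonneg_left _ (by positivity)
    rw [abs_of_nonneg (Finset.sum_nonneg fun n _ => sq_nonneg _)]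
    calc ∑ n, (Z n ω - (N : ℝ)⁻¹ * ∑ m, Z m ω) ^ 2
        ≤ ∑ _n : Fin N, (2 * K) ^ 2 := Finset.sum_le_sum fun n _ => hterm n
      _ = (N:ℝ) * (2 * K) ^ 2 := by
          rw [Finset.sum_const, Finset.card_univ, Fintype.card_fin, nsmul_eq_mul]
  have hint_exp : ∀ t : ℝ, Integrable (fun ω => Real.exp (t * Δhat ω)) μ := by
    intro t
    set D := ((N:ℝ) - 1)⁻¹ * ((N:ℝ) * (2 * K) ^ 2) with hD
    apply bdd_integrable ((hΔmeas.const_mul t).exp) (Real.exp (|t| * D))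
    intro ω
    rw [abs_of_pos (Real.exp_pos _), Real.exp_le_exp]
    calc t * Δhat ω ≤ |t * Δhat ω| := le_abs_self _
      _ = |t| * |Δhat ω| := abs_mul _ _
      _ ≤ |t| * D := mul_le_mul_of_nonneg_left (hΔbdd ω) (abs_nonneg t)
  have hMne : M ≠ 0 := ne_of_gt hM
  have hkne : (k:ℝ) ≠ 0 := ne_of_gt hkR
  have Etarget : (0:ℝ) < Real.exp (-(((N : ℝ) - 1) * Δ * γ ^ 2 / (2 * (b - a) ^ 2))) :=
    Real.exp_pos _
  have h2M : 2 * (b - a) ^ 2 = 4 * M := by rw [hMdef]; ring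
  constructor
  · -- upper tail
    set L := Real.log (1 + γ) with hL
    have hLpos : 0 ≤ L := Real.log_nonneg (by linarith)
    set θ : ℝ := (k:ℝ) / M * L with hθ
    have hθ0 : 0 ≤ θ := by positivity
    have harg : θ * ((k:ℝ))⁻¹ * M = L := by rw [hθ]; field_simp
    have hmgf := mgf_master μ hN hab Z hmeas hval hindep hident hΔ Δhat hΔhat θ
    rw [← hMdef, ← hkdef, harg] at hmgf
    have hexpL : Real.exp L = 1 + γ := Real.exp_log (by linarith)
    have hch := measure_ge_le_exp_mul_mgf (μ := μ) (X := Δhat) ((1 + ε) * Δ) hθ0 (hint_exp θ)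
    have hchain : (μ {ω | (1 + ε) * Δ ≤ Δhat ω}).toReal
        ≤ Real.exp (-(((N : ℝ) - 1) * Δ * γ ^ 2 / (2 * (b - a) ^ 2))) := by
      calc (μ {ω | (1 + ε) * Δ ≤ Δhat ω}).toReal
          ≤ Real.exp (-θ * ((1 + ε) * Δ)) * mgf Δhat μ θ := hch
        _ ≤ Real.exp (-θ * ((1 + ε) * Δ)) *
              Real.exp ((k:ℝ) * ((Δ / M) * (Real.exp L - 1))) :=
            mul_le_mul_of_nonneg_left hmgf (Real.exp_pos _).le
        _ = Real.exp (-θ * ((1 + ε) * Δ) + (k:ℝ) * ((Δ / M) * (Real.exp L - 1))) :=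
            (Real.exp_add _ _).symm
        _ ≤ Real.exp (-(((N : ℝ) - 1) * Δ * γ ^ 2 / (2 * (b - a) ^ 2))) := by
            rw [Real.exp_le_exp, hexpL]
            have hstep : γ - (1 + ε) * L ≤ -γ ^ 2 / 2 := by
              have := log_ineq hγpos.le
              rw [← hγsq]
              linarith
            have heq1 : -θ * ((1 + ε) * Δ) + (k:ℝ) * ((Δ / M) * (1 + γ - 1))
                = ((k:ℝ) * Δ / M) * (γ - (1 + ε) * L) := by
              rw [hθ]; field_simp; ring
            rw [heq1, h2M]
            calc ((k:ℝ) * Δ / M) * (γ - (1 + ε) * L)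
                ≤ ((k:ℝ) * Δ / M) * (-γ ^ 2 / 2) :=
                  mul_le_mul_of_nonneg_left hstep (by positivity)
              _ ≤ -(((N : ℝ) - 1) * Δ * γ ^ 2 / (4 * M)) := by
                  rw [← sub_nonneg]
                  have hid : -(((N:ℝ) - 1) * Δ * γ ^ 2 / (4 * M))
                      - ((k:ℝ) * Δ / M) * (-γ ^ 2 / 2)
                      = (Δ * γ ^ 2 / (4 * M)) * (2 * (k:ℝ) - ((N:ℝ) - 1)) := by
                    field_simp
                    ring
                  rw [hid]
                  apply mul_nonneg (by positivity) (by linarith)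
    have hsub : {ω | 1 + ε < Δhat ω / Δ} ⊆ {ω | (1 + ε) * Δ ≤ Δhat ω} := by
      intro ω hω
      simp only [Set.mem_setOf_eq] at hω ⊢
      have := (lt_div_iff₀ hΔpos).1 hω
      linarith
    calc μ {ω | 1 + ε < Δhat ω / Δ} ≤ μ {ω | (1 + ε) * Δ ≤ Δhat ω} := by
          apply measure_mono hsub
      _ ≤ ENNReal.ofReal (Real.exp (-(((N : ℝ) - 1) * Δ * γ ^ 2 / (2 * (b - a) ^ 2)))) := by
          rw [ENNReal.le_ofReal_iff_toReal_le (measure_ne_top μ _) Etarget.le]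
          exact hchain
  · -- lower tail
    set θ : ℝ := -(ε * (k:ℝ) / M) with hθ
    have hθ0 : θ ≤ 0 := by
      rw [hθ]
      have : 0 ≤ ε * (k:ℝ) / M := by positivity
      linarith
    have harg : θ * ((k:ℝ))⁻¹ * M = -ε := by rw [hθ]; field_simp
    have hmgf := mgf_master μ hN hab Z hmeas hval hindep hident hΔ Δhat hΔhat θ
    rw [← hMdef, ← hkdef, harg] at hmgf
    have hch := measure_le_le_exp_mul_mgf (μ := μ) (X := Δhat) ((1 - ε) * Δ) hθ0 (hint_exp θ)
    have hchain : (μ {ω | Δhat ω ≤ (1 - ε) * Δ}).toReal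
        ≤ Real.exp (-(((N : ℝ) - 1) * Δ * γ ^ 2 / (2 * (b - a) ^ 2))) := by
      calc (μ {ω | Δhat ω ≤ (1 - ε) * Δ}).toReal
          ≤ Real.exp (-θ * ((1 - ε) * Δ)) * mgf Δhat μ θ := hch
        _ ≤ Real.exp (-θ * ((1 - ε) * Δ)) *
              Real.exp ((k:ℝ) * ((Δ / M) * (Real.exp (-ε) - 1))) :=
            mul_le_mul_of_nonneg_left hmgf (Real.exp_pos _).le
        _ = Real.exp (-θ * ((1 - ε) * Δ) + (k:ℝ) * ((Δ / M) * (Real.exp (-ε) - 1))) :=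
            (Real.exp_add _ _).symm
        _ ≤ Real.exp (-(((N : ℝ) - 1) * Δ * γ ^ 2 / (2 * (b - a) ^ 2))) := by
            rw [Real.exp_le_exp, h2M]
            have hexpneg : Real.exp (-ε) - 1 ≤ -ε + ε ^ 2 / 2 := by
              have := exp_neg_le hε.le
              linarith
            calc -θ * ((1 - ε) * Δ) + (k:ℝ) * ((Δ / M) * (Real.exp (-ε) - 1))
                ≤ -θ * ((1 - ε) * Δ) + (k:ℝ) * ((Δ / M) * (-ε + ε ^ 2 / 2)) := by
                  apply add_le_add_right
                  apply mul_le_mul_of_nonneg_left _ (by positivity)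
                  exact mul_le_mul_of_nonneg_left hexpneg (by positivity)
              _ = (-((k:ℝ) * Δ * ε ^ 2 / 2)) / M := by rw [hθ]; field_simp; ring
              _ ≤ -(((N : ℝ) - 1) * Δ * γ ^ 2 / (4 * M)) := by
                  rw [← sub_nonneg]
                  have hid : -(((N:ℝ) - 1) * Δ * γ ^ 2 / (4 * M))
                      - (-((k:ℝ) * Δ * ε ^ 2 / 2)) / M
                      = (Δ / (4 * M)) * (2 * (k:ℝ) * ε ^ 2 - ((N:ℝ) - 1) * γ ^ 2) := by
                    field_simp
                    ring
                  rw [hid]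
                  apply mul_nonneg (by positivity)
                  have h1 : ((N:ℝ) - 1) * γ ^ 2 ≤ ((N:ℝ) - 1) * ε ^ 2 :=
                    mul_le_mul_of_nonneg_left hγ2ε2 (by linarith)
                  have h2 : ((N:ℝ) - 1) * ε ^ 2 ≤ 2 * (k:ℝ) * ε ^ 2 :=
                    mul_le_mul_of_nonneg_right hNk (sq_nonneg ε)
                  linarith
    have hsub : {ω | Δhat ω / Δ < 1 - ε} ⊆ {ω | Δhat ω ≤ (1 - ε) * Δ} := by
      intro ω hω
      simp only [Set.mem_setOf_eq] at hω ⊢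
      have := (div_lt_iff₀ hΔpos).1 hω
      linarith
    calc μ {ω | Δhat ω / Δ < 1 - ε} ≤ μ {ω | Δhat ω ≤ (1 - ε) * Δ} := by
          apply measure_mono hsub
      _ ≤ ENNReal.ofReal (Real.exp (-(((N : ℝ) - 1) * Δ * γ ^ 2 / (2 * (b - a) ^ 2)))) := by
          rw [ENNReal.le_ofReal_iff_toReal_le (measure_ne_top μ _) Etarget.le]
          exact hchain
end

section
/- Let s ≥ 1, let f : [0,1]ˢ → ℝ be Lipschitz with constant L with respect to the Euclidean norm, and let k ≥ 2, N = kˢ. Let C₁,…,C_N be the N subcubes of edge length 1/k partitioning [0,1]ˢ, and let Î_Haber = (1/N)∑ₙ f(Xₙ) with Xₙ independent, Xₙ uniform on Cₙ. Then E[Î_Haber] = ∫_{[0,1]ˢ} f(x)dx and Var[Î_Haber] ≤ (L²s/12)·N^{−1−2/s}; in particular RMSE(Î_Haber) ≤ L·(s/12)^{1/2}·N^{−1/2−1/s}. -/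
open MeasureTheory ProbabilityTheory

noncomputable section

/-- The subcube of edge length `1/k` indexed by `m : Fin s → Fin k`,
namely `∏ᵢ [mᵢ/k, (mᵢ+1)/k]`. -/
def subCube {s : ℕ} (k : ℕ) (m : Fin s → Fin k) : Set (Fin s → ℝ) :=
  Set.Icc (fun i => (m i : ℝ) / k) (fun i => ((m i : ℝ) + 1) / k)

/-- Law of one independent uniform point in each of the `k^s` subcubes. -/
def haberMeasure (s k : ℕ) : Measure ((Fin s → Fin k) → (Fin s → ℝ)) :=
  Measure.pi fun m => unif (subCube k m)

/-- Haber's estimator of order one. -/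
def haberEst {s : ℕ} (k : ℕ) (f : (Fin s → ℝ) → ℝ) : ((Fin s → Fin k) → (Fin s → ℝ)) → ℝ :=
  fun ω => (∑ m : Fin s → Fin k, f (ω m)) / (k ^ s : ℕ)

/-! ### Auxiliary lemmas -/

open Set Function

section helpers
variable {ι : Type*} [Fintype ι] {α : ι → Type*} [∀ i, MeasurableSpace (α i)]
  (μ : ∀ i, Measure (α i)) [∀ i, IsProbabilityMeasure (μ i)]

lemma my_pi_eval_preimage [DecidableEq ι] (i : ι) (A : Set (α i)) :
    Measure.pi μ (Function.eval i ⁻¹' A) = μ i A := by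
  rw [← Set.univ_pi_update_univ, Measure.pi_pi]
  refine (Fintype.prod_eq_single i (fun j hj => ?_)).trans (by rw [Function.update_self])
  rw [Function.update_of_ne hj]; exact measure_univ

lemma my_map_eval_pi [DecidableEq ι] (i : ι) :
    (Measure.pi μ).map (Function.eval i) = μ i := by
  ext A hA
  rw [Measure.map_apply (measurable_pi_apply i) hA, my_pi_eval_preimage]

lemma my_eval_inter [DecidableEq ι] {i j : ι} (hij : i ≠ j) (A : Set (α i)) (B : Set (α j)) :
    Measure.pi μ (Function.eval i ⁻¹' A ∩ Function.eval j ⁻¹' B) = μ i A * μ j B := by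
  have h : Function.eval i ⁻¹' A ∩ Function.eval j ⁻¹' B
      = Set.pi univ (Function.update (Function.update (fun _ => univ) i A) j B) := by
    ext x
    simp only [Set.mem_inter_iff, Set.mem_preimage, Set.mem_pi, Set.mem_univ, true_implies]
    constructor
    · rintro ⟨hxA, hxB⟩ l
      rcases eq_or_ne l j with rfl | hlj
      · rw [Function.update_self]; exact hxB
      rcases eq_or_ne l i with rfl | hli
      · rw [Function.update_of_ne hij, Function.update_self]; exact hxA
      · simp [Function.update_of_ne hlj, Function.update_of_ne hli]
    · intro h
      refine ⟨?_, ?_⟩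
      · have := h i; rwa [Function.update_of_ne hij, Function.update_self] at this
      · have := h j; rwa [Function.update_self] at this
  rw [h, Measure.pi_pi]
  rw [Fintype.prod_eq_mul i j hij (fun c hc => by
    rw [Function.update_of_ne hc.2, Function.update_of_ne hc.1]; exact measure_univ)]
  rw [Function.update_of_ne hij, Function.update_self, Function.update_self]

lemma my_indepFun_eval [DecidableEq ι] {i j : ι} (hij : i ≠ j) :
    IndepFun (Function.eval i) (Function.eval j) (Measure.pi μ) := by
  rw [indepFun_iff_measure_inter_preimage_eq_mul]
  intro A B hA hB
  rw [my_eval_inter μ hij, my_pi_eval_preimage, my_pi_eval_preimage]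

lemma my_integral_eval [DecidableEq ι] (i : ι) (F : α i → ℝ)
    (hF : AEStronglyMeasurable F (μ i)) :
    ∫ x, F (x i) ∂(Measure.pi μ) = ∫ t, F t ∂(μ i) := by
  have hm : Measure.map (Function.eval i) (Measure.pi μ) = μ i := my_map_eval_pi μ i
  have h := integral_map (φ := Function.eval i) (f := F)
      (measurable_pi_apply i).aemeasurable (by rw [hm]; exact hF)
  rw [hm] at h
  exact h.symm

end helpers

section var
variable {Ω : Type*} [MeasurableSpace Ω] {μ : Measure Ω}

lemma my_variance_congr {X Y : Ω → ℝ} (h : X =ᵐ[μ] Y) : variance X μ = variance Y μ := by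
  have hI : μ[X] = μ[Y] := integral_congr_ae h
  unfold ProbabilityTheory.variance ProbabilityTheory.evariance
  rw [hI]
  refine congrArg _ (lintegral_congr_ae ?_)
  filter_upwards [h] with ω hω
  rw [hω]

lemma my_variance_le {X : Ω → ℝ} [IsProbabilityMeasure μ] (hX : MemLp X 2 μ) (c : ℝ) :
    variance X μ ≤ ∫ ω, (X ω - c) ^ 2 ∂μ := by
  have h1 : Integrable X μ := hX.integrable one_le_two
  have h2 : Integrable (fun ω => X ω ^ 2) μ := hX.integrable_sq
  have key : ∫ ω, (X ω - c) ^ 2 ∂μ = (∫ ω, X ω ^ 2 ∂μ) - 2 * c * (∫ ω, X ω ∂μ) + c ^ 2 := by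
    have e : (fun ω => (X ω - c) ^ 2) = fun ω => (X ω ^ 2 - 2 * c * X ω) + c ^ 2 := by
      funext ω; ring
    have hint : Integrable (fun ω => X ω ^ 2 - 2 * c * X ω) μ := h2.sub (h1.const_mul (2 * c))
    rw [e, integral_add hint (integrable_const (c ^ 2)),
      integral_sub h2 (h1.const_mul (2 * c)), integral_const_mul, integral_const]
    simp [measure_univ]
  have hv : variance X μ = (∫ ω, X ω ^ 2 ∂μ) - (∫ ω, X ω ∂μ) ^ 2 := by
    rw [variance_eq_sub hX]; rfl
  rw [hv, key]
  nlinarith [sq_nonneg ((∫ ω, X ω ∂μ) - c)]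

end var

section cubes
variable {s k : ℕ}

lemma oneD_prob {α β : ℝ} (h : α < β) : IsProbabilityMeasure ((volume : Measure ℝ)[|Icc α β]) := by
  apply cond_isProbabilityMeasure_of_finite <;>
    simp [Real.volume_Icc, ENNReal.ofReal_eq_zero, not_le, sub_pos, h]

lemma unif_Icc_pi (a b : Fin s → ℝ) (hab : ∀ i, a i < b i) :
    unif (Set.Icc a b) = Measure.pi (fun i => ((volume : Measure ℝ)[|Set.Icc (a i) (b i)])) := by
  haveI : ∀ i, IsProbabilityMeasure ((volume : Measure ℝ)[|Set.Icc (a i) (b i)]) :=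
    fun i => oneD_prob (hab i)
  refine (Measure.pi_eq fun t ht => ?_).symm
  rw [unif, cond_apply measurableSet_Icc, ← Set.pi_univ_Icc, ← Set.pi_inter_distrib,
    volume_pi_pi, volume_pi_pi, ENNReal.prod_inv_distrib, ← Finset.prod_mul_distrib]
  · exact Finset.prod_congr rfl fun i _ => (cond_apply measurableSet_Icc _ _).symm
  · exact fun i _ j _ _ => Or.inr (by simp [Real.volume_Icc])

lemma integral_sub_mid_sq {α β : ℝ} (h : α < β) :
    ∫ t, (t - (α + β) / 2) ^ 2 ∂((volume : Measure ℝ)[|Icc α β]) = (β - α) ^ 2 / 12 := by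
  have h0 : (volume : Measure ℝ)[|Icc α β]
      = (volume (Icc α β))⁻¹ • (volume : Measure ℝ).restrict (Icc α β) := rfl
  rw [h0, integral_smul_measure]
  have h1 : ∫ t in Icc α β, (t - (α + β) / 2) ^ 2 ∂(volume : Measure ℝ)
      = ((β - (α + β) / 2) ^ 3 - (α - (α + β) / 2) ^ 3) / 3 := by
    rw [integral_Icc_eq_integral_Ioc, ← intervalIntegral.integral_of_le h.le,
      intervalIntegral.integral_comp_sub_right (fun x => x ^ 2) ((α + β) / 2),
      integral_pow]
    norm_num
  have hne : β - α ≠ 0 := sub_ne_zero.mpr h.ne'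
  have h2 : ((β - (α + β) / 2) ^ 3 - (α - (α + β) / 2) ^ 3) / 3 = (β - α) ^ 3 / 12 := by ring
  rw [h1, h2, Real.volume_Icc, ← ENNReal.ofReal_inv_of_pos (by linarith), ENNReal.toReal_ofReal
    (inv_nonneg.2 (by linarith)), smul_eq_mul]
  field_simp

lemma subCube_subset (hk : 0 < k) (m : Fin s → Fin k) : subCube k m ⊆ unitCube s := by
  intro x hx
  constructor
  · intro i
    have h1 := hx.1 i
    have hk' : (0:ℝ) < k := by exact_mod_cast hk
    have : (0:ℝ) ≤ (m i : ℝ) / k := by positivity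
    exact le_trans this h1
  · intro i
    have h2 := hx.2 i
    have hk' : (0:ℝ) < k := by exact_mod_cast hk
    have hmi : ((m i : ℝ) + 1) ≤ k := by exact_mod_cast (m i).2
    calc x i ≤ ((m i : ℝ) + 1) / k := h2
    _ ≤ (k : ℝ) / k := by gcongr
    _ = 1 := div_self hk'.ne'

lemma iUnion_Ico_cubes (hk : 0 < k) :
    (⋃ m : Fin s → Fin k, Set.pi univ fun i => Ico ((m i : ℝ) / k) (((m i : ℝ) + 1) / k))
      = Set.pi univ fun _ => Ico (0 : ℝ) 1 := by
  have hk' : (0:ℝ) < k := by exact_mod_cast hk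
  ext x
  simp only [Set.mem_iUnion, Set.mem_pi, Set.mem_univ, true_implies, Set.mem_Ico]
  constructor
  · rintro ⟨m, hm⟩ i
    obtain ⟨h1, h2⟩ := hm i
    have hmi : ((m i : ℝ) + 1) ≤ k := by exact_mod_cast (m i).2
    constructor
    · exact le_trans (by positivity) h1
    · exact lt_of_lt_of_le h2 (by rw [div_le_one hk']; exact hmi)
  · intro hx
    refine ⟨fun i => ⟨⌊x i * k⌋₊, ?_⟩, fun i => ?_⟩
    · rw [Nat.floor_lt (by nlinarith [(hx i).1])]
      nlinarith [(hx i).2]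
    · constructor
      · rw [div_le_iff₀ hk']
        exact Nat.floor_le (by nlinarith [(hx i).1])
      · rw [lt_div_iff₀ hk']
        exact Nat.lt_floor_add_one _

lemma sum_restrict_subCube (hk : 0 < k) :
    (∑ m : Fin s → Fin k, (volume : Measure (Fin s → ℝ)).restrict (subCube k m))
      = (volume : Measure (Fin s → ℝ)).restrict (unitCube s) := by
  classical
  have hvol : (volume : Measure (Fin s → ℝ)) = Measure.pi fun _ => (volume : Measure ℝ) :=
    volume_pi
  have hIcoIcc : ∀ (a b : Fin s → ℝ),
      (Set.pi univ fun i => Ico (a i) (b i)) =ᵐ[(volume : Measure (Fin s → ℝ))] Set.Icc a b := by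
    intro a b
    rw [hvol]
    exact Measure.univ_pi_Ico_ae_eq_Icc
  ext A hA
  rw [Measure.restrict_apply hA, Measure.finset_sum_apply]
  have hterm : ∀ m : Fin s → Fin k,
      (volume : Measure (Fin s → ℝ)).restrict (subCube k m) A
        = volume (A ∩ Set.pi univ fun i => Ico ((m i : ℝ) / k) (((m i : ℝ) + 1) / k)) := by
    intro m
    rw [Measure.restrict_apply hA]
    refine measure_congr (ae_eq_set_inter (Filter.EventuallyEq.refl _ _) ?_).symm
    exact hIcoIcc _ _
  simp_rw [hterm]
  have hdisj : Pairwise (Function.onFun Disjoint fun m : Fin s → Fin k =>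
      A ∩ Set.pi univ fun i => Ico ((m i : ℝ) / k) (((m i : ℝ) + 1) / k)) := by
    intro m m' hmm'
    obtain ⟨i, hi⟩ : ∃ i, m i ≠ m' i := by
      by_contra hc
      push_neg at hc
      exact hmm' (funext hc)
    refine Set.disjoint_left.2 fun x hx hx' => ?_
    have h1 := hx.2 i (mem_univ i)
    have h2 := hx'.2 i (mem_univ i)
    have hk' : (0:ℝ) < k := by exact_mod_cast hk
    rcases lt_or_gt_of_ne (fun h : (m i : ℕ) = (m' i : ℕ) => hi (Fin.ext h)) with hlt | hlt
    · have : ((m i : ℝ) + 1) ≤ (m' i : ℝ) := by exact_mod_cast hlt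
      have := h2.1
      have := h1.2
      have h3 : ((m i : ℝ) + 1) / k ≤ ((m' i : ℝ)) / k := by gcongr
      linarith
    · have : ((m' i : ℝ) + 1) ≤ (m i : ℝ) := by exact_mod_cast hlt
      have := h1.1
      have := h2.2
      have h3 : ((m' i : ℝ) + 1) / k ≤ ((m i : ℝ)) / k := by gcongr
      linarith
  rw [← tsum_fintype (L := SummationFilter.unconditional _), ← measure_iUnion hdisj
    (fun m => hA.inter (MeasurableSet.univ_pi fun i => measurableSet_Ico))]
  rw [← Set.inter_iUnion, iUnion_Ico_cubes hk]
  have h01 : (Set.pi univ fun _ : Fin s => Ico (0:ℝ) 1) =ᵐ[(volume : Measure (Fin s → ℝ))]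
      (unitCube s) := by
    have := hIcoIcc (fun _ => (0:ℝ)) (fun _ => (1:ℝ))
    simpa [unitCube, Set.pi_univ_Icc, Pi.zero_def, Pi.one_def] using this
  exact measure_congr (ae_eq_set_inter (Filter.EventuallyEq.refl _ _) h01)

end cubes

theorem haber_unbiased_and_var_le {s : ℕ} (hs : 1 ≤ s) (k : ℕ) (hk : 2 ≤ k)
    (L : ℝ) (f : (Fin s → ℝ) → ℝ)
    (hLip : ∀ x ∈ unitCube s, ∀ y ∈ unitCube s,
      |f x - f y| ≤ L * Real.sqrt (∑ i, (x i - y i) ^ 2)) :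
    (∫ ω, haberEst k f ω ∂(haberMeasure s k) = ∫ x in unitCube s, f x) ∧
      variance (haberEst k f) (haberMeasure s k)
        ≤ L ^ 2 * s / 12 * ((k : ℝ) ^ s) ^ (-(1 : ℝ) - 2 / s) ∧
      Real.sqrt (variance (haberEst k f) (haberMeasure s k))
        ≤ L * Real.sqrt (s / 12) * ((k : ℝ) ^ s) ^ (-(1 / 2 : ℝ) - 1 / s) := by
  classical
  have hk0 : 0 < k := by omega
  have hkR : (0:ℝ) < k := by exact_mod_cast hk0
  have hsR : (0:ℝ) < s := by exact_mod_cast hs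
  have hsne : (s:ℝ) ≠ 0 := hsR.ne'
  -- membership of 0 and 1
  have h0mem : (0 : Fin s → ℝ) ∈ unitCube s := ⟨le_refl _, fun i => zero_le_one⟩
  have h1mem : (1 : Fin s → ℝ) ∈ unitCube s := ⟨fun i => zero_le_one, le_refl _⟩
  -- L is nonnegative
  have hL : 0 ≤ L := by
    have h := hLip 0 h0mem 1 h1mem
    have hsum : (∑ i : Fin s, ((0 : Fin s → ℝ) i - (1 : Fin s → ℝ) i) ^ 2) = (s : ℝ) := by
      simp
    rw [hsum] at h
    have hsq : 0 < Real.sqrt s := Real.sqrt_pos.2 hsR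
    nlinarith [abs_nonneg (f 0 - f 1)]
  -- Lipschitz extension g of f
  have hlip' : LipschitzOnWith (Real.toNNReal (L * Real.sqrt s)) f (unitCube s) := by
    refine LipschitzOnWith.of_dist_le_mul fun x hx y hy => ?_
    rw [Real.dist_eq]
    have hsum_le : (∑ i, (x i - y i) ^ 2) ≤ (s : ℝ) * dist x y ^ 2 := by
      calc (∑ i, (x i - y i) ^ 2) ≤ ∑ _i : Fin s, dist x y ^ 2 := by
            refine Finset.sum_le_sum fun i _ => ?_
            have h1 : dist (x i) (y i) ≤ dist x y := dist_le_pi_dist x y i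
            rw [Real.dist_eq] at h1
            calc (x i - y i) ^ 2 = |x i - y i| ^ 2 := (sq_abs _).symm
            _ ≤ dist x y ^ 2 := by
                have := abs_nonneg (x i - y i)
                nlinarith [dist_nonneg (x := x) (y := y)]
      _ = (s : ℝ) * dist x y ^ 2 := by
            rw [Finset.sum_const, Finset.card_univ, Fintype.card_fin, nsmul_eq_mul]
    calc |f x - f y| ≤ L * Real.sqrt (∑ i, (x i - y i) ^ 2) := hLip x hx y hy
    _ ≤ L * (Real.sqrt s * dist x y) := by
        refine mul_le_mul_of_nonneg_left ?_ hL
        calc Real.sqrt (∑ i, (x i - y i) ^ 2) ≤ Real.sqrt ((s : ℝ) * dist x y ^ 2) :=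
              Real.sqrt_le_sqrt hsum_le
        _ = Real.sqrt s * dist x y := by
              rw [Real.sqrt_mul (le_of_lt hsR), Real.sqrt_sq dist_nonneg]
    _ ≤ Real.toNNReal (L * Real.sqrt s) * dist x y := by
        rw [← mul_assoc]
        exact mul_le_mul_of_nonneg_right (Real.le_coe_toNNReal _) dist_nonneg
  obtain ⟨g, hg, hfg⟩ := hlip'.extend_real
  have hgc : Continuous g := hg.continuous
  obtain ⟨Cb, hCb⟩ : ∃ C, ∀ x ∈ unitCube s, ‖g x‖ ≤ C :=
    (isCompact_Icc : IsCompact (unitCube s)).exists_bound_of_continuousOn hgc.continuousOn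
  -- probability structure
  have hab : ∀ m : Fin s → Fin k, ∀ i, (m i : ℝ)/k < ((m i : ℝ)+1)/k := by
    intro m i
    apply div_lt_div_of_pos_right ?_ hkR
    linarith
  have hpi : ∀ m : Fin s → Fin k, unif (subCube k m)
      = Measure.pi (fun i => ((volume : Measure ℝ)[|Set.Icc ((m i:ℝ)/k) (((m i:ℝ)+1)/k)])) :=
    fun m => unif_Icc_pi _ _ (hab m)
  haveI h1prob : ∀ (m : Fin s → Fin k) (i : Fin s),
      IsProbabilityMeasure ((volume : Measure ℝ)[|Set.Icc ((m i:ℝ)/k) (((m i:ℝ)+1)/k)]) :=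
    fun m i => oneD_prob (hab m i)
  haveI hcprob : ∀ m : Fin s → Fin k, IsProbabilityMeasure (unif (subCube k m)) := by
    intro m
    rw [hpi m]
    infer_instance
  haveI hPprob : IsProbabilityMeasure (haberMeasure s k) := by
    unfold haberMeasure; infer_instance
  -- marginals
  have hmap : ∀ m : Fin s → Fin k,
      (haberMeasure s k).map (Function.eval m) = unif (subCube k m) :=
    fun m => my_map_eval_pi _ m
  -- measurability of subcubes
  have hCmeas : ∀ m : Fin s → Fin k, MeasurableSet (subCube k m) :=
    fun m => measurableSet_Icc
  -- a.e. each coordinate is in its cube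
  have hae : ∀ᵐ ω ∂(haberMeasure s k), ∀ m, ω m ∈ subCube k m := by
    rw [ae_all_iff]
    intro m
    rw [ae_iff]
    have heq : {ω : (Fin s → Fin k) → (Fin s → ℝ) | ¬ ω m ∈ subCube k m}
        = Function.eval m ⁻¹' (subCube k m)ᶜ := rfl
    rw [heq]
    unfold haberMeasure
    rw [my_pi_eval_preimage]
    unfold unif
    rw [cond_apply (hCmeas m)]
    simp
  -- each cube sits in the unit cube
  have hsub : ∀ m : Fin s → Fin k, subCube k m ⊆ unitCube s := subCube_subset hk0
  -- cast of k^s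
  have hNval : ((k^s : ℕ) : ℝ) = (k:ℝ)^s := by push_cast; ring
  have hNpos : (0:ℝ) < (k:ℝ)^s := by positivity
  -- Memℒp of coordinates
  have hX2 : ∀ m : Fin s → Fin k, MemLp (fun ω => g (ω m)) 2 (haberMeasure s k) := by
    intro m
    refine MemLp.of_bound ((hgc.measurable.comp (measurable_pi_apply m)).aestronglyMeasurable)
      Cb ?_
    filter_upwards [hae] with ω hω
    exact hCb _ (hsub m (hω m))
  have hIg : ∀ m : Fin s → Fin k, Integrable (fun ω => g (ω m)) (haberMeasure s k) :=
    fun m => (hX2 m).integrable one_le_two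
  -- f and g agree a.e. for the estimator
  have hfg_ae : (haberEst k f) =ᵐ[haberMeasure s k] (haberEst k g) := by
    filter_upwards [hae] with ω hω
    unfold haberEst
    congr 1
    exact Finset.sum_congr rfl fun m _ => hfg (hsub m (hω m))
  -- integral of g over a subcube
  have hvol : ∀ m : Fin s → Fin k, volume (subCube k m) = ENNReal.ofReal (((k:ℝ))⁻¹ ^ s) := by
    intro m
    unfold subCube
    rw [Real.volume_Icc_pi]
    have he : ∀ i : Fin s, ((m i : ℝ)+1)/k - (m i:ℝ)/k = (k:ℝ)⁻¹ := by
      intro i; field_simp; ring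
    calc (∏ i : Fin s, ENNReal.ofReal (((m i : ℝ) + 1) / ↑k - ↑(m i) / ↑k))
        = ∏ _i : Fin s, ENNReal.ofReal ((k:ℝ)⁻¹) := by
          exact Finset.prod_congr rfl fun i _ => by rw [he i]
    _ = ENNReal.ofReal ((k:ℝ)⁻¹) ^ s := by
          rw [Finset.prod_const, Finset.card_univ, Fintype.card_fin]
    _ = ENNReal.ofReal (((k:ℝ))⁻¹ ^ s) := by
          rw [ENNReal.ofReal_pow (by positivity)]
  have hintegral_unif : ∀ m : Fin s → Fin k,
      ∫ x, g x ∂(unif (subCube k m)) = (k:ℝ)^s * ∫ x in subCube k m, g x := by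
    intro m
    rw [show unif (subCube k m)
        = (volume (subCube k m))⁻¹ • volume.restrict (subCube k m) from rfl,
      integral_smul_measure, hvol m]
    rw [← ENNReal.ofReal_inv_of_pos (by positivity), ENNReal.toReal_ofReal (by positivity)]
    rw [show (((k:ℝ)⁻¹ ^ s))⁻¹ = (k:ℝ)^s by rw [← inv_pow, inv_inv]]
    rfl
  have hXint : ∀ m : Fin s → Fin k,
      ∫ ω, g (ω m) ∂(haberMeasure s k) = ∫ x, g x ∂(unif (subCube k m)) := by
    intro m
    exact my_integral_eval (fun m' => unif (subCube k m')) m g hgc.aestronglyMeasurable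
  have hint_g_cube : ∀ m : Fin s → Fin k, IntegrableOn g (subCube k m) volume :=
    fun m => hgc.continuousOn.integrableOn_compact (isCompact_Icc : IsCompact (subCube k m))
  -- mean computation
  have hmean : ∫ ω, haberEst k g ω ∂(haberMeasure s k) = ∫ x in unitCube s, g x := by
    have e1 : ∫ ω, haberEst k g ω ∂(haberMeasure s k)
        = (∑ m : Fin s → Fin k, ∫ ω, g (ω m) ∂(haberMeasure s k)) / ((k^s : ℕ) : ℝ) := by
      unfold haberEst
      rw [integral_div, integral_finset_sum _ (fun m _ => hIg m)]
    rw [e1, hNval]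
    have e2 : (∑ m : Fin s → Fin k, ∫ ω, g (ω m) ∂(haberMeasure s k))
        = (k:ℝ)^s * ∑ m : Fin s → Fin k, ∫ x in subCube k m, g x := by
      rw [Finset.mul_sum]
      exact Finset.sum_congr rfl fun m _ => by rw [hXint m, hintegral_unif m]
    rw [e2, mul_comm, mul_div_assoc, div_self hNpos.ne', mul_one]
    rw [← integral_finset_sum_measure (fun m _ => hint_g_cube m), sum_restrict_subCube hk0]
  have hmean_f : ∫ ω, haberEst k f ω ∂(haberMeasure s k) = ∫ x in unitCube s, f x := by
    rw [integral_congr_ae hfg_ae, hmean]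
    exact setIntegral_congr_fun measurableSet_Icc fun x hx => (hfg hx).symm
  -- variance of each coordinate variable
  have hintbd : ∀ (m : Fin s → Fin k) (F : (Fin s → ℝ) → ℝ), Continuous F →
      Integrable F (unif (subCube k m)) := by
    intro m F hF
    obtain ⟨CF, hCF⟩ : ∃ C, ∀ x ∈ subCube k m, ‖F x‖ ≤ C :=
      (isCompact_Icc : IsCompact (subCube k m)).exists_bound_of_continuousOn hF.continuousOn
    have haem : ∀ᵐ x ∂(unif (subCube k m)), x ∈ subCube k m := by
      rw [ae_iff]
      unfold unif
      rw [cond_apply (hCmeas m)]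
      refine mul_eq_zero_of_right _ ?_
      have he : subCube k m ∩ {a | a ∉ subCube k m} = ∅ := by
        ext x; simp
      rw [he]
      simp
    refine memLp_one_iff_integrable.1 (MemLp.of_bound hF.aestronglyMeasurable CF ?_)
    filter_upwards [haem] with x hx
    exact hCF x hx
  have haem : ∀ m : Fin s → Fin k, ∀ᵐ x ∂(unif (subCube k m)), x ∈ subCube k m := by
    intro m
    rw [ae_iff]
    unfold unif
    rw [cond_apply (hCmeas m)]
    refine mul_eq_zero_of_right _ ?_
    have he : subCube k m ∩ {a | a ∉ subCube k m} = ∅ := by ext x; simp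
    rw [he]; simp
  have hvarm : ∀ m : Fin s → Fin k,
      variance (fun ω => g (ω m)) (haberMeasure s k) ≤ L^2 * s / (12 * (k:ℝ)^2) := by
    intro m
    set c : Fin s → ℝ := fun i => ((m i:ℝ) + 1/2)/k with hc
    have hcmem : c ∈ subCube k m := by
      constructor
      · intro i
        show (m i : ℝ)/k ≤ ((m i:ℝ) + 1/2)/k
        gcongr
        linarith
      · intro i
        show ((m i:ℝ) + 1/2)/k ≤ ((m i:ℝ) + 1)/k
        gcongr
        linarith
    have hcu : c ∈ unitCube s := hsub m hcmem
    refine le_trans (my_variance_le (hX2 m) (g c)) ?_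
    have h1 : ∫ ω, (g (ω m) - g c)^2 ∂(haberMeasure s k)
        = ∫ x, (g x - g c)^2 ∂(unif (subCube k m)) := by
      exact my_integral_eval (fun m' => unif (subCube k m')) m
        (fun x => (g x - g c)^2) ((hgc.sub continuous_const).pow 2).aestronglyMeasurable
    rw [h1]
    have hmono : ∫ x, (g x - g c)^2 ∂(unif (subCube k m))
        ≤ ∫ x, L^2 * ∑ i, (x i - c i)^2 ∂(unif (subCube k m)) := by
      refine integral_mono_ae (hintbd m (fun x => (g x - g c)^2) ((hgc.sub continuous_const).pow 2)) ?_ ?_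
      · exact hintbd m (fun x => L^2 * ∑ i, (x i - c i)^2)
          (continuous_const.mul (continuous_finset_sum _ fun i _ =>
          ((continuous_apply i).sub continuous_const).pow 2))
      · filter_upwards [haem m] with x hx
        have hxu : x ∈ unitCube s := hsub m hx
        have hfx : |f x - f c| ≤ L * Real.sqrt (∑ i, (x i - c i)^2) := hLip x hxu c hcu
        have hgx : g x = f x := (hfg hxu).symm
        have hgc' : g c = f c := (hfg hcu).symm
        have hs0 : 0 ≤ ∑ i, (x i - c i)^2 := Finset.sum_nonneg fun i _ => sq_nonneg _
        calc (g x - g c)^2 = |f x - f c|^2 := by rw [hgx, hgc', sq_abs]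
        _ ≤ (L * Real.sqrt (∑ i, (x i - c i)^2))^2 := by
            have h0 := abs_nonneg (f x - f c)
            nlinarith
        _ = L^2 * ∑ i, (x i - c i)^2 := by
            rw [mul_pow, Real.sq_sqrt hs0]
    refine le_trans hmono ?_
    rw [integral_const_mul]
    have hsumi : ∫ x, (∑ i, (x i - c i)^2) ∂(unif (subCube k m))
        = ∑ i : Fin s, ∫ x, (x i - c i)^2 ∂(unif (subCube k m)) :=
      integral_finset_sum _ fun i _ =>
        hintbd m (fun x => (x i - c i)^2) (((continuous_apply i).sub continuous_const).pow 2)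
    rw [hsumi]
    have hco : ∀ i : Fin s, ∫ x, (x i - c i)^2 ∂(unif (subCube k m)) = ((k:ℝ)⁻¹)^2/12 := by
      intro i
      have hmid : c i = (((m i:ℝ)/k) + (((m i:ℝ)+1)/k))/2 := by
        show ((m i:ℝ) + 1/2)/k = (((m i:ℝ)/k) + (((m i:ℝ)+1)/k))/2
        field_simp
        ring
      have e : ∫ x, (x i - c i)^2 ∂(unif (subCube k m))
          = ∫ t, (t - c i)^2
              ∂((volume : Measure ℝ)[|Set.Icc ((m i:ℝ)/k) (((m i:ℝ)+1)/k)]) := by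
        rw [hpi m]
        exact my_integral_eval
          (fun j => ((volume : Measure ℝ)[|Set.Icc ((m j:ℝ)/k) (((m j:ℝ)+1)/k)])) i
          (fun t : ℝ => (t - c i)^2)
          ((continuous_id.sub continuous_const).pow 2).aestronglyMeasurable
      rw [e, hmid, integral_sub_mid_sq (hab m i),
        show ((m i:ℝ)+1)/k - (m i:ℝ)/k = (k:ℝ)⁻¹ from by field_simp; ring]
    rw [Finset.sum_congr rfl fun i _ => hco i, Finset.sum_const, Finset.card_univ,
      Fintype.card_fin, nsmul_eq_mul]
    rw [show L^2 * ((s:ℝ) * ((k:ℝ)⁻¹^2/12)) = L^2 * s/(12*(k:ℝ)^2) from by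
      field_simp]
  -- assemble the variance bound
  have hEst : haberEst k g
      = (((k^s : ℕ):ℝ))⁻¹ • (∑ m : Fin s → Fin k, fun ω => g (ω m)) := by
    funext ω
    simp only [haberEst, Finset.sum_apply, Pi.smul_apply, smul_eq_mul]
    rw [div_eq_inv_mul]
  have hpair : Set.Pairwise ↑(Finset.univ : Finset (Fin s → Fin k))
      (fun m m' => IndepFun (fun ω => g (ω m)) (fun ω => g (ω m')) (haberMeasure s k)) := by
    intro m _ m' _ hmm'
    exact (my_indepFun_eval _ hmm').comp hgc.measurable hgc.measurable
  have hvar_eq : variance (haberEst k f) (haberMeasure s k)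
      = (((k^s : ℕ):ℝ))⁻¹^2
        * ∑ m : Fin s → Fin k, variance (fun ω => g (ω m)) (haberMeasure s k) := by
    rw [my_variance_congr hfg_ae, hEst, variance_smul,
      IndepFun.variance_sum (fun m _ => hX2 m) hpair]
  have hcard : (Finset.univ : Finset (Fin s → Fin k)).card = k^s := by
    simp [Finset.card_univ]
  have hvar_le : variance (haberEst k f) (haberMeasure s k)
      ≤ L^2 * s/(12 * ((k:ℝ)^s) * (k:ℝ)^2) := by
    rw [hvar_eq, hNval]
    have hsum_le : ∑ m : Fin s → Fin k, variance (fun ω => g (ω m)) (haberMeasure s k)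
        ≤ (k:ℝ)^s * (L^2 * s / (12*(k:ℝ)^2)) := by
      calc ∑ m : Fin s → Fin k, variance (fun ω => g (ω m)) (haberMeasure s k)
          ≤ ∑ _m : Fin s → Fin k, L^2 * s / (12*(k:ℝ)^2) :=
            Finset.sum_le_sum fun m _ => hvarm m
      _ = (k:ℝ)^s * (L^2 * s / (12*(k:ℝ)^2)) := by
            rw [Finset.sum_const, hcard, nsmul_eq_mul]
            push_cast
            ring
    refine le_trans (mul_le_mul_of_nonneg_left hsum_le
      (by positivity : (0:ℝ) ≤ ((k:ℝ)^s)⁻¹^2)) (le_of_eq ?_)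
    rw [inv_pow]
    rw [eq_div_iff (by positivity)]
    field_simp
  have hB : L ^ 2 * (s:ℝ) / 12 * ((k : ℝ) ^ s) ^ (-(1:ℝ) - 2/s)
      = L^2 * s/(12 * ((k:ℝ)^s) * (k:ℝ)^2) := by
    have h1 : ((k:ℝ)^s : ℝ) ^ (-(1:ℝ) - 2/s) = (((k:ℝ)^s) * (k:ℝ)^2)⁻¹ := by
      rw [← Real.rpow_natCast (k:ℝ) s, ← Real.rpow_mul hkR.le]
      have he : (s:ℝ) * (-(1:ℝ) - 2/s) = -((s:ℝ) + 2) := by field_simp; ring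
      rw [he, Real.rpow_neg hkR.le, Real.rpow_add hkR, Real.rpow_natCast,
        show ((2:ℝ)) = ((2:ℕ):ℝ) from by norm_num, Real.rpow_natCast]
    rw [h1]
    field_simp
  have hvar_le' : variance (haberEst k f) (haberMeasure s k)
      ≤ L ^ 2 * (s:ℝ) / 12 * ((k : ℝ) ^ s) ^ (-(1:ℝ) - 2/s) := by
    rw [hB]; exact hvar_le
  refine ⟨hmean_f, hvar_le', ?_⟩
  have hrhs_nn : 0 ≤ L * Real.sqrt ((s:ℝ)/12) * ((k:ℝ)^s)^(-(1/2:ℝ) - 1/(s:ℝ)) := by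
    have := Real.sqrt_nonneg ((s:ℝ)/12)
    have := Real.rpow_nonneg (le_of_lt hNpos) (-(1/2:ℝ) - 1/(s:ℝ))
    positivity
  have hsq : (L * Real.sqrt ((s:ℝ)/12) * ((k:ℝ)^s)^(-(1/2:ℝ) - 1/(s:ℝ)))^2
      = L ^ 2 * (s:ℝ) / 12 * ((k : ℝ) ^ s) ^ (-(1:ℝ) - 2/s) := by
    rw [mul_pow, mul_pow, Real.sq_sqrt (by positivity)]
    have h2 : (((k:ℝ)^s)^(-(1/2:ℝ) - 1/(s:ℝ)))^(2:ℕ) = ((k:ℝ)^s)^(-(1:ℝ)-2/(s:ℝ)) := by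
      rw [← Real.rpow_natCast (((k:ℝ)^s)^(-(1/2:ℝ) - 1/(s:ℝ))) 2,
        ← Real.rpow_mul (le_of_lt hNpos)]
      congr 1
      push_cast
      field_simp
    rw [h2]
    ring
  calc Real.sqrt (variance (haberEst k f) (haberMeasure s k))
      ≤ Real.sqrt (L ^ 2 * (s:ℝ) / 12 * ((k : ℝ) ^ s) ^ (-(1:ℝ) - 2/s)) :=
        Real.sqrt_le_sqrt hvar_le'
  _ = L * Real.sqrt ((s:ℝ)/12) * ((k:ℝ)^s)^(-(1/2:ℝ) - 1/(s:ℝ)) := by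
      rw [← hsq, Real.sqrt_sq hrhs_nn]
end
end

section
/- Let f(x) = λᵀx with λ ∈ ℝˢ having exactly s₀ ≥ 1 nonzero entries, and let R ⊆ [0,1]ˢ be a rectangle with side lengths μ₁,…,μ_s all positive (so Δ(R) > 0). Then for each j ∈ {1,…,s}: (Δ(R[j]⁺) + Δ(R[j]⁻))/(2Δ(R)) = 1 − 3μⱼ²λⱼ²/(4∑ᵢ μᵢ²λᵢ²). Consequently, for any j* minimising j ↦ Δ(R[j]⁺) + Δ(R[j]⁻) over j ∈ {1,…,s}: (Δ(R[j*]⁺) + Δ(R[j*]⁻))/(2Δ(R)) ≤ 1 − 3/(4s₀). -/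
open MeasureTheory ProbabilityTheory

noncomputable section

lemma pi_integrable {s : ℕ} (μ : Fin s → Measure ℝ) [inst : ∀ i, SigmaFinite (μ i)]
    {f : Fin s → ℝ → ℝ} (hf : ∀ i, Integrable (f i) (μ i)) :
    Integrable (fun x : Fin s → ℝ => ∏ i, f i (x i)) (Measure.pi μ) :=
  Integrable.fintype_prod_dep (f := f) (μ := μ) hf

lemma pi_integral {s : ℕ} (μ : Fin s → Measure ℝ) [inst : ∀ i, SigmaFinite (μ i)]
    (f : Fin s → ℝ → ℝ) :
    ∫ x : Fin s → ℝ, ∏ i, f i (x i) ∂Measure.pi μ = ∏ i, ∫ t, f i t ∂μ i :=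
  integral_fintype_prod_eq_prod (μ := μ) f

lemma cond1_eq (a b : ℝ) : (volume : Measure ℝ)[|Set.Icc a b]
    = (ENNReal.ofReal (b - a))⁻¹ • volume.restrict (Set.Icc a b) := by
  rw [ProbabilityTheory.cond, Real.volume_Icc]

lemma integral_cond1 (a b : ℝ) (h : a < b) (f : ℝ → ℝ) :
    ∫ x, f x ∂((volume : Measure ℝ)[|Set.Icc a b]) = (b - a)⁻¹ * (∫ x in a..b, f x) := by
  rw [cond1_eq, integral_smul_measure, intervalIntegral.integral_of_le h.le,
    ← integral_Icc_eq_integral_Ioc]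
  rw [ENNReal.toReal_inv, ENNReal.toReal_ofReal (by linarith : (0:ℝ) ≤ b - a), smul_eq_mul]

lemma integrable_cond1 {a b : ℝ} (h : a < b) {f : ℝ → ℝ} (hf : Continuous f) :
    Integrable f ((volume : Measure ℝ)[|Set.Icc a b]) := by
  rw [cond1_eq]
  refine (integrable_smul_measure ?_ ?_).2 hf.integrableOn_Icc
  · simp [ENNReal.inv_ne_zero]
  · simp [ENNReal.inv_ne_top, ENNReal.ofReal_pos, h]

lemma isProb_cond1 {a b : ℝ} (h : a < b) :
    IsProbabilityMeasure ((volume : Measure ℝ)[|Set.Icc a b]) := by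
  apply cond_isProbabilityMeasure_of_finite
  · simp [Real.volume_Icc, ENNReal.ofReal_pos, h]
  · simp [Real.volume_Icc]

lemma cond_pi {s : ℕ} (a b : Fin s → ℝ) (hab : ∀ i, a i < b i) :
    (volume : Measure (Fin s → ℝ))[|Set.Icc a b]
      = Measure.pi (fun i => (volume : Measure ℝ)[|Set.Icc (a i) (b i)]) := by
  haveI : ∀ i, IsProbabilityMeasure ((volume : Measure ℝ)[|Set.Icc (a i) (b i)]) :=
    fun i => isProb_cond1 (hab i)
  refine (Measure.pi_eq (μ := fun i => (volume : Measure ℝ)[|Set.Icc (a i) (b i)]) fun t ht => ?_).symm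
  rw [cond_apply measurableSet_Icc]
  have h1 : Set.Icc a b ∩ Set.pi Set.univ t
      = Set.pi Set.univ (fun i => Set.Icc (a i) (b i) ∩ t i) := by
    rw [Set.pi_inter_distrib, Set.pi_univ_Icc]
  rw [h1, Real.volume_Icc_pi, MeasureTheory.volume_pi_pi]
  have h2 : ∀ i, ((volume : Measure ℝ)[|Set.Icc (a i) (b i)]) (t i)
      = (ENNReal.ofReal (b i - a i))⁻¹ * volume (Set.Icc (a i) (b i) ∩ t i) := by
    intro i
    rw [cond_apply measurableSet_Icc, Real.volume_Icc]
  simp_rw [h2]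
  rw [Finset.prod_mul_distrib, ← ENNReal.prod_inv_distrib]
  intro i _ j _ _
  left
  simp [ENNReal.ofReal_pos, sub_pos.2 (hab i)]
  exact hab i

lemma int1_lin {a b : ℝ} (h : a < b) (c : ℝ) :
    ∫ t, c * t ∂((volume : Measure ℝ)[|Set.Icc a b]) = c * ((a + b) / 2) := by
  rw [integral_cond1 a b h, intervalIntegral.integral_const_mul, integral_id]
  have hne : b - a ≠ 0 := sub_ne_zero.2 h.ne'
  field_simp
  ring

lemma int1_quad {a b : ℝ} (h : a < b) (c d : ℝ) :
    ∫ t, (c * t) * (d * t) ∂((volume : Measure ℝ)[|Set.Icc a b])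
      = c * d * ((a ^ 2 + a * b + b ^ 2) / 3) := by
  have he : (fun t : ℝ => (c * t) * (d * t)) = fun t => (c * d) * t ^ 2 := by
    funext t; ring
  rw [he, integral_cond1 a b h, intervalIntegral.integral_const_mul, integral_pow]
  have hne : b - a ≠ 0 := sub_ne_zero.2 h.ne'
  field_simp
  ring

lemma var_box {s : ℕ} (lam : Fin s → ℝ) (a b : Fin s → ℝ) (hab : ∀ i, a i < b i) :
    variance (fun x => ∑ i, lam i * x i) ((volume : Measure (Fin s → ℝ))[|Set.Icc a b])
      = (∑ i, lam i ^ 2 * (b i - a i) ^ 2) / 12 := by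
  classical
  haveI : ∀ i, IsProbabilityMeasure ((volume : Measure ℝ)[|Set.Icc (a i) (b i)]) :=
    fun i => isProb_cond1 (hab i)
  rw [cond_pi a b hab]
  set μ : Fin s → Measure ℝ := fun i => (volume : Measure ℝ)[|Set.Icc (a i) (b i)] with hμ
  haveI : ∀ i, IsProbabilityMeasure (μ i) := fun i => isProb_cond1 (hab i)
  set ν : Measure (Fin s → ℝ) := Measure.pi μ with hν
  haveI : IsProbabilityMeasure ν := by rw [hν]; infer_instance
  set h : Fin s → Fin s → Fin s → ℝ → ℝ :=
    fun i j k t => (if k = i then lam i * t else 1) * (if k = j then lam j * t else 1) with hh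
  have hcont : ∀ i j k, Continuous (h i j k) := by
    intro i j k
    apply Continuous.mul <;> (split_ifs) <;> continuity
  have hint : ∀ i j k, Integrable (h i j k) (μ k) :=
    fun i j k => integrable_cond1 (hab k) (hcont i j k)
  have hprod : ∀ i j (x : Fin s → ℝ), ∏ k, h i j k (x k) = (lam i * x i) * (lam j * x j) := by
    intro i j x
    rw [hh]
    simp only [Finset.prod_mul_distrib]
    rw [Finset.prod_ite_eq' Finset.univ i (fun k => lam i * x k),
      Finset.prod_ite_eq' Finset.univ j (fun k => lam j * x k)]
    simp
  -- values of the one-dimensional integrals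
  have hval1 : ∀ i k, ∫ t, h i i k t ∂μ k
      = (if k = i then lam i * lam i * ((a k ^ 2 + a k * b k + b k ^ 2) / 3) else 1) := by
    intro i k
    by_cases hki : k = i
    · subst hki
      simp only [hh, if_pos rfl, eq_self_iff_true, if_true, hμ]
      rw [int1_quad (hab k)]
    · simp only [hh, if_neg hki, hμ, mul_one]
      simp
  have hval2 : ∀ i j, i ≠ j → ∀ k, ∫ t, h i j k t ∂μ k
      = (if k = i then lam i * ((a i + b i) / 2) else 1)
        * (if k = j then lam j * ((a j + b j) / 2) else 1) := by
    intro i j hij k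
    by_cases hki : k = i <;> by_cases hkj : k = j
    · exact absurd (hki ▸ hkj) (by simpa [hki] using hij)
    · subst hki
      simp only [hh, if_pos rfl, if_neg hkj, eq_self_iff_true, if_true, hμ, mul_one]
      rw [int1_lin (hab k)]
    · subst hkj
      simp only [hh, if_pos rfl, if_neg hki, eq_self_iff_true, if_true, hμ, one_mul]
      rw [int1_lin (hab k)]
    · simp only [hh, if_neg hki, if_neg hkj, hμ, mul_one]
      simp
  -- integrability and value of each product term
  have hPint : ∀ i j, Integrable (fun x : Fin s → ℝ => (lam i * x i) * (lam j * x j)) ν := by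
    intro i j
    have := pi_integrable μ (f := h i j) (fun k => hint i j k)
    simpa only [hprod] using this
  have hPval : ∀ i j, ∫ x, (lam i * x i) * (lam j * x j) ∂ν
      = (if i = j then lam i * lam j * ((a i ^ 2 + a i * b i + b i ^ 2) / 3)
         else (lam i * ((a i + b i) / 2)) * (lam j * ((a j + b j) / 2))) := by
    intro i j
    have h0 : ∫ x, (lam i * x i) * (lam j * x j) ∂ν = ∏ k, ∫ t, h i j k t ∂μ k := by
      rw [← pi_integral μ (h i j)]
      exact integral_congr_ae (Filter.Eventually.of_forall fun x => (hprod i j x).symm)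
    rw [h0]
    by_cases hij : i = j
    · subst hij
      simp_rw [hval1 i]
      rw [Finset.prod_ite_eq' Finset.univ i
        (fun k => lam i * lam i * ((a k ^ 2 + a k * b k + b k ^ 2) / 3))]
      simp
    · simp_rw [hval2 i j hij]
      rw [if_neg hij, Finset.prod_mul_distrib,
        Finset.prod_ite_eq' Finset.univ i (fun _ => lam i * ((a i + b i) / 2)),
        Finset.prod_ite_eq' Finset.univ j (fun _ => lam j * ((a j + b j) / 2))]
      simp
  -- single coordinate integrals
  have e : Fin s → Fin s → ℝ → ℝ := fun i k t => if k = i then lam i * t else 1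
  have heprod : ∀ i (x : Fin s → ℝ), (∏ k, if k = i then lam i * x k else 1) = lam i * x i := by
    intro i x
    rw [Finset.prod_ite_eq' Finset.univ i (fun k => lam i * x k)]
    simp
  have hLint : ∀ i, Integrable (fun x : Fin s → ℝ => lam i * x i) ν := by
    intro i
    have hek : ∀ k, Integrable (fun t : ℝ => if k = i then lam i * t else 1) (μ k) := by
      intro k
      refine integrable_cond1 (hab k) ?_
      split_ifs <;> continuity
    have := pi_integrable μ (f := fun k t => if k = i then lam i * t else 1) hek
    simpa only [heprod] using this
  have hLval : ∀ i, ∫ x, lam i * x i ∂ν = lam i * ((a i + b i) / 2) := by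
    intro i
    have h0 : ∫ x, lam i * x i ∂ν
        = ∏ k, ∫ t, (if k = i then lam i * t else 1) ∂μ k := by
      rw [← pi_integral μ (fun k t => if k = i then lam i * t else 1)]
      exact integral_congr_ae (Filter.Eventually.of_forall fun x => (heprod i x).symm)
    rw [h0]
    have hv : ∀ k, ∫ t, (if k = i then lam i * t else 1) ∂μ k
        = (if k = i then lam i * ((a i + b i) / 2) else 1) := by
      intro k
      by_cases hki : k = i
      · subst hki
        simp only [if_pos rfl, eq_self_iff_true, if_true, hμ]
        rw [int1_lin (hab k)]
      · simp only [if_neg hki, hμ]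
        simp
    simp_rw [hv]
    rw [Finset.prod_ite_eq' Finset.univ i (fun _ => lam i * ((a i + b i) / 2))]
    simp
  -- the function and its square
  have hsq : ∀ x : Fin s → ℝ,
      (∑ i, lam i * x i) ^ 2 = ∑ i, ∑ j, (lam i * x i) * (lam j * x j) := by
    intro x
    rw [sq, Finset.sum_mul_sum]
  have hintsq : Integrable (fun x : Fin s → ℝ => (∑ i, lam i * x i) ^ 2) ν := by
    simp_rw [hsq]
    exact integrable_finset_sum _ fun i _ => integrable_finset_sum _ fun j _ => hPint i j
  have hmes : AEStronglyMeasurable (fun x : Fin s → ℝ => ∑ i, lam i * x i) ν := by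
    exact (continuous_finset_sum _ fun i _ =>
      (continuous_const.mul (continuous_apply i))).aestronglyMeasurable
  have hmem : MemLp (fun x : Fin s → ℝ => ∑ i, lam i * x i) 2 ν :=
    (memLp_two_iff_integrable_sq hmes).2 hintsq
  rw [variance_eq_sub hmem]
  have hE1 : ∫ x, (∑ i, lam i * x i) ∂ν = ∑ i, lam i * ((a i + b i) / 2) := by
    rw [integral_finset_sum _ fun i _ => hLint i]
    exact Finset.sum_congr rfl fun i _ => hLval i
  have hE2 : ∫ x, (∑ i, lam i * x i) ^ 2 ∂ν
      = ∑ i, ∑ j, (if i = j then lam i * lam j * ((a i ^ 2 + a i * b i + b i ^ 2) / 3)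
          else (lam i * ((a i + b i) / 2)) * (lam j * ((a j + b j) / 2))) := by
    simp_rw [hsq]
    rw [integral_finset_sum _ fun i _ => integrable_finset_sum _ fun j _ => hPint i j]
    refine Finset.sum_congr rfl fun i _ => ?_
    rw [integral_finset_sum _ fun j _ => hPint i j]
    exact Finset.sum_congr rfl fun j _ => hPval i j
  have hpow : (fun x : Fin s → ℝ => ∑ i, lam i * x i) ^ 2
      = fun x : Fin s → ℝ => (∑ i, lam i * x i) ^ 2 := by
    funext x; simp [sq]
  rw [hpow, hE2, hE1]
  have hE1sq : (∑ i, lam i * ((a i + b i) / 2)) ^ 2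
      = ∑ i, ∑ j, (lam i * ((a i + b i) / 2)) * (lam j * ((a j + b j) / 2)) := by
    rw [sq, Finset.sum_mul_sum]
  rw [hE1sq, ← Finset.sum_sub_distrib]
  have hterm : ∀ i : Fin s,
      (∑ j, (if i = j then lam i * lam j * ((a i ^ 2 + a i * b i + b i ^ 2) / 3)
          else (lam i * ((a i + b i) / 2)) * (lam j * ((a j + b j) / 2))))
        - (∑ j, (lam i * ((a i + b i) / 2)) * (lam j * ((a j + b j) / 2)))
      = lam i ^ 2 * (b i - a i) ^ 2 / 12 := by
    intro i
    rw [← Finset.sum_sub_distrib]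
    rw [Finset.sum_eq_single i]
    · simp only [eq_self_iff_true, if_true]
      ring
    · intro j _ hj
      rw [if_neg (Ne.symm hj)]
      ring
    · intro hi; exact absurd (Finset.mem_univ i) hi
  simp_rw [hterm]
  rw [Finset.sum_div]


/-- for `f(x) = λᵀx` with exactly `s₀ ≥ 1` nonzero entries and a rectangle
`R = [a,b]` with positive side lengths `μᵢ = bᵢ − aᵢ`, for each `j` the variance
reduction factor of the midpoint split along `j` is
`(Δ(R[j]⁺) + Δ(R[j]⁻))/(2Δ(R)) = 1 − 3μⱼ²λⱼ²/(4∑ᵢ μᵢ²λᵢ²)`; consequently for any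
minimiser `j*` of `j ↦ Δ(R[j]⁺) + Δ(R[j]⁻)` this factor is at most `1 − 3/(4s₀)`. -/
theorem linear_variance_reduction {s : ℕ} (lam : Fin s → ℝ) (s0 : ℕ) (hs0 : 1 ≤ s0)
    (hcard : Fintype.card {i : Fin s // lam i ≠ 0} = s0)
    (a b : Fin s → ℝ) (hab : ∀ i, a i < b i)
    (hsub : Set.Icc a b ⊆ unitCube s)
    (f : (Fin s → ℝ) → ℝ) (hf : ∀ x, f x = ∑ i, lam i * x i) :
    (∀ j : Fin s,
      (strataVar f (upperHalf a b j) + strataVar f (lowerHalf a b j)) /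
          (2 * strataVar f (Set.Icc a b)) =
        1 - 3 * (b j - a j) ^ 2 * lam j ^ 2 / (4 * ∑ i, (b i - a i) ^ 2 * lam i ^ 2)) ∧
      ∀ jstar : Fin s,
        (∀ j : Fin s,
          strataVar f (upperHalf a b jstar) + strataVar f (lowerHalf a b jstar) ≤
            strataVar f (upperHalf a b j) + strataVar f (lowerHalf a b j)) →
        (strataVar f (upperHalf a b jstar) + strataVar f (lowerHalf a b jstar)) /
            (2 * strataVar f (Set.Icc a b)) ≤ 1 - 3 / (4 * (s0 : ℝ)) := by
  classical
  have hfe : f = fun x => ∑ i, lam i * x i := funext hf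
  subst hfe
  set F : (Fin s → ℝ) → ℝ := fun x => ∑ i, lam i * x i with hF
  set S : ℝ := ∑ i, lam i ^ 2 * (b i - a i) ^ 2 with hS
  set t : Fin s → ℝ := fun j => lam j ^ 2 * (b j - a j) ^ 2 with ht
  -- variance of the whole box
  have hΔ : strataVar F (Set.Icc a b) = S / 12 := var_box lam a b hab
  -- variances of the halves
  have hkey : ∀ j (d : Fin s → ℝ), (∀ i, i ≠ j → d i = b i - a i) →
      ∑ i, lam i ^ 2 * d i ^ 2 = S - t j + lam j ^ 2 * d j ^ 2 := by
    intro j d hd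
    have h1 : ∑ i, lam i ^ 2 * d i ^ 2
        = (∑ i ∈ Finset.univ.erase j, lam i ^ 2 * (b i - a i) ^ 2) + lam j ^ 2 * d j ^ 2 := by
      rw [← Finset.sum_erase_add _ _ (Finset.mem_univ j)]
      congr 1
      exact Finset.sum_congr rfl fun i hi => by rw [hd i (Finset.ne_of_mem_erase hi)]
    have h2 : S = (∑ i ∈ Finset.univ.erase j, lam i ^ 2 * (b i - a i) ^ 2)
        + lam j ^ 2 * (b j - a j) ^ 2 :=
      (Finset.sum_erase_add _ _ (Finset.mem_univ j)).symm
    rw [h1, h2, ht]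
    ring
  have hlow : ∀ j, strataVar F (lowerHalf a b j) = (S - (3/4) * t j) / 12 := by
    intro j
    have hab' : ∀ i, a i < Function.update b j ((a j + b j) / 2) i := by
      intro i
      by_cases hi : i = j
      · subst hi; rw [Function.update_self]; linarith [hab i]
      · rw [Function.update_of_ne hi]; exact hab i
    have := var_box lam a (Function.update b j ((a j + b j) / 2)) hab'
    rw [lowerHalf, strataVar, unif, this,
      hkey j (fun i => Function.update b j ((a j + b j) / 2) i - a i)
        (fun i hi => by simp only [Function.update_of_ne hi])]
    rw [Function.update_self, ht]
    ring
  have hupp : ∀ j, strataVar F (upperHalf a b j) = (S - (3/4) * t j) / 12 := by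
    intro j
    have hab' : ∀ i, Function.update a j ((a j + b j) / 2) i < b i := by
      intro i
      by_cases hi : i = j
      · subst hi; rw [Function.update_self]; linarith [hab i]
      · rw [Function.update_of_ne hi]; exact hab i
    have := var_box lam (Function.update a j ((a j + b j) / 2)) b hab'
    rw [upperHalf, strataVar, unif, this,
      hkey j (fun i => b i - Function.update a j ((a j + b j) / 2) i)
        (fun i hi => by simp only [Function.update_of_ne hi])]
    rw [Function.update_self, ht]
    ring
  have hT : ∀ j, strataVar F (upperHalf a b j) + strataVar F (lowerHalf a b j)
      = (2 * S - (3/2) * t j) / 12 := by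
    intro j
    rw [hlow j, hupp j]
    ring
  -- positivity of S
  have htnn : ∀ i, 0 ≤ t i := fun i => mul_nonneg (sq_nonneg _) (sq_nonneg _)
  have hex : ∃ i, lam i ≠ 0 := by
    have h0 : 0 < Fintype.card {i : Fin s // lam i ≠ 0} := by omega
    obtain ⟨⟨i, hi⟩⟩ := Fintype.card_pos_iff.1 h0
    exact ⟨i, hi⟩
  obtain ⟨i0, hi0⟩ := hex
  have hSpos : 0 < S := by
    have h1 : 0 < t i0 :=
      mul_pos (pow_two_pos_of_ne_zero hi0)
        (pow_two_pos_of_ne_zero (sub_ne_zero.2 (hab i0).ne'))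
    exact lt_of_lt_of_le h1 (Finset.single_le_sum (fun i _ => htnn i) (Finset.mem_univ i0))
  have hS' : (∑ i, (b i - a i) ^ 2 * lam i ^ 2) = S := by
    rw [hS]; exact Finset.sum_congr rfl fun i _ => mul_comm _ _
  have hpart1 : ∀ j : Fin s,
      (strataVar F (upperHalf a b j) + strataVar F (lowerHalf a b j)) /
          (2 * strataVar F (Set.Icc a b)) =
        1 - 3 * (b j - a j) ^ 2 * lam j ^ 2 / (4 * ∑ i, (b i - a i) ^ 2 * lam i ^ 2) := by
    intro j
    rw [hT j, hΔ, hS', ht]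
    field_simp
    ring
  refine ⟨hpart1, ?_⟩
  intro jstar hmin
  rw [hpart1 jstar]
  have hs0R : (0:ℝ) < (s0 : ℝ) := by exact_mod_cast hs0
  -- t jstar is maximal
  have hmax : ∀ j, t j ≤ t jstar := by
    intro j
    have h1 := hmin j
    rw [hT j, hT jstar] at h1
    linarith
  -- S ≤ s0 * t jstar
  have hSle : S ≤ (s0 : ℝ) * t jstar := by
    have hfil : ∑ i ∈ Finset.univ.filter (fun i => lam i ≠ 0), t i = S := by
      rw [hS]
      refine Finset.sum_filter_of_ne fun i _ hti => ?_
      intro hlam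
      exact hti (by rw [ht]; simp [hlam])
    have hcard' : (Finset.univ.filter (fun i => lam i ≠ 0)).card = s0 := by
      rw [← hcard, Fintype.card_subtype]
    have hle : ∑ i ∈ Finset.univ.filter (fun i => lam i ≠ 0), t i
        ≤ (Finset.univ.filter (fun i => lam i ≠ 0)).card • t jstar :=
      Finset.sum_le_card_nsmul _ _ _ (fun i _ => hmax i)
    rw [hcard', nsmul_eq_mul] at hle
    rw [← hfil]
    exact hle
  have htpos : 0 < t jstar := by
    have h2 : 0 < (s0 : ℝ) * t jstar := lt_of_lt_of_le hSpos hSle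
    nlinarith
  rw [hS']
  have hgoal : 3 / (4 * (s0:ℝ)) ≤ 3 * (b jstar - a jstar) ^ 2 * lam jstar ^ 2 / (4 * S) := by
    rw [div_le_div_iff₀ (by positivity) (by positivity)]
    have ht' : (b jstar - a jstar) ^ 2 * lam jstar ^ 2 = t jstar := mul_comm _ _
    nlinarith [hSle, ht', hs0R]
  linarith
end
end

section
/- Let f : [0,1]ˢ → ℝ be strictly increasing in each coordinate and satisfy |f(x) − f(y)| ≥ (∑ᵢ αᵢ²(xᵢ − yᵢ)²)^{1/2} for all x, y ∈ [0,1]ˢ, where αᵢ > 0. Let R ⊆ [0,1]ˢ be a rectangle with side lengths μ₁,…,μ_s and let j ∈ {1,…,s}. Then E[f(X) | X ∈ R[j]⁺] − E[f(X) | X ∈ R[j]⁻] ≥ αⱼμⱼ/2, where X is uniform on R. -/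
open MeasureTheory ProbabilityTheory

noncomputable section

lemma mono_le_aux {s : ℕ} (f : (Fin s → ℝ) → ℝ)
    (hmono : ∀ x ∈ unitCube s, ∀ (j : Fin s) (t u : ℝ), 0 ≤ t → t < u → u ≤ 1 →
      f (Function.update x j t) < f (Function.update x j u))
    {x y : Fin s → ℝ} (hx : x ∈ unitCube s) (hy : y ∈ unitCube s) (hxy : x ≤ y) :
    f x ≤ f y := by
  classical
  have hx0 : ∀ i, (0:ℝ) ≤ x i := fun i => hx.1 i
  have hx1 : ∀ i, x i ≤ 1 := fun i => hx.2 i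
  have hy0 : ∀ i, (0:ℝ) ≤ y i := fun i => hy.1 i
  have hy1 : ∀ i, y i ≤ 1 := fun i => hy.2 i
  set z : ℕ → (Fin s → ℝ) := fun k i => if (i:ℕ) < k then y i else x i with hz
  have hzc : ∀ k, z k ∈ unitCube s := by
    intro k
    constructor <;> intro i <;> simp only [hz] <;> split
    · exact hy0 i
    · exact hx0 i
    · exact hy1 i
    · exact hx1 i
  have hstep : ∀ k, f (z k) ≤ f (z (k+1)) := by
    intro k
    by_cases hk : k < s
    · set jj : Fin s := ⟨k, hk⟩ with hjj
      have e1 : z (k+1) = Function.update (z k) jj (y jj) := by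
        funext i
        rcases eq_or_ne i jj with rfl | hij
        · simp [hz, hjj]
        · have hik : (i:ℕ) ≠ k := fun hc => hij (Fin.ext hc)
          rw [Function.update_of_ne hij]
          simp only [hz]
          rcases lt_or_ge (i:ℕ) k with h1 | h1
          · rw [if_pos (by omega), if_pos h1]
          · rw [if_neg (by omega), if_neg (by omega)]
      have e0 : z k = Function.update (z k) jj (x jj) := by
        funext i
        rcases eq_or_ne i jj with rfl | hij
        · simp [hz, hjj]
        · rw [Function.update_of_ne hij]
      rcases lt_or_eq_of_le (hxy jj) with hlt | heq
      · calc f (z k) = f (Function.update (z k) jj (x jj)) := by rw [← e0]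
          _ ≤ f (Function.update (z k) jj (y jj)) :=
              le_of_lt (hmono (z k) (hzc k) jj _ _ (hx0 jj) hlt (hy1 jj))
          _ = f (z (k+1)) := by rw [e1]
      · have : z (k+1) = z k := by rw [e1, ← heq, ← e0]
        rw [this]
    · have : z (k+1) = z k := by
        funext i
        simp only [hz]
        rw [if_pos (by omega : (i:ℕ) < k+1), if_pos (by omega : (i:ℕ) < k)]
      rw [this]
  have hmon : Monotone fun k => f (z k) := monotone_nat_of_le_succ hstep
  have hx' : z 0 = x := by funext i; simp [hz]
  have hy' : z s = y := by funext i; simp [hz, i.isLt]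
  calc f x = f (z 0) := by rw [hx']
    _ ≤ f (z s) := hmon (Nat.zero_le s)
    _ = f y := by rw [hy']

/-- if `f` is strictly increasing in each coordinate and
`|f(x) − f(y)| ≥ (∑ᵢ αᵢ²(xᵢ − yᵢ)²)^{1/2}` on `[0,1]^s`, then for a rectangle
`R = [a,b]` with positive side lengths, `E[f | R[j]⁺] − E[f | R[j]⁻] ≥ αⱼ μⱼ/2`.
(Measurability of `f` follows from coordinatewise monotonicity and is included as
an explicit hypothesis.) -/
theorem mean_gap_lower_bound {s : ℕ} (f : (Fin s → ℝ) → ℝ) (hf : Measurable f)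
    (hmono : ∀ x ∈ unitCube s, ∀ (j : Fin s) (t u : ℝ), 0 ≤ t → t < u → u ≤ 1 →
      f (Function.update x j t) < f (Function.update x j u))
    (α : Fin s → ℝ) (hα : ∀ i, 0 < α i)
    (hlow : ∀ x ∈ unitCube s, ∀ y ∈ unitCube s,
      Real.sqrt (∑ i, α i ^ 2 * (x i - y i) ^ 2) ≤ |f x - f y|)
    (a b : Fin s → ℝ) (hab : ∀ i, a i < b i)
    (hsub : Set.Icc a b ⊆ unitCube s) (j : Fin s) :
    α j * (b j - a j) / 2 ≤
      ∫ x, f x ∂(unif (upperHalf a b j)) - ∫ x, f x ∂(unif (lowerHalf a b j)) := by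
  classical
  set h : ℝ := (b j - a j) / 2 with hh
  set m : ℝ := (a j + b j) / 2 with hm
  have hhpos : 0 < h := by rw [hh]; linarith [hab j]
  have hmaj : m = a j + h := by rw [hm, hh]; ring
  have hbj : b j = m + h := by rw [hm, hh]; ring
  set v : Fin s → ℝ := Function.update (0 : Fin s → ℝ) j h with hv
  have hvj : v j = h := by simp [hv]
  have hvne : ∀ i, i ≠ j → v i = 0 := fun i hij => by
    simp [hv, Function.update_of_ne hij]
  have hv0 : ∀ i, 0 ≤ v i := by
    intro i
    rcases eq_or_ne i j with rfl | hij
    · rw [hvj]; exact hhpos.le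
    · rw [hvne i hij]
  set L := lowerHalf a b j with hL
  set U := upperHalf a b j with hU
  -- subsets
  have hb' : Function.update b j m ≤ b := by
    intro i
    rcases eq_or_ne i j with rfl | hij
    · rw [Function.update_self]; linarith [hab i]
    · rw [Function.update_of_ne hij]
  have ha' : a ≤ Function.update a j m := by
    intro i
    rcases eq_or_ne i j with rfl | hij
    · rw [Function.update_self]; linarith [hab i]
    · rw [Function.update_of_ne hij]
  have hLsub : L ⊆ Set.Icc a b := Set.Icc_subset_Icc le_rfl hb'
  have hUsub : U ⊆ Set.Icc a b := Set.Icc_subset_Icc ha' le_rfl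
  have hLmeas : MeasurableSet L := measurableSet_Icc
  have hUmeas : MeasurableSet U := measurableSet_Icc
  -- volumes
  have hvolL : volume L = ∏ i, ENNReal.ofReal (Function.update b j m i - a i) :=
    Real.volume_Icc_pi
  have hvolU : volume U = ∏ i, ENNReal.ofReal (b i - Function.update a j m i) :=
    Real.volume_Icc_pi
  have hside : ∀ i, Function.update b j m i - a i = b i - Function.update a j m i := by
    intro i
    rcases eq_or_ne i j with rfl | hij
    · rw [Function.update_self, Function.update_self]; linarith
    · rw [Function.update_of_ne hij, Function.update_of_ne hij]
  have hsidepos : ∀ i, 0 < Function.update b j m i - a i := by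
    intro i
    rcases eq_or_ne i j with rfl | hij
    · rw [Function.update_self]; rw [hmaj]; linarith
    · rw [Function.update_of_ne hij]; linarith [hab i]
  have hUL : volume U = volume L := by
    rw [hvolL, hvolU]
    exact Finset.prod_congr rfl fun i _ => by rw [hside i]
  have hvolL_pos : volume L ≠ 0 := by
    rw [hvolL, Finset.prod_ne_zero_iff]
    intro i _
    exact (ENNReal.ofReal_pos.mpr (hsidepos i)).ne'
  have hvolL_top : volume L ≠ ⊤ := by
    rw [hvolL]
    exact (ENNReal.prod_lt_top fun i _ => ENNReal.ofReal_lt_top).ne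
  -- preimage
  have hpre : (· + v) ⁻¹' U = L := by
    ext x
    simp only [hU, hL, upperHalf, lowerHalf, Set.mem_preimage, Set.mem_Icc, Pi.le_def,
      Pi.add_apply]
    constructor
    · rintro ⟨h1, h2⟩
      constructor <;> intro i <;> rcases eq_or_ne i j with rfl | hij
      · have := h1 i; rw [Function.update_self, hvj] at this; linarith [hmaj]
      · have := h1 i; rw [Function.update_of_ne hij, hvne i hij] at this; linarith
      · have := h2 i; rw [hvj] at this; rw [Function.update_self]; linarith [hbj]
      · have := h2 i; rw [hvne i hij] at this; rw [Function.update_of_ne hij]; linarith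
    · rintro ⟨h1, h2⟩
      constructor <;> intro i <;> rcases eq_or_ne i j with rfl | hij
      · have := h1 i; rw [Function.update_self, hvj]; linarith [hmaj]
      · have := h1 i; rw [Function.update_of_ne hij, hvne i hij]; linarith
      · have := h2 i; rw [Function.update_self] at this; rw [hvj]; linarith [hbj]
      · have := h2 i; rw [Function.update_of_ne hij] at this; rw [hvne i hij]; linarith
  -- pushforward
  have hmeasadd : Measurable (· + v) := measurable_add_const v
  have hmap : volume.restrict U = Measure.map (· + v) (volume.restrict L) := by
    conv_lhs => rw [← map_add_right_eq_self (volume : Measure (Fin s → ℝ)) v]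
    rw [Measure.restrict_map hmeasadd hUmeas, hpre]
  -- integrability
  set C : ℝ := max |f a| |f b| with hC
  have hbound : ∀ x ∈ Set.Icc a b, ‖f x‖ ≤ C := by
    intro x hx
    have hxc : x ∈ unitCube s := hsub hx
    have hac : a ∈ unitCube s := hsub ⟨le_rfl, fun i => (hab i).le⟩
    have hbc : b ∈ unitCube s := hsub ⟨fun i => (hab i).le, le_rfl⟩
    have h1 : f a ≤ f x := mono_le_aux f hmono hac hxc hx.1
    have h2 : f x ≤ f b := mono_le_aux f hmono hxc hbc hx.2
    rw [Real.norm_eq_abs, abs_le]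
    constructor
    · have : -|f a| ≤ f a := neg_abs_le _
      have : -C ≤ -|f a| := neg_le_neg (le_max_left _ _)
      linarith [neg_abs_le (f a), le_max_left |f a| |f b|]
    · calc f x ≤ f b := h2
        _ ≤ |f b| := le_abs_self _
        _ ≤ C := le_max_right _ _
  have hIB : Integrable f (volume.restrict L) := by
    refine Integrable.mono' (g := fun _ => C) ?_ hf.aestronglyMeasurable ?_
    · exact integrableOn_const hvolL_top
    · exact ae_restrict_of_forall_mem hLmeas fun x hx => hbound x (hLsub hx)
  have hIA : Integrable (fun x => f (x + v)) (volume.restrict L) := by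
    refine Integrable.mono' (g := fun _ => C) ?_ (hf.comp hmeasadd).aestronglyMeasurable ?_
    · exact integrableOn_const hvolL_top
    · refine ae_restrict_of_forall_mem hLmeas fun x hx => hbound _ (hUsub ?_)
      rw [← hpre] at hx; exact hx
  -- integral identities
  have hcondL : unif L = (volume L)⁻¹ • volume.restrict L := rfl
  have hcondU : unif U = (volume U)⁻¹ • volume.restrict U := rfl
  set c : ℝ := ((volume L)⁻¹).toReal with hc
  have hintU : ∫ x, f x ∂(unif U) = c * ∫ x, f (x + v) ∂(volume.restrict L) := by
    rw [hcondU, hUL, integral_smul_measure, hmap,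
      integral_map hmeasadd.aemeasurable hf.aestronglyMeasurable]
    rfl
  have hintL : ∫ x, f x ∂(unif L) = c * ∫ x, f x ∂(volume.restrict L) := by
    rw [hcondL, integral_smul_measure]; rfl
  rw [hintU, hintL, ← mul_sub, ← integral_sub hIA hIB]
  -- pointwise bound
  have hpt : ∀ x ∈ L, α j * h ≤ f (x + v) - f x := by
    intro x hx
    have hxc : x ∈ unitCube s := hsub (hLsub hx)
    have hxv : x + v ∈ U := by rw [← hpre] at hx; exact hx
    have hxvc : x + v ∈ unitCube s := hsub (hUsub hxv)
    have hle : f x ≤ f (x + v) :=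
      mono_le_aux f hmono hxc hxvc (fun i => le_add_of_nonneg_right (hv0 i))
    have hsum : (∑ i, α i ^ 2 * ((x + v) i - x i) ^ 2) = (α j * h) ^ 2 := by
      rw [Fintype.sum_eq_single j]
      · rw [Pi.add_apply, hvj]; ring
      · intro i hij
        rw [Pi.add_apply, hvne i hij]; ring
    have := hlow (x + v) hxvc x hxc
    rw [hsum, Real.sqrt_sq (mul_pos (hα j) hhpos).le] at this
    have habs : |f (x + v) - f x| = f (x + v) - f x := abs_of_nonneg (by linarith)
    linarith [this, habs ▸ this]
  -- conclude
  have hmono_int : α j * h * (volume L).toReal ≤ ∫ x, (f (x + v) - f x) ∂(volume.restrict L) := by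
    have := setIntegral_mono_on (f := fun _ => α j * h) (g := fun x => f (x + v) - f x)
      (integrableOn_const hvolL_top)
      (hIA.sub hIB) hLmeas hpt
    rwa [setIntegral_const, smul_eq_mul, mul_comm] at this
  have hcpos : 0 < c := by
    rw [hc, ENNReal.toReal_inv]
    exact inv_pos.mpr (ENNReal.toReal_pos hvolL_pos hvolL_top)
  have hcv : c * (volume L).toReal = 1 := by
    rw [hc, ENNReal.toReal_inv]
    exact inv_mul_cancel₀ (ENNReal.toReal_pos hvolL_pos hvolL_top).ne'
  calc α j * (b j - a j) / 2 = α j * h := by rw [hh]; ring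
    _ = c * (α j * h * (volume L).toReal) := by
        rw [mul_comm (α j * h), ← mul_assoc, hcv, one_mul]
    _ ≤ c * ∫ x, (f (x + v) - f x) ∂(volume.restrict L) :=
        mul_le_mul_of_nonneg_left hmono_int hcpos.le
end
end

section
/- Let R ⊆ [0,1]ˢ be a rectangle with side lengths μ₁,…,μ_s, and let f : [0,1]ˢ → ℝ satisfy |f(x) − f(y)| ≤ (∑ᵢ βᵢ²(xᵢ − yᵢ)²)^{1/2} for all x, y ∈ R, where βᵢ > 0. Then, with X uniform on R, Var[f(X) | X ∈ R] ≤ (1/12)∑_{i=1}^s βᵢ²μᵢ². -/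
open MeasureTheory ProbabilityTheory

noncomputable section

/-- Variance is invariant under subtracting a constant. -/
lemma my_variance_sub_const {Ω : Type*} [MeasurableSpace Ω] {μ : Measure Ω}
    [IsProbabilityMeasure μ] {X : Ω → ℝ} (hX : Integrable X μ) (k : ℝ) :
    variance (fun ω => X ω - k) μ = variance X μ := by
  have h : ∫ ω, (X ω - k) ∂μ = (∫ ω, X ω ∂μ) - k := by
    rw [integral_sub hX (integrable_const k), integral_const]; simp
  unfold variance evariance
  congr 1
  apply lintegral_congr
  intro ω
  congr 2
  rw [h]
  ring_nf

/-- Interval integral of `(u - mid)^2`. -/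
lemma my_interval_int (p q : ℝ) (hpq : p ≤ q) :
    ∫ u in Set.Icc p q, (u - (p + q) / 2) ^ 2 = (q - p) ^ 3 / 12 := by
  rw [MeasureTheory.integral_Icc_eq_integral_Ioc, ← intervalIntegral.integral_of_le hpq,
    intervalIntegral.integral_comp_sub_right (fun u => u ^ 2) ((p + q) / 2),
    integral_pow]
  norm_num
  ring_nf

/-- Fubini for a coordinate function on a box. -/
lemma my_coord_int {s : ℕ} (a b : Fin s → ℝ) (hab : a ≤ b) (i : Fin s) (c : ℝ) :
    ∫ x in Set.Icc a b, (x i - c) ^ 2 ∂(volume : Measure (Fin s → ℝ))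
      = (∫ u in Set.Icc (a i) (b i), (u - c) ^ 2) *
        ∏ j ∈ Finset.univ.erase i, (b j - a j) := by
  classical
  set F : Fin s → ℝ → ℝ := fun j u =>
    if j = i then (Set.Icc (a i) (b i)).indicator (fun u => (u - c) ^ 2) u
    else (Set.Icc (a j) (b j)).indicator 1 u with hF
  have key : ∀ x : Fin s → ℝ,
      (Set.Icc a b).indicator (fun x => (x i - c) ^ 2) x = ∏ j, F j (x j) := by
    intro x
    by_cases hx : x ∈ Set.Icc a b
    · have hxj : ∀ j, x j ∈ Set.Icc (a j) (b j) := fun j => ⟨hx.1 j, hx.2 j⟩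
      rw [Set.indicator_of_mem hx, Finset.prod_eq_single i]
      · simp [hF, Set.indicator_of_mem (hxj i)]
      · intro j _ hj
        simp [hF, hj, Set.indicator_of_mem (hxj j)]
      · simp
    · rw [Set.indicator_of_notMem hx]
      have hex : ∃ j, x j ∉ Set.Icc (a j) (b j) := by
        by_contra hc
        push_neg at hc
        exact hx ⟨fun j => (hc j).1, fun j => (hc j).2⟩
      obtain ⟨j, hj⟩ := hex
      symm
      apply Finset.prod_eq_zero (Finset.mem_univ j)
      by_cases hji : j = i
      · subst hji; simp [hF, Set.indicator_of_notMem hj]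
      · simp [hF, hji, Set.indicator_of_notMem hj]
  rw [← MeasureTheory.integral_indicator measurableSet_Icc]
  simp_rw [key]
  rw [show (volume : Measure (Fin s → ℝ)) = Measure.pi (fun _ => volume) from rfl,
    MeasureTheory.integral_fintype_prod_eq_prod (f := F),
    ← Finset.mul_prod_erase Finset.univ _ (Finset.mem_univ i)]
  congr 1
  · simp only [hF, if_pos rfl]
    rw [MeasureTheory.integral_indicator measurableSet_Icc]
  · apply Finset.prod_congr rfl
    intro j hj
    have hji : j ≠ i := Finset.ne_of_mem_erase hj
    simp only [hF, if_neg hji]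
    rw [MeasureTheory.integral_indicator_one measurableSet_Icc, Measure.real, Real.volume_Icc,
      ENNReal.toReal_ofReal (sub_nonneg.2 (hab j))]

theorem strata_variance_upper_bound' {s : ℕ} (a b : Fin s → ℝ) (hab : a ≤ b)
    (β : Fin s → ℝ)
    (f : (Fin s → ℝ) → ℝ)
    (hup : ∀ x ∈ Set.Icc a b, ∀ y ∈ Set.Icc a b,
      |f x - f y| ≤ Real.sqrt (∑ i, β i ^ 2 * (x i - y i) ^ 2)) :
    variance f ((volume : Measure (Fin s → ℝ))[|Set.Icc a b])
      ≤ (1 / 12) * ∑ i, β i ^ 2 * (b i - a i) ^ 2 := by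
  classical
  set R := Set.Icc a b with hR
  set V := (volume : Measure (Fin s → ℝ)) R with hV
  by_cases hV0 : V = 0
  · -- degenerate rectangle: the conditional measure is zero
    have hzero : (volume : Measure (Fin s → ℝ))[|R] = 0 := by
      rw [ProbabilityTheory.cond, Measure.restrict_eq_zero.2 hV0, smul_zero]
    rw [hzero]
    have : variance f (0 : Measure (Fin s → ℝ)) = 0 := by
      simp [variance, evariance]
    rw [this]
    positivity
  · have hVtop : V ≠ ⊤ := by
      rw [hV, hR, Real.volume_Icc_pi]
      exact ENNReal.prod_ne_top (fun i _ => ENNReal.ofReal_ne_top)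
    have hpos : ∀ i, 0 < b i - a i := by
      intro i
      by_contra h
      push_neg at h
      apply hV0
      rw [hV, hR, Real.volume_Icc_pi]
      exact Finset.prod_eq_zero (Finset.mem_univ i) (by simpa using h)
    set ν := (volume : Measure (Fin s → ℝ))[|R] with hν
    haveI : IsProbabilityMeasure ν :=
      ProbabilityTheory.cond_isProbabilityMeasure_of_finite hV0 hVtop
    have hνdef : ν = V⁻¹ • (volume : Measure (Fin s → ℝ)).restrict R := rfl
    -- midpoint
    set c : Fin s → ℝ := fun i => (a i + b i) / 2 with hc
    have hcR : c ∈ R := by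
      constructor <;> intro i <;> simp only [hc] <;> nlinarith [hab i]
    -- continuity of f on R
    have hcont : ContinuousOn f R := by
      rw [Metric.continuousOn_iff]
      intro x hx ε hε
      have hcs : ContinuousAt (fun y : Fin s → ℝ =>
          Real.sqrt (∑ i, β i ^ 2 * (y i - x i) ^ 2)) x := by
        apply Continuous.continuousAt
        apply Real.continuous_sqrt.comp
        exact continuous_finset_sum _ fun i _ => by fun_prop
      have h0 : Real.sqrt (∑ i, β i ^ 2 * (x i - x i) ^ 2) = 0 := by simp
      have := Metric.continuousAt_iff.1 hcs ε hε
      obtain ⟨δ, hδ, hd⟩ := this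
      refine ⟨δ, hδ, fun y hy hyd => ?_⟩
      have h1 := hup y hy x hx
      have h2 := hd hyd
      rw [Real.dist_eq, h0, sub_zero] at h2
      have h3 : |Real.sqrt (∑ i, β i ^ 2 * (y i - x i) ^ 2)| =
          Real.sqrt (∑ i, β i ^ 2 * (y i - x i) ^ 2) := abs_of_nonneg (Real.sqrt_nonneg _)
      rw [Real.dist_eq]
      calc |f y - f x| ≤ Real.sqrt (∑ i, β i ^ 2 * (y i - x i) ^ 2) := h1
        _ < ε := by rw [← h3]; exact h2
    -- measurability and integrability
    have hmR : MeasurableSet R := measurableSet_Icc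
    have hfaesm : AEStronglyMeasurable f ν := by
      rw [hνdef]
      exact AEStronglyMeasurable.mono_ac Measure.smul_absolutelyContinuous
        (hcont.aestronglyMeasurable hmR)
    have hIntf : Integrable f ν := by
      rw [hνdef]
      exact (hcont.integrableOn_compact isCompact_Icc).smul_measure
        (ENNReal.inv_ne_top.2 hV0)
    have hIntS : Integrable (fun x => ∑ i, β i ^ 2 * (x i - c i) ^ 2) ν := by
      rw [hνdef]
      refine (IntegrableOn.integrable (ContinuousOn.integrableOn_compact isCompact_Icc ?_)).smul_measure
        (ENNReal.inv_ne_top.2 hV0)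
      fun_prop
    have hIntT : ∀ i, Integrable (fun x : Fin s → ℝ => β i ^ 2 * (x i - c i) ^ 2) ν := by
      intro i
      rw [hνdef]
      refine (IntegrableOn.integrable (ContinuousOn.integrableOn_compact isCompact_Icc ?_)).smul_measure
        (ENNReal.inv_ne_top.2 hV0)
      fun_prop
    -- a.e. membership in R
    have hae : ∀ᵐ x ∂ν, x ∈ R := by
      rw [hνdef]
      exact (ae_restrict_mem hmR).filter_mono Measure.smul_absolutelyContinuous.ae_le
    -- Step A: variance bound by second moment of shifted function
    set g : (Fin s → ℝ) → ℝ := fun x => f x - f c with hg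
    have hA : variance f ν ≤ ∫ x, (f x - f c) ^ 2 ∂ν := by
      have h1 : variance f ν = variance g ν := (my_variance_sub_const hIntf (f c)).symm
      have h2 : AEStronglyMeasurable g ν := hfaesm.sub aestronglyMeasurable_const
      have h3 := variance_le_expectation_sq (μ := ν) h2
      rw [h1]
      exact h3.trans_eq (by simp [hg])
    -- Step B: pointwise bound
    have hB : ∫ x, (f x - f c) ^ 2 ∂ν ≤ ∫ x, (∑ i, β i ^ 2 * (x i - c i) ^ 2) ∂ν := by
      apply integral_mono_of_nonneg (ae_of_all _ fun x => sq_nonneg _) hIntS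
      filter_upwards [hae] with x hx
      have h1 := hup x hx c hcR
      have hSnn : (0 : ℝ) ≤ ∑ i, β i ^ 2 * (x i - c i) ^ 2 := by positivity
      calc (f x - f c) ^ 2 = |f x - f c| ^ 2 := (sq_abs _).symm
        _ ≤ Real.sqrt (∑ i, β i ^ 2 * (x i - c i) ^ 2) ^ 2 :=
            pow_le_pow_left₀ (abs_nonneg _) h1 2
        _ = ∑ i, β i ^ 2 * (x i - c i) ^ 2 := Real.sq_sqrt hSnn
    -- Step C/D: compute the integral
    have hC : ∫ x, (∑ i, β i ^ 2 * (x i - c i) ^ 2) ∂ν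
        = (1 / 12) * ∑ i, β i ^ 2 * (b i - a i) ^ 2 := by
      rw [integral_finset_sum _ (fun i _ => hIntT i)]
      have hterm : ∀ i, ∫ x, β i ^ 2 * (x i - c i) ^ 2 ∂ν
          = β i ^ 2 * ((b i - a i) ^ 2 / 12) := by
        intro i
        rw [integral_const_mul, hνdef, integral_smul_measure, smul_eq_mul,
          my_coord_int a b hab i (c i)]
        have h1 : ∫ u in Set.Icc (a i) (b i), (u - c i) ^ 2
            = (b i - a i) ^ 3 / 12 := my_interval_int (a i) (b i) (hab i)
        rw [h1]
        have hVtr : V.toReal = (b i - a i) * ∏ j ∈ Finset.univ.erase i, (b j - a j) := by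
          rw [hV, hR, Real.volume_Icc_pi_toReal hab,
            ← Finset.mul_prod_erase Finset.univ _ (Finset.mem_univ i)]
        have hPne : (∏ j ∈ Finset.univ.erase i, (b j - a j)) ≠ 0 :=
          Finset.prod_ne_zero_iff.2 fun j _ => (hpos j).ne'
        have hμne : b i - a i ≠ 0 := (hpos i).ne'
        rw [ENNReal.toReal_inv, hVtr]
        field_simp
      rw [Finset.sum_congr rfl (fun i _ => hterm i), Finset.mul_sum]
      apply Finset.sum_congr rfl
      intro i _
      ring
    calc variance f ν ≤ ∫ x, (f x - f c) ^ 2 ∂ν := hA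
      _ ≤ ∫ x, (∑ i, β i ^ 2 * (x i - c i) ^ 2) ∂ν := hB
      _ = (1 / 12) * ∑ i, β i ^ 2 * (b i - a i) ^ 2 := hC


/-- if `|f(x) − f(y)| ≤ (∑ᵢ βᵢ²(xᵢ − yᵢ)²)^{1/2}` for all `x, y` in the
rectangle `R = [a,b] ⊆ [0,1]^s` with side lengths `μᵢ = bᵢ − aᵢ`, then
`Var[f(X) | X ∈ R] ≤ (1/12)∑ᵢ βᵢ²μᵢ²`. -/
theorem strata_variance_upper_bound {s : ℕ} (a b : Fin s → ℝ) (hab : a ≤ b)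
    (hsub : Set.Icc a b ⊆ unitCube s)
    (β : Fin s → ℝ) (hβ : ∀ i, 0 < β i)
    (f : (Fin s → ℝ) → ℝ)
    (hup : ∀ x ∈ Set.Icc a b, ∀ y ∈ Set.Icc a b,
      |f x - f y| ≤ Real.sqrt (∑ i, β i ^ 2 * (x i - y i) ^ 2)) :
    strataVar f (Set.Icc a b) ≤ (1 / 12) * ∑ i, β i ^ 2 * (b i - a i) ^ 2 := by
  exact strata_variance_upper_bound' a b hab β f hup
end
end

section
/- Let R ⊆ [0,1]ˢ be a rectangle with side lengths μ₁,…,μ_s, and let f : [0,1]ˢ → ℝ satisfy |f(x) − f(y)| ≥ (∑ᵢ αᵢ²(xᵢ − yᵢ)²)^{1/2} for all x, y ∈ R, where αᵢ > 0. Then, with X uniform on R, Var[f(X) | X ∈ R] ≥ (1/12)∑_{i=1}^s αᵢ²μᵢ². -/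
open MeasureTheory ProbabilityTheory

noncomputable section

section Auxiliary

variable {Ω : Type*} {m : MeasurableSpace Ω}

lemma double_integrable (μ : Measure Ω) [IsProbabilityMeasure μ] {g : Ω → ℝ}
    (hg : MemLp g 2 μ) :
    Integrable (fun p : Ω × Ω => (g p.1 - g p.2) ^ 2) (μ.prod μ) := by
  have h2 : Integrable (fun x => g x ^ 2) μ := hg.integrable_sq
  have h1 : Integrable g μ := hg.integrable one_le_two
  have I1 : Integrable (fun p : Ω × Ω => g p.1 ^ 2 * 1) (μ.prod μ) :=
    h2.mul_prod (integrable_const 1)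
  have I2 : Integrable (fun p : Ω × Ω => (1 : ℝ) * g p.2 ^ 2) (μ.prod μ) :=
    (integrable_const 1).mul_prod h2
  have I3 : Integrable (fun p : Ω × Ω => g p.1 * g p.2) (μ.prod μ) := h1.mul_prod h1
  have heq : (fun p : Ω × Ω => (g p.1 - g p.2) ^ 2)
      = fun p => g p.1 ^ 2 * 1 + 1 * g p.2 ^ 2 - 2 * (g p.1 * g p.2) := by
    funext p; ring
  rw [heq]
  exact (I1.add I2).sub (I3.const_mul 2)

lemma double_integral (μ : Measure Ω) [IsProbabilityMeasure μ] {g : Ω → ℝ}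
    (hg : MemLp g 2 μ) :
    ∫ p, (g p.1 - g p.2) ^ 2 ∂(μ.prod μ)
      = 2 * (∫ x, g x ^ 2 ∂μ) - 2 * (∫ x, g x ∂μ) ^ 2 := by
  have h2 : Integrable (fun x => g x ^ 2) μ := hg.integrable_sq
  have h1 : Integrable g μ := hg.integrable one_le_two
  have I1 : Integrable (fun p : Ω × Ω => g p.1 ^ 2 * 1) (μ.prod μ) :=
    h2.mul_prod (integrable_const 1)
  have I2 : Integrable (fun p : Ω × Ω => (1 : ℝ) * g p.2 ^ 2) (μ.prod μ) :=
    (integrable_const 1).mul_prod h2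
  have I3 : Integrable (fun p : Ω × Ω => g p.1 * g p.2) (μ.prod μ) := h1.mul_prod h1
  have heq : (fun p : Ω × Ω => (g p.1 - g p.2) ^ 2)
      = fun p => g p.1 ^ 2 * 1 + 1 * g p.2 ^ 2 - 2 * (g p.1 * g p.2) := by
    funext p; ring
  have I12 : Integrable (fun p : Ω × Ω => g p.1 ^ 2 * 1 + 1 * g p.2 ^ 2) (μ.prod μ) :=
    I1.add I2
  have I3' : Integrable (fun p : Ω × Ω => 2 * (g p.1 * g p.2)) (μ.prod μ) := I3.const_mul 2
  rw [heq]
  rw [integral_sub I12 I3']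
  rw [integral_add I1 I2]
  have A1 := integral_prod_mul (μ := μ) (ν := μ) (fun x => g x ^ 2) (fun _ => (1 : ℝ))
  have A2 := integral_prod_mul (μ := μ) (ν := μ) (fun _ => (1 : ℝ)) (fun x => g x ^ 2)
  have A3 := integral_prod_mul (μ := μ) (ν := μ) g g
  simp only at A1 A2 A3
  rw [A1, A2, MeasureTheory.integral_const_mul, A3]
  simp only [integral_const, measure_univ, ENNReal.toReal_one, probReal_univ, smul_eq_mul, one_mul, mul_one]
  ring

lemma setIntegral_coord {s : ℕ} (a b : Fin s → ℝ) (hab : ∀ i, a i ≤ b i) (i : Fin s)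
    (g : ℝ → ℝ) :
    ∫ x in Set.Icc a b, g (x i) ∂(volume : Measure (Fin s → ℝ))
      = (∏ j ∈ Finset.univ.erase i, (b j - a j)) * ∫ t in Set.Icc (a i) (b i), g t := by
  classical
  set h : Fin s → ℝ → ℝ := fun j t =>
    if j = i then (Set.Icc (a i) (b i)).indicator g t
    else (Set.Icc (a j) (b j)).indicator (fun _ => (1 : ℝ)) t with hh
  have key : ∀ x : Fin s → ℝ,
      (Set.Icc a b).indicator (fun x => g (x i)) x = ∏ j, h j (x j) := by
    intro x
    by_cases hx : x ∈ Set.Icc a b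
    · have hxj : ∀ j, x j ∈ Set.Icc (a j) (b j) := fun j => ⟨hx.1 j, hx.2 j⟩
      rw [Set.indicator_of_mem hx]
      rw [Finset.prod_eq_single i
        (fun j _ hj => by simp [hh, hj, Set.indicator_of_mem (hxj j)]) (by simp)]
      simp [hh, Set.indicator_of_mem (hxj i)]
    · rw [Set.indicator_of_notMem hx]
      have hex : ∃ j, x j ∉ Set.Icc (a j) (b j) := by
        by_contra hcon
        push_neg at hcon
        exact hx ⟨fun j => (hcon j).1, fun j => (hcon j).2⟩
      obtain ⟨j, hj⟩ := hex
      refine (Finset.prod_eq_zero (Finset.mem_univ j) ?_).symm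
      by_cases hji : j = i
      · subst hji; simp [hh, Set.indicator_of_notMem hj]
      · simp [hh, hji, Set.indicator_of_notMem hj]
  rw [← integral_indicator measurableSet_Icc]
  calc ∫ x, (Set.Icc a b).indicator (fun x => g (x i)) x
      = ∫ x : Fin s → ℝ, ∏ j, h j (x j) := by
        congr 1; funext x; exact key x
    _ = ∏ j, ∫ t, h j t := MeasureTheory.integral_fintype_prod_eq_prod h
    _ = (∫ t, h i t) * ∏ j ∈ Finset.univ.erase i, ∫ t, h j t :=
        (Finset.mul_prod_erase Finset.univ _ (Finset.mem_univ i)).symm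
    _ = (∏ j ∈ Finset.univ.erase i, (b j - a j)) * ∫ t in Set.Icc (a i) (b i), g t := by
        rw [mul_comm]
        congr 1
        · refine Finset.prod_congr rfl (fun j hj => ?_)
          have hji : j ≠ i := Finset.ne_of_mem_erase hj
          simp only [hh, if_neg hji]
          rw [integral_indicator measurableSet_Icc, setIntegral_const, Real.volume_real_Icc_of_le (hab j),
            smul_eq_mul, mul_one]
        · simp only [hh, if_pos rfl]
          exact integral_indicator measurableSet_Icc

lemma unif_coord_integral {s : ℕ} (a b : Fin s → ℝ) (hab : ∀ i, a i < b i) (i : Fin s)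
    (g : ℝ → ℝ) :
    ∫ x, g (x i) ∂(unif (Set.Icc a b))
      = (b i - a i)⁻¹ * ∫ t in Set.Icc (a i) (b i), g t := by
  have hd : ∀ j, (0:ℝ) < b j - a j := fun j => sub_pos.2 (hab j)
  rw [unif, ProbabilityTheory.cond, integral_smul_measure, smul_eq_mul,
    ENNReal.toReal_inv, Real.volume_Icc_pi, ENNReal.toReal_prod]
  simp only [ENNReal.toReal_ofReal (le_of_lt (hd _))]
  rw [setIntegral_coord a b (fun j => (hab j).le) i g]
  rw [← Finset.mul_prod_erase Finset.univ _ (Finset.mem_univ i)]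
  have hP : (0:ℝ) < ∏ j ∈ Finset.univ.erase i, (b j - a j) :=
    Finset.prod_pos fun j _ => hd j
  field_simp

lemma unif_prob {s : ℕ} (a b : Fin s → ℝ) (hab : ∀ i, a i < b i) :
    IsProbabilityMeasure (unif (Set.Icc a b)) := by
  apply cond_isProbabilityMeasure_of_finite
  · rw [Real.volume_Icc_pi]
    exact Finset.prod_ne_zero_iff.2 fun j _ =>
      (ENNReal.ofReal_pos.2 (sub_pos.2 (hab j))).ne'
  · rw [Real.volume_Icc_pi]
    exact ENNReal.prod_ne_top fun j _ => ENNReal.ofReal_ne_top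

lemma unif_ae_mem {s : ℕ} (a b : Fin s → ℝ) :
    ∀ᵐ x ∂(unif (Set.Icc a b)), x ∈ Set.Icc a b := by
  rw [unif, ProbabilityTheory.cond]
  exact Measure.ae_smul_measure (ae_restrict_mem measurableSet_Icc) _

lemma memℒp_eval {s : ℕ} (a b : Fin s → ℝ) (hab : ∀ i, a i < b i) (i : Fin s) :
    MemLp (fun x : Fin s → ℝ => x i) 2 (unif (Set.Icc a b)) := by
  haveI := unif_prob a b hab
  refine MemLp.of_bound (measurable_pi_apply i).aestronglyMeasurable (|a i| + |b i|)
    ((unif_ae_mem a b).mono fun x hx => ?_)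
  have h1 := hx.1 i
  have h2 := hx.2 i
  rw [Real.norm_eq_abs, abs_le]
  constructor
  · have := neg_abs_le (a i); have := abs_nonneg (b i); linarith
  · have := le_abs_self (b i); have := abs_nonneg (a i); linarith

lemma coord_sqdiff {s : ℕ} (a b : Fin s → ℝ) (hab : ∀ i, a i < b i) (i : Fin s) :
    ∫ p, (p.1 i - p.2 i) ^ 2 ∂((unif (Set.Icc a b)).prod (unif (Set.Icc a b)))
      = (b i - a i) ^ 2 / 6 := by
  haveI := unif_prob a b hab
  have hd : (0:ℝ) < b i - a i := sub_pos.2 (hab i)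
  have m1 : ∫ x, x i ∂(unif (Set.Icc a b))
      = (b i - a i)⁻¹ * ((b i ^ 2 - a i ^ 2) / 2) := by
    rw [unif_coord_integral a b hab i (fun t => t)]
    congr 1
    rw [MeasureTheory.integral_Icc_eq_integral_Ioc,
      ← intervalIntegral.integral_of_le (hab i).le, integral_id]
  have m2 : ∫ x, (x i) ^ 2 ∂(unif (Set.Icc a b))
      = (b i - a i)⁻¹ * ((b i ^ 3 - a i ^ 3) / 3) := by
    rw [unif_coord_integral a b hab i (fun t => t ^ 2)]
    congr 1
    rw [MeasureTheory.integral_Icc_eq_integral_Ioc,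
      ← intervalIntegral.integral_of_le (hab i).le, integral_pow]
    norm_num
  have hD := double_integral (unif (Set.Icc a b)) (memℒp_eval a b hab i)
  rw [hD, m1, m2]
  field_simp
  ring

end Auxiliary

/-- if `|f(x) − f(y)| ≥ (∑ᵢ αᵢ²(xᵢ − yᵢ)²)^{1/2}` for all `x, y` in the
rectangle `R = [a,b] ⊆ [0,1]^s` with positive side lengths `μᵢ = bᵢ − aᵢ`, then
`Var[f(X) | X ∈ R] ≥ (1/12)∑ᵢ αᵢ²μᵢ²`. The variance is expressed through
`evariance` so that a possibly infinite variance is handled correctly. -/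
theorem strata_variance_lower_bound {s : ℕ} (a b : Fin s → ℝ) (hab : ∀ i, a i < b i)
    (hsub : Set.Icc a b ⊆ unitCube s)
    (α : Fin s → ℝ) (hα : ∀ i, 0 < α i)
    (f : (Fin s → ℝ) → ℝ) (hf : Measurable f)
    (hlow : ∀ x ∈ Set.Icc a b, ∀ y ∈ Set.Icc a b,
      Real.sqrt (∑ i, α i ^ 2 * (x i - y i) ^ 2) ≤ |f x - f y|) :
    ENNReal.ofReal ((1 / 12) * ∑ i, α i ^ 2 * (b i - a i) ^ 2) ≤
      evariance f (unif (Set.Icc a b)) := by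
  classical
  set μ := unif (Set.Icc a b) with hμ
  haveI hprob : IsProbabilityMeasure μ := unif_prob a b hab
  by_cases hmem : MemLp f 2 μ
  · rw [← hmem.ofReal_variance_eq]
    refine ENNReal.ofReal_le_ofReal ?_
    -- notation and basic facts
    have hvar : variance f μ = (∫ x, f x ^ 2 ∂μ) - (∫ x, f x ∂μ) ^ 2 := by
      rw [variance_eq_sub hmem]; simp only [Pi.pow_apply]
    have hdouble := double_integral μ hmem
    have hIf : Integrable (fun p => (f p.1 - f p.2) ^ 2) (μ.prod μ) :=
      double_integrable μ hmem
    have hIg : ∀ i : Fin s,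
        Integrable (fun p : (Fin s → ℝ) × (Fin s → ℝ) => (p.1 i - p.2 i) ^ 2) (μ.prod μ) := by
      intro i
      have := double_integrable μ (memℒp_eval a b hab i)
      simpa using this
    have hIsum : Integrable
        (fun p : (Fin s → ℝ) × (Fin s → ℝ) => ∑ i, α i ^ 2 * (p.1 i - p.2 i) ^ 2)
        (μ.prod μ) :=
      integrable_finset_sum _ (fun i _ => (hIg i).const_mul _)
    -- a.e. membership in the rectangle for the product measure
    have hc : μ {x | x ∉ Set.Icc a b} = 0 := ae_iff.mp (unif_ae_mem a b)
    have h1 : ∀ᵐ p ∂μ.prod μ, p.1 ∈ Set.Icc a b := by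
      rw [ae_iff]
      have hset : {p : (Fin s → ℝ) × (Fin s → ℝ) | ¬ p.1 ∈ Set.Icc a b}
          = {x | x ∉ Set.Icc a b} ×ˢ Set.univ := by
        ext p; simp [Set.mem_prod]
      rw [hset, Measure.prod_prod, hc, zero_mul]
    have h2 : ∀ᵐ p ∂μ.prod μ, p.2 ∈ Set.Icc a b := by
      rw [ae_iff]
      have hset : {p : (Fin s → ℝ) × (Fin s → ℝ) | ¬ p.2 ∈ Set.Icc a b}
          = Set.univ ×ˢ {x | x ∉ Set.Icc a b} := by
        ext p; simp [Set.mem_prod]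
      rw [hset, Measure.prod_prod, hc, mul_zero]
    have haeprod := h1.and h2
    -- pointwise comparison
    have hmono : (∫ p, ∑ i, α i ^ 2 * (p.1 i - p.2 i) ^ 2 ∂μ.prod μ)
        ≤ ∫ p, (f p.1 - f p.2) ^ 2 ∂μ.prod μ := by
      refine integral_mono_ae hIsum hIf (haeprod.mono fun p hp => ?_)
      have h0 : (0:ℝ) ≤ ∑ i, α i ^ 2 * (p.1 i - p.2 i) ^ 2 :=
        Finset.sum_nonneg fun i _ => mul_nonneg (sq_nonneg _) (sq_nonneg _)
      have hl := hlow p.1 hp.1 p.2 hp.2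
      calc ∑ i, α i ^ 2 * (p.1 i - p.2 i) ^ 2
          = Real.sqrt (∑ i, α i ^ 2 * (p.1 i - p.2 i) ^ 2) ^ 2 := (Real.sq_sqrt h0).symm
        _ ≤ |f p.1 - f p.2| ^ 2 := pow_le_pow_left₀ (Real.sqrt_nonneg _) hl 2
        _ = (f p.1 - f p.2) ^ 2 := sq_abs _
    -- value of the lower integral
    have hsumval : (∫ p, ∑ i, α i ^ 2 * (p.1 i - p.2 i) ^ 2 ∂μ.prod μ)
        = ∑ i, α i ^ 2 * ((b i - a i) ^ 2 / 6) := by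
      rw [integral_finset_sum _ (fun i _ => (hIg i).const_mul _)]
      refine Finset.sum_congr rfl fun i _ => ?_
      rw [MeasureTheory.integral_const_mul, coord_sqdiff a b hab i]
    have hDval : (∫ p, (f p.1 - f p.2) ^ 2 ∂μ.prod μ) = 2 * variance f μ := by
      rw [hdouble, hvar]; ring
    have hsum6 : ∑ i, α i ^ 2 * ((b i - a i) ^ 2 / 6)
        = (∑ i, α i ^ 2 * (b i - a i) ^ 2) / 6 := by
      rw [Finset.sum_div]
      exact Finset.sum_congr rfl fun i _ => (mul_div_assoc _ _ _).symm
    have hfinal : (∑ i, α i ^ 2 * (b i - a i) ^ 2) / 6 ≤ 2 * variance f μ := by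
      rw [← hsum6, ← hsumval, ← hDval]; exact hmono
    linarith
  · rw [evariance_eq_top hf.aestronglyMeasurable hmem]
    exact le_top
end
end
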